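/- arXiv:2303.05507 — 6 statements merged into one kernel-verified Lean document; each statement's English description precedes it below -/
import Mathlib

section
/- If L is a list assignment for the edges of a cycle C in which every edge has a list of size at least two and not all edges have the same list, then C has a proper edge coloring using colors from the lists. -/
open SimpleGraph
open Fin.CommRing

variable {V : Type*}

/-- Two edges of `G` are adjacent if both are edges, they are distinct,
and they share a vertex. -/
def EdgeAdj (G : SimpleGraph V) (e f : Sym2 V) : Prop :=
  e ∈ G.edgeSet ∧ f ∈ G.edgeSet ∧ e ≠ f ∧ ∃ v, v ∈ e ∧ v ∈ f

/-- A proper edge coloring (with natural-number colors). -/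
def IsProperEdgeColoring (G : SimpleGraph V) (C : Sym2 V → ℕ) : Prop :=
  ∀ ⦃e f⦄, EdgeAdj G e f → C e ≠ C f

/-- A partial proper edge coloring: colored edges are edges of `G`, and
adjacent colored edges receive distinct colors. -/
def IsPartialProperEdgeColoring (G : SimpleGraph V) (φ : Sym2 V → Option ℕ) : Prop :=
  (∀ e, φ e ≠ none → e ∈ G.edgeSet) ∧
  ∀ ⦃e f⦄, EdgeAdj G e f → φ e ≠ none → φ e ≠ φ f

/-- The partial coloring uses colors from `{0, ..., t-1}`. -/
def UsesColors (φ : Sym2 V → Option ℕ) (t : ℕ) : Prop :=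
  ∀ e a, φ e = some a → a < t

/-- The (total) coloring uses colors from `{0, ..., t-1}` on all edges of `G`. -/
def ColorsBelow (G : SimpleGraph V) (C : Sym2 V → ℕ) (t : ℕ) : Prop :=
  ∀ e ∈ G.edgeSet, C e < t

/-- `C` agrees with the partial coloring `φ` on all precolored edges. -/
def ExtendsColoring (C : Sym2 V → ℕ) (φ : Sym2 V → Option ℕ) : Prop :=
  ∀ e a, φ e = some a → C e = a

/-- `φ` extends to a proper edge coloring of `G` with `t` colors. -/
def Extendable (G : SimpleGraph V) (φ : Sym2 V → Option ℕ) (t : ℕ) : Prop :=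
  ∃ C, IsProperEdgeColoring G C ∧ ColorsBelow G C t ∧ ExtendsColoring C φ

/-- The set of precolored edges of `φ`. -/
def Precolored (φ : Sym2 V → Option ℕ) : Set (Sym2 V) := {e | φ e ≠ none}

/-- The chromatic index: least `t` admitting a proper edge coloring with `t` colors. -/
noncomputable def chromaticIndex (G : SimpleGraph V) : ℕ :=
  sInf {t | ∃ C, IsProperEdgeColoring G C ∧ ColorsBelow G C t}

/-- A set of edges is independent (a matching) if no two distinct members share a vertex. -/
def IndependentEdges (S : Set (Sym2 V)) : Prop :=
  ∀ e ∈ S, ∀ f ∈ S, e ≠ f → ∀ v, v ∈ e → v ∉ f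

noncomputable def cycGreedySeq (T : ℕ → Finset ℕ) (hT : ∀ m x, (T m \ {x}).Nonempty) (c : ℕ) :
    ℕ → ℕ
  | 0 => c
  | m+1 => (T (m+1) \ {cycGreedySeq T hT c m}).min' (hT (m+1) _)

lemma cycGreedySeqSuccMem (T : ℕ → Finset ℕ) (hT : ∀ m x, (T m \ {x}).Nonempty) (c m) :
    cycGreedySeq T hT c (m+1) ∈ T (m+1) \ {cycGreedySeq T hT c m} :=
  Finset.min'_mem _ _

lemma cycSdiffNonempty {s : Finset ℕ} (h : 2 ≤ s.card) (x : ℕ) :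
    (s \ {x}).Nonempty := by
  rw [← Finset.card_pos]
  have h1 : s.card - ({x} : Finset ℕ).card ≤ (s \ {x}).card := Finset.le_card_sdiff _ _
  simp only [Finset.card_singleton] at h1
  omega

lemma cycKey {n : ℕ} (L' : Fin (n+3) → Finset ℕ)
    (h2 : ∀ k, 2 ≤ (L' k).card) (i : Fin (n+3)) (c : ℕ)
    (hc : c ∈ L' (i+1)) (hc' : c ∉ L' i) :
    ∃ g : Fin (n+3) → ℕ, (∀ k, g k ∈ L' k) ∧ ∀ k, g k ≠ g (k+1) := by
  set T : ℕ → Finset ℕ := fun m => L' (i + 1 + (m : Fin (n+3))) with hTdef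
  have hT : ∀ m x, (T m \ {x}).Nonempty := fun m x => cycSdiffNonempty (h2 _) x
  set h : ℕ → ℕ := cycGreedySeq T hT c with hh
  have hmem : ∀ m : ℕ, h m ∈ L' (i + 1 + (m : Fin (n+3))) := by
    intro m
    cases m with
    | zero => simpa [hh, cycGreedySeq] using hc
    | succ m =>
      have := cycGreedySeqSuccMem T hT c m
      rw [Finset.mem_sdiff] at this
      exact this.1
  have hsucc : ∀ m : ℕ, h (m+1) ≠ h m := by
    intro m
    have := cycGreedySeqSuccMem T hT c m
    rw [Finset.mem_sdiff, Finset.mem_singleton] at this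
    exact this.2
  have hidx : ∀ k : Fin (n+3), i + 1 + ((↑(k - (i+1)) : ℕ) : Fin (n+3)) = k := by
    intro k
    rw [Fin.cast_val_eq_self]
    ring
  refine ⟨fun k => h ((k - (i+1)).val), ?_, ?_⟩
  · intro k
    have := hmem (k - (i+1)).val
    rwa [hidx k] at this
  · intro k
    show h ((k - (i+1)).val) ≠ h (((k+1) - (i+1)).val)
    by_cases hk : k = i
    · subst hk
      have h0 : (((k+1) - (k+1)).val) = 0 := by simp
      rw [h0]
      have hm : h ((k - (k+1)).val) ∈ L' k := by
        have := hmem (k - (k+1)).val; rwa [hidx k] at this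
      intro hcontra
      rw [hcontra] at hm
      simp only [hh, cycGreedySeq] at hm
      exact hc' hm
    · have hne1 : k - (i+1) ≠ -1 := by
        intro hcon
        apply hk
        have : k = -1 + (i+1) := by rw [← hcon]; ring
        rw [this]; ring
      have hlast : (-1 : Fin (n+3)) = Fin.last (n+2) := by
        apply Fin.ext
        rw [Fin.coe_neg_one, Fin.val_last]
      have hval : ((k+1) - (i+1)).val = (k - (i+1)).val + 1 := by
        have e1 : (k+1) - (i+1) = (k - (i+1)) + 1 := by ring
        rw [e1, Fin.val_add_one, if_neg (by rw [← hlast]; exact hne1)]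
      rw [hval]
      exact (hsucc _).symm

lemma cycKeyRev {n : ℕ} (L' : Fin (n+3) → Finset ℕ)
    (h2 : ∀ k, 2 ≤ (L' k).card) (i : Fin (n+3)) (c : ℕ)
    (hc : c ∈ L' i) (hc' : c ∉ L' (i+1)) :
    ∃ g : Fin (n+3) → ℕ, (∀ k, g k ∈ L' k) ∧ ∀ k, g k ≠ g (k+1) := by
  set M : Fin (n+3) → Finset ℕ := fun k => L' (-k) with hM
  obtain ⟨g', hg1, hg2⟩ := cycKey M (fun k => h2 _) (-i-1) c
    (by show c ∈ L' _; rw [show -(-i-1+1) = i by ring]; exact hc)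
    (by show c ∉ L' _; rw [show -(-i-1) = i+1 by ring]; exact hc')
  refine ⟨fun k => g' (-k), fun k => ?_, fun k => ?_⟩
  · have := hg1 (-k)
    show g' (-k) ∈ L' k
    rw [hM] at this
    simpa using this
  · have := hg2 (-(k+1))
    rw [show -(k+1)+1 = -k by ring] at this
    exact Ne.symm this

lemma cycConst {n : ℕ} (L' : Fin (n+3) → Finset ℕ)
    (h : ∀ k, L' k = L' (k+1)) : ∀ k j, L' k = L' j := by
  have step : ∀ (m : ℕ) (k : Fin (n+3)), L' k = L' (k + (m : Fin (n+3))) := by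
    intro m
    induction m with
    | zero => simp
    | succ m ih =>
      intro k
      rw [ih k, h (k + (m : Fin (n+3)))]
      congr 1
      push_cast
      ring
  intro k j
  have := step ((j - k).val) k
  rwa [Fin.cast_val_eq_self, show k + (j - k) = j by ring] at this

lemma cycEdgeForm {n : ℕ} {e : Sym2 (Fin (n+3))} (he : e ∈ (cycleGraph (n+3)).edgeSet) :
    ∃ k : Fin (n+3), e = s(k, k+1) := by
  induction e with
  | _ u v =>
    rw [SimpleGraph.mem_edgeSet] at he
    have he' : u - v = 1 ∨ v - u = 1 := cycleGraph_adj.mp he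
    rcases he' with h1 | h1
    · exact ⟨v, by rw [show u = v + 1 from by rw [← h1]; ring, Sym2.eq_swap]⟩
    · exact ⟨u, by rw [show v = u + 1 from by rw [← h1]; ring]⟩

lemma cycEdgeMem {n : ℕ} (k : Fin (n+3)) : s(k, k+1) ∈ (cycleGraph (n+3)).edgeSet := by
  rw [SimpleGraph.mem_edgeSet]
  exact cycleGraph_adj.mpr (Or.inr (by ring))

theorem stmt1 (n : ℕ) (hn : 3 ≤ n) (L : Sym2 (Fin n) → Finset ℕ)
    (h₂ : ∀ e ∈ (cycleGraph n).edgeSet, 2 ≤ (L e).card)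
    (hne : ¬ ∀ e ∈ (cycleGraph n).edgeSet, ∀ f ∈ (cycleGraph n).edgeSet, L e = L f) :
    ∃ C : Sym2 (Fin n) → ℕ, IsProperEdgeColoring (cycleGraph n) C ∧
      ∀ e ∈ (cycleGraph n).edgeSet, C e ∈ L e := by
  obtain ⟨m, rfl⟩ : ∃ m, n = m + 3 := ⟨n - 3, by omega⟩
  set L' : Fin (m+3) → Finset ℕ := fun k => L s(k, k+1) with hL'
  have h2' : ∀ k, 2 ≤ (L' k).card := fun k => h₂ _ (cycEdgeMem k)
  push_neg at hne
  obtain ⟨e, he, f, hf, hLef⟩ := hne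
  obtain ⟨k₀, rfl⟩ := cycEdgeForm he
  obtain ⟨j₀, rfl⟩ := cycEdgeForm hf
  have hexists : ∃ i : Fin (m+3), L' i ≠ L' (i+1) := by
    by_contra hcon
    push_neg at hcon
    exact hLef (cycConst L' hcon k₀ j₀)
  obtain ⟨i, hi⟩ := hexists
  have hg : ∃ g : Fin (m+3) → ℕ, (∀ k, g k ∈ L' k) ∧ ∀ k, g k ≠ g (k+1) := by
    by_cases hsub : L' (i+1) ⊆ L' i
    · have hns : ¬ L' i ⊆ L' (i+1) := fun h' => hi (Finset.Subset.antisymm h' hsub)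
      obtain ⟨c, hc, hc'⟩ := Finset.not_subset.mp hns
      exact cycKeyRev L' h2' i c hc hc'
    · obtain ⟨c, hc, hc'⟩ := Finset.not_subset.mp hsub
      exact cycKey L' h2' i c hc hc'
  obtain ⟨g, hg1, hg2⟩ := hg
  have two_ne : ∀ u : Fin (m+3), u ≠ u + 1 + 1 := by
    intro u h
    rw [add_assoc] at h
    have h2 := left_eq_add.mp h
    have h3 := congrArg Fin.val h2
    have hv : ((1 + 1 : Fin (m+3))).val = 2 := by
      simp [Fin.val_add, Fin.val_one, Nat.mod_eq_of_lt (show 2 < m + 3 by omega)]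
    rw [h2] at hv
    simp at hv
  have hsymm : ∀ u v : Fin (m+3),
      (if v = u + 1 then g u else if u = v + 1 then g v else 0) =
      (if u = v + 1 then g v else if v = u + 1 then g u else 0) := by
    intro u v
    by_cases h1 : v = u + 1 <;> by_cases hh2 : u = v + 1
    · exact absurd (h1.trans (by rw [hh2])) (two_ne v)
    · simp [h1, hh2, if_neg (two_ne u)]
    · simp [h1, hh2, if_neg (two_ne v)]
    · simp [h1, hh2]
  set C : Sym2 (Fin (m+3)) → ℕ :=
    Sym2.lift ⟨fun u v => if v = u + 1 then g u else if u = v + 1 then g v else 0, hsymm⟩ with hC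
  have hCk : ∀ k : Fin (m+3), C s(k, k+1) = g k := by
    intro k
    simp [hC]
  refine ⟨C, ?_, ?_⟩
  · rintro e f ⟨he', hf', hef, v, hve, hvf⟩
    obtain ⟨k, rfl⟩ := cycEdgeForm he'
    obtain ⟨j, rfl⟩ := cycEdgeForm hf'
    rw [hCk, hCk]
    rw [Sym2.mem_iff] at hve hvf
    rcases hve with rfl | rfl <;> rcases hvf with h4 | h4
    · subst h4; exact absurd rfl hef
    · subst h4; exact (hg2 j).symm
    · subst h4; exact hg2 k
    · have h5 : k = j := add_right_cancel h4
      subst h5; exact absurd rfl hef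
  · intro e he'
    obtain ⟨k, rfl⟩ := cycEdgeForm he'
    rw [hCk]
    exact hg1 k
end

section
/- Every partial proper edge coloring of an odd cycle C_{2n+1} using 3 colors can be extended to a proper 3-edge coloring of C_{2n+1}. -/
open SimpleGraph
open scoped Fin.NatCast Fin.CommRing

variable {V : Type*}

def pick3 (x y : ℕ) : ℕ := if 0 ≠ x ∧ 0 ≠ y then 0 else if 1 ≠ x ∧ 1 ≠ y then 1 else 2

lemma pick3_lt (x y : ℕ) : pick3 x y < 3 := by
  unfold pick3; split <;> [omega; (split <;> omega)]

lemma pick3_ne_left (x y : ℕ) (hx : x < 3) (hy : y < 3) : pick3 x y ≠ x := by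
  unfold pick3; split <;> [omega; (split <;> omega)]

lemma pick3_ne_right (x y : ℕ) (hx : x < 3) (hy : y < 3) : pick3 x y ≠ y := by
  unfold pick3; split <;> [omega; (split <;> omega)]

section core

variable {m : ℕ} [NeZero m] (i0 : Fin m) (a : ℕ) (ψ : Fin m → Option ℕ)

def dd : ℕ → ℕ
  | 0 => a
  | (k+1) => (ψ (i0 + ((k+1 : ℕ) : Fin m))).getD
      (pick3 (dd k) ((ψ (i0 + ((k+2 : ℕ) : Fin m))).getD (dd k)))

lemma dd_succ (k : ℕ) : dd i0 a ψ (k+1) = (ψ (i0 + ((k+1 : ℕ) : Fin m))).getD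
    (pick3 (dd i0 a ψ k) ((ψ (i0 + ((k+2 : ℕ) : Fin m))).getD (dd i0 a ψ k))) := rfl

lemma pos_step (k j : ℕ) : i0 + ((k+j : ℕ) : Fin m) = (i0 + ((k : ℕ) : Fin m)) + (j : Fin m) := by
  push_cast; ring

variable (hψ : ∀ i : Fin m, ∀ b b', ψ i = some b → ψ (i+1) = some b' → b ≠ b')
variable (hlt : ∀ i b, ψ i = some b → b < 3)
variable (ha : ψ i0 = some a)

include hlt ha in
lemma dd_lt (k : ℕ) : dd i0 a ψ k < 3 := by
  induction k with
  | zero => exact hlt i0 a ha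
  | succ k ih =>
    rw [dd_succ]
    rcases h : ψ (i0 + ((k+1 : ℕ) : Fin m)) with _ | b
    · simpa using pick3_lt _ _
    · simpa using hlt _ _ h

include ha in
lemma dd_agrees (k : ℕ) (b : ℕ) (h : ψ (i0 + ((k : ℕ) : Fin m)) = some b) :
    dd i0 a ψ k = b := by
  cases k with
  | zero => simp only [Nat.cast_zero, add_zero] at h; rw [ha] at h; exact Option.some.inj h
  | succ k => rw [dd_succ, h]; rfl

include hψ hlt ha in
lemma dd_lookahead (k b : ℕ) (hb : ψ (i0 + ((k+2 : ℕ) : Fin m)) = some b) :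
    dd i0 a ψ (k+1) ≠ b := by
  rcases h : ψ (i0 + ((k+1 : ℕ) : Fin m)) with _ | b'
  · rw [dd_succ, h, hb]
    exact pick3_ne_right _ _ (dd_lt i0 a ψ hlt ha k) (hlt _ _ hb)
  · rw [dd_agrees i0 a ψ ha (k+1) b' h]
    have e2 : i0 + ((k+2:ℕ) : Fin m) = (i0 + ((k+1:ℕ) : Fin m)) + 1 := by push_cast; ring
    rw [e2] at hb
    exact hψ _ b' b h hb

include hψ hlt ha in
lemma dd_step (k : ℕ) : dd i0 a ψ (k+1) ≠ dd i0 a ψ k := by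
  rcases h : ψ (i0 + ((k+1 : ℕ) : Fin m)) with _ | b'
  · rw [dd_succ, h]
    exact pick3_ne_left _ _ (dd_lt i0 a ψ hlt ha k) (by
      rcases h2 : ψ (i0 + ((k+2:ℕ) : Fin m)) with _ | b2
      · simpa using dd_lt i0 a ψ hlt ha k
      · simpa using hlt _ _ h2)
  · rw [dd_agrees i0 a ψ ha (k+1) b' h]
    cases k with
    | zero =>
      have e1 : i0 + ((1:ℕ) : Fin m) = i0 + 1 := by push_cast; ring
      rw [e1] at h
      exact (hψ i0 a b' ha h).symm
    | succ j =>
      exact (dd_lookahead i0 a ψ hψ hlt ha j b' h).symm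

end core

section wrap

variable {m : ℕ} [NeZero m] (i0 : Fin m) (a : ℕ) (ψ : Fin m → Option ℕ)

def cc (i : Fin m) : ℕ := dd i0 a ψ ((i - i0).val)

variable (hψ : ∀ i : Fin m, ∀ b b', ψ i = some b → ψ (i+1) = some b' → b ≠ b')
variable (hlt : ∀ i b, ψ i = some b → b < 3)
variable (ha : ψ i0 = some a)

include hlt ha in
lemma cc_lt (i : Fin m) : cc i0 a ψ i < 3 := dd_lt i0 a ψ hlt ha _

include ha in
lemma cc_agrees (i : Fin m) (b : ℕ) (h : ψ i = some b) : cc i0 a ψ i = b := by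
  apply dd_agrees i0 a ψ ha ((i - i0).val)
  rw [Fin.cast_val_eq_self]
  rwa [add_sub_cancel]

include hψ hlt ha in
lemma cc_adj (hm : 2 ≤ m) (i : Fin m) : cc i0 a ψ i ≠ cc i0 a ψ (i+1) := by
  have hkey : (i + 1 - i0) = (i - i0) + 1 := by ring
  have h1 : ((1 : Fin m)).val = 1 := by
    rw [Fin.val_one']; exact Nat.mod_eq_of_lt (by omega)
  have hval : ((i - i0) + 1).val = ((i - i0).val + 1) % m := by
    rw [Fin.add_def, h1]
  set k := (i - i0).val with hk
  have hklt : k < m := (i - i0).isLt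
  unfold cc
  rw [hkey, hval]
  rcases Nat.lt_or_ge (k+1) m with hlt2 | hge
  · rw [Nat.mod_eq_of_lt hlt2]
    exact (dd_step i0 a ψ hψ hlt ha k).symm
  · have hkm : k = m - 1 := by omega
    have : (k + 1) % m = 0 := by
      have : k + 1 = m := by omega
      simp [this]
    rw [this]
    show dd i0 a ψ k ≠ dd i0 a ψ 0
    have hm2 : (m - 2) + 1 = k := by omega
    rw [← hm2]
    apply dd_lookahead i0 a ψ hψ hlt ha (m-2) a
    have : ((m - 2 + 2 : ℕ) : Fin m) = 0 := by
      have : (m - 2 + 2) = m := by omega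
      rw [this]; exact Fin.natCast_self m
    rw [this, add_zero]
    exact ha

end wrap



section graph
variable {n : ℕ} (hn : 1 ≤ n)

local notation "m" => 2*n+1

def EE (i : Fin (2*n+1)) : Sym2 (Fin (2*n+1)) := s(i, i+1)

include hn

lemma val_one' : ((1 : Fin m)).val = 1 := by
  rw [Fin.val_one']; exact Nat.mod_eq_of_lt (by omega)

lemma fone_ne_zero : (1 : Fin m) ≠ 0 := by
  intro h
  have := congrArg Fin.val h
  rw [val_one' hn] at this
  simp at this

lemma ftwo_ne_zero : (1 + 1 : Fin m) ≠ 0 := by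
  intro h
  have := congrArg Fin.val h
  rw [Fin.add_def, val_one' hn] at this
  simp [Nat.mod_eq_of_lt (show 1+1 < m by omega)] at this

lemma adj_iff (u v : Fin m) : (cycleGraph m).Adj u v ↔ u - v = 1 ∨ v - u = 1 := by
  rw [cycleGraph_adj']
  constructor
  · rintro (h | h)
    · left; exact Fin.ext (by rw [h, val_one' hn])
    · right; exact Fin.ext (by rw [h, val_one' hn])
  · rintro (h | h)
    · left; rw [h, val_one' hn]
    · right; rw [h, val_one' hn]

lemma adj_succ (i : Fin m) : (cycleGraph m).Adj i (i+1) := by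
  rw [adj_iff hn]; right; ring_nf

lemma EE_mem (i : Fin m) : EE i ∈ (cycleGraph m).edgeSet := by
  rw [EE, mem_edgeSet]; exact adj_succ hn i

lemma mem_iff_EE (e : Sym2 (Fin m)) : e ∈ (cycleGraph m).edgeSet ↔ ∃ i, e = EE i := by
  constructor
  · intro he
    induction e with
    | _ u v =>
      rw [mem_edgeSet, adj_iff hn] at he
      rcases he with h | h
      · exact ⟨v, by rw [EE, show v + 1 = u from by rw [← h]; ring, Sym2.eq_swap]⟩
      · exact ⟨u, by rw [EE, show u + 1 = v from by rw [← h]; ring]⟩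
  · rintro ⟨i, rfl⟩; exact EE_mem hn i

lemma EE_inj {i j : Fin m} (h : EE i = EE j) : i = j := by
  rw [EE, EE, Sym2.eq_iff] at h
  rcases h with ⟨h1, _⟩ | ⟨h1, h2⟩
  · exact h1
  · exfalso
    apply ftwo_ne_zero hn
    have h3 : i + (1 + 1) = i + 0 := by rw [← add_assoc, h2, ← h1, add_zero]
    exact add_left_cancel h3

lemma EE_ne_succ (i : Fin m) : EE i ≠ EE (i+1) := by
  intro h
  have h2 := EE_inj hn h
  apply fone_ne_zero hn
  have h3 : i + 1 = i + 0 := by rw [← h2, add_zero]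
  exact add_left_cancel h3

end graph

section asm
variable {n : ℕ} (hn : 1 ≤ n)

local notation "m" => 2*n+1

noncomputable def idx (e : Sym2 (Fin (2*n+1))) : Fin (2*n+1) :=
  if h : ∃ i, e = EE i then h.choose else 0

include hn

lemma idx_EE (i : Fin m) : idx (EE i) = i := by
  rw [idx]
  have h : ∃ j, EE i = EE j := ⟨i, rfl⟩
  rw [dif_pos h]
  exact (EE_inj hn h.choose_spec.symm)

lemma helper (ψ : Fin m → Option ℕ)
    (hψ : ∀ i : Fin m, ∀ b b', ψ i = some b → ψ (i+1) = some b' → b ≠ b')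
    (hlt : ∀ i b, ψ i = some b → b < 3)
    (i0 : Fin m) (a : ℕ) (ha : ψ i0 = some a) :
    ∃ C : Sym2 (Fin m) → ℕ, IsProperEdgeColoring (cycleGraph m) C ∧
      ColorsBelow (cycleGraph m) C 3 ∧ ∀ i b, ψ i = some b → C (EE i) = b := by
  refine ⟨fun e => cc i0 a ψ (idx e), ?_, ?_, ?_⟩
  · rintro e f ⟨he, hf, hne, v, hve, hvf⟩
    obtain ⟨i, rfl⟩ := (mem_iff_EE hn e).mp he
    obtain ⟨j, rfl⟩ := (mem_iff_EE hn f).mp hf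
    simp only [idx_EE hn]
    have hij : i ≠ j := fun h => hne (by rw [h])
    rw [EE, Sym2.mem_iff] at hve hvf
    rcases hve with h1 | h1 <;> rcases hvf with h2 | h2
    · exact absurd (h1.symm.trans h2) hij
    · rw [h1.symm.trans h2]
      exact (cc_adj i0 a ψ hψ hlt ha (by omega) j).symm
    · rw [show j = i + 1 from h2.symm.trans h1]
      exact cc_adj i0 a ψ hψ hlt ha (by omega) i
    · exact absurd (add_right_cancel (h1.symm.trans h2)) hij
  · intro e _
    exact cc_lt i0 a ψ hlt ha _
  · intro i b hb
    show cc i0 a ψ (idx (EE i)) = b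
    rw [idx_EE hn]
    exact cc_agrees i0 a ψ ha i b hb

end asm

theorem stmt3 (n : ℕ) (hn : 1 ≤ n) (φ : Sym2 (Fin (2*n+1)) → Option ℕ)
    (hφ : IsPartialProperEdgeColoring (cycleGraph (2*n+1)) φ) (hc : UsesColors φ 3) :
    Extendable (cycleGraph (2*n+1)) φ 3 := by
  set ψ0 : Fin (2*n+1) → Option ℕ := fun i => φ (EE i) with hψ0def
  have hψ0 : ∀ i : Fin (2*n+1), ∀ b b', ψ0 i = some b → ψ0 (i+1) = some b' → b ≠ b' := by
    intro i b b' hb hb'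
    have hadj : EdgeAdj (cycleGraph (2*n+1)) (EE i) (EE (i+1)) := by
      refine ⟨EE_mem hn i, EE_mem hn (i+1), EE_ne_succ hn i, i+1, ?_, ?_⟩
      · rw [EE, Sym2.mem_iff]; right; rfl
      · rw [EE, Sym2.mem_iff]; left; rfl
    have := hφ.2 hadj (by rw [show φ (EE i) = ψ0 i from rfl, hb]; simp)
    rw [show φ (EE i) = ψ0 i from rfl, show φ (EE (i+1)) = ψ0 (i+1) from rfl, hb, hb'] at this
    intro h; exact this (by rw [h])
  by_cases hx : ∃ i b, ψ0 i = some b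
  · obtain ⟨i0, a, ha⟩ := hx
    obtain ⟨C, hC1, hC2, hC3⟩ := helper hn ψ0 hψ0 (fun i b hb => hc (EE i) b hb) i0 a ha
    refine ⟨C, hC1, hC2, ?_⟩
    intro e b hb
    obtain ⟨i, rfl⟩ := (mem_iff_EE hn e).mp (hφ.1 e (by rw [hb]; simp))
    exact hC3 i b hb
  · push_neg at hx
    set ψ' : Fin (2*n+1) → Option ℕ := fun i => if i = 0 then some 0 else none with hψ'def
    have hψ' : ∀ i : Fin (2*n+1), ∀ b b', ψ' i = some b → ψ' (i+1) = some b' → b ≠ b' := by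
      intro i b b' hb hb'
      simp only [hψ'def] at hb hb'
      split at hb
      · split at hb'
        · exfalso
          apply fone_ne_zero hn
          rename_i h1 h2
          rw [h1, zero_add] at h2
          exact h2
        · exact absurd hb' (by simp)
      · exact absurd hb (by simp)
    have hlt' : ∀ i b, ψ' i = some b → b < 3 := by
      intro i b hb
      simp only [hψ'def] at hb
      split at hb
      · have := Option.some.inj hb; omega
      · exact absurd hb (by simp)
    have ha' : ψ' 0 = some 0 := by simp [hψ'def]
    obtain ⟨C, hC1, hC2, _⟩ := helper hn ψ' hψ' hlt' 0 0 ha'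
    refine ⟨C, hC1, hC2, ?_⟩
    intro e b hb
    obtain ⟨i, rfl⟩ := (mem_iff_EE hn e).mp (hφ.1 e (by rw [hb]; simp))
    exact absurd hb (hx i b)
end

section
/- If G is a connected Class 1 graph in which every partial proper edge coloring with Δ(G) colored edges is extendable to a proper Δ(G)-edge coloring, then G is isomorphic to a star K_{1,n}. -/
open SimpleGraph

variable {V : Type*}

lemma walk_aux {V : Type*} {G : SimpleGraph V} {v w : V} (p : G.Walk w v)
    (hP : ∀ x y, G.Adj v x → G.Adj x y → y = v) : w = v ∨ G.Adj v w := by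
  induction p with
  | nil => exact Or.inl rfl
  | @cons a b c hab q ih =>
    rcases ih hP with h | h
    · by_cases hav : a = c
      · exact Or.inl hav
      · exact Or.inr (h ▸ hab.symm)
    · exact Or.inl (hP b a h hab.symm)

lemma caseB {V : Type*} [Fintype V] (G : SimpleGraph V) [DecidableRel G.Adj]
    (v x y : V) (hv : G.maxDegree = G.degree v)
    (hvx : G.Adj v x) (hxy : G.Adj x y) (hyv : y ≠ v)
    (hext : ∀ φ : Sym2 V → Option ℕ, IsPartialProperEdgeColoring G φ →
      UsesColors φ G.maxDegree → (Precolored φ).ncard = G.maxDegree →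
      Extendable G φ G.maxDegree) : False := by
  classical
  set Δ := G.maxDegree with hΔ
  have hxv : x ≠ v := fun h => G.irrefl (h ▸ hvx)
  have hxmem : x ∈ G.neighborFinset v := by simpa using hvx
  set T : Finset V := G.neighborFinset v \ {x} with hTdef
  have hdeg : (G.neighborFinset v).card = Δ := by rw [hv]; rfl
  have hΔpos : 1 ≤ Δ := by
    rw [← hdeg]; exact Finset.card_pos.2 ⟨x, hxmem⟩
  have hTcard : T.card = Δ - 1 := by
    rw [hTdef, Finset.card_sdiff_of_subset (by simpa using hxmem), hdeg, Finset.card_singleton]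
  have hxT : x ∉ T := by simp [hTdef]
  have hvT : ∀ u ∈ T, G.Adj v u := by
    intro u hu; rw [hTdef, Finset.mem_sdiff] at hu; exact (G.mem_neighborFinset v u).1 hu.1
  have hvnT : v ∉ T := fun h => G.irrefl (hvT v h)
  -- index equiv
  let ι : ↥T ≃ Fin T.card := Fintype.equivFinOfCardEq (Fintype.card_coe T)
  let c : V → ℕ := fun u => if h : u ∈ T then 1 + (ι ⟨u, h⟩ : ℕ) else 0
  have hcpos : ∀ u ∈ T, 1 ≤ c u := by intro u hu; simp [c, hu]
  have hclt : ∀ u ∈ T, c u < Δ := by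
    intro u hu
    have : (ι ⟨u, hu⟩ : ℕ) < T.card := (ι ⟨u, hu⟩).2
    simp only [c, dif_pos hu]
    omega
  have hcinj : ∀ u ∈ T, ∀ u' ∈ T, c u = c u' → u = u' := by
    intro u hu u' hu' h
    simp only [c, dif_pos hu, dif_pos hu', add_right_inj] at h
    have := ι.injective (Fin.val_injective h)
    exact Subtype.ext_iff.1 this
  -- v not in edge xy
  have hvf : v ∉ (s(x, y) : Sym2 V) := by
    rw [Sym2.mem_iff]
    push_neg
    exact ⟨fun h => hxv h.symm, fun h => hyv h.symm⟩
  have hvne : ∀ u, (s(v, u) : Sym2 V) ≠ s(x, y) := by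
    intro u h
    exact hvf (h ▸ Sym2.mem_mk_left v u)
  -- the partial coloring
  let φ : Sym2 V → Option ℕ := fun e =>
    if e = s(x, y) then some 0
    else if h : ∃ u ∈ T, e = s(v, u) then some (c h.choose) else none
  have hφf : φ s(x, y) = some 0 := if_pos rfl
  have hφu : ∀ u ∈ T, φ s(v, u) = some (c u) := by
    intro u hu
    have hex : ∃ u' ∈ T, (s(v, u) : Sym2 V) = s(v, u') := ⟨u, hu, rfl⟩
    have : φ s(v, u) = some (c hex.choose) := by
      simp only [φ, if_neg (hvne u), dif_pos hex]
    rw [this]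
    obtain ⟨_, h2⟩ := hex.choose_spec
    rw [Sym2.congr_right] at h2
    rw [← h2]
  have hφchar : ∀ e, φ e ≠ none → e = s(x, y) ∨ ∃ u ∈ T, e = s(v, u) := by
    intro e he
    by_cases h1 : e = s(x, y)
    · exact Or.inl h1
    · by_cases h2 : ∃ u ∈ T, e = s(v, u)
      · exact Or.inr h2
      · exact absurd (by simp [φ, h1, h2]) he
  -- values
  have hφval : ∀ e, φ e ≠ none →
      (e = s(x, y) ∧ φ e = some 0) ∨ ∃ u ∈ T, e = s(v, u) ∧ φ e = some (c u) := by
    intro e he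
    rcases hφchar e he with h | ⟨u, hu, h⟩
    · exact Or.inl ⟨h, h ▸ hφf⟩
    · exact Or.inr ⟨u, hu, h, h ▸ hφu u hu⟩
  have hpart : IsPartialProperEdgeColoring G φ := by
    constructor
    · intro e he
      rcases hφchar e he with h | ⟨u, hu, h⟩
      · rw [h]; exact hxy
      · rw [h]; exact hvT u hu
    · intro e f hef he
      rcases hφval e he with ⟨h1, h2⟩ | ⟨u, hu, h1, h2⟩
      · rw [h2]
        by_cases hf : φ f = none
        · rw [hf]; simp
        · rcases hφval f hf with ⟨g1, g2⟩ | ⟨u', hu', g1, g2⟩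
          · exact absurd (h1.trans g1.symm) hef.2.2.1
          · rw [g2]
            intro h
            have := (Option.some_inj.1 h).symm
            exact absurd this (Nat.ne_of_gt (hcpos u' hu'))
      · rw [h2]
        by_cases hf : φ f = none
        · rw [hf]; simp
        · rcases hφval f hf with ⟨g1, g2⟩ | ⟨u', hu', g1, g2⟩
          · rw [g2]
            intro h
            exact absurd (Option.some_inj.1 h) (Nat.ne_of_gt (hcpos u hu))
          · rw [g2]
            intro h
            have huu : u = u' := hcinj u hu u' hu' (Option.some_inj.1 h)
            exact hef.2.2.1 (h1.trans (huu ▸ g1.symm))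
  have huses : UsesColors φ Δ := by
    intro e a ha
    have he : φ e ≠ none := by rw [ha]; simp
    rcases hφval e he with ⟨_, h2⟩ | ⟨u, hu, _, h2⟩
    · rw [ha] at h2; have := Option.some_inj.1 h2; omega
    · rw [ha] at h2; have h3 := Option.some_inj.1 h2
      rw [h3]; exact hclt u hu
  -- cardinality
  have hset : Precolored φ = ↑(insert (s(x, y) : Sym2 V) (T.image fun u => s(v, u))) := by
    ext e
    simp only [Precolored, Set.mem_setOf_eq, Finset.coe_insert, Set.mem_insert_iff,
      Finset.coe_image, Set.mem_image, Finset.mem_coe]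
    constructor
    · intro he
      rcases hφchar e he with h | ⟨u, hu, h⟩
      · exact Or.inl h
      · exact Or.inr ⟨u, hu, h.symm⟩
    · rintro (h | ⟨u, hu, h⟩)
      · rw [h, hφf]; simp
      · rw [← h, hφu u hu]; simp
  have hcard : (Precolored φ).ncard = Δ := by
    rw [hset, Set.ncard_coe_finset]
    rw [Finset.card_insert_of_notMem (by
      simp only [Finset.mem_image, not_exists]
      intro u hu
      exact hvne u hu.2)]
    rw [Finset.card_image_of_injective _ (fun a b h => Sym2.congr_right.1 h)]
    omega
  obtain ⟨C, hCp, hCb, hCe⟩ := hext φ hpart huses hcard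
  -- derive contradiction with k = C s(v,x)
  set k := C s(v, x) with hk
  have hkΔ : k < Δ := hCb _ hvx
  have hk0 : k ≠ 0 := by
    have hadj : EdgeAdj G s(v, x) s(x, y) :=
      ⟨hvx, hxy, fun h => hvf (h ▸ Sym2.mem_mk_left v x), x, by simp, by simp⟩
    have := hCp hadj
    rw [hCe _ 0 hφf] at this
    exact this
  have hkneq : ∀ u ∈ T, k ≠ c u := by
    intro u hu
    have hune : u ≠ x := by intro h; exact hxT (h ▸ hu)
    have hadj : EdgeAdj G s(v, x) s(v, u) :=
      ⟨hvx, hvT u hu, fun h => hune (Sym2.congr_right.1 h).symm, v, by simp, by simp⟩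
    have := hCp hadj
    rw [hCe _ (c u) (hφu u hu)] at this
    exact this
  -- but k ∈ {1..Δ-1} = range of c on T
  have hklt : k - 1 < T.card := by omega
  set u := ι.symm ⟨k - 1, hklt⟩ with hu
  have hcu : c u.1 = k := by
    simp only [c, dif_pos u.2]
    have : ι ⟨u.1, u.2⟩ = ⟨k - 1, hklt⟩ := by
      rw [show (⟨u.1, u.2⟩ : ↥T) = u from rfl, hu, Equiv.apply_symm_apply]
    rw [this]
    simp
    omega
  exact hkneq u.1 u.2 hcu.symm

theorem stmt5 [Fintype V] (G : SimpleGraph V) [DecidableRel G.Adj] (hconn : G.Connected)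
    (hclass1 : chromaticIndex G = G.maxDegree)
    (hext : ∀ φ : Sym2 V → Option ℕ, IsPartialProperEdgeColoring G φ →
      UsesColors φ G.maxDegree → (Precolored φ).ncard = G.maxDegree →
      Extendable G φ G.maxDegree) :
    ∃ n : ℕ, Nonempty (G ≃g completeBipartiteGraph Unit (Fin n)) := by
  classical
  have hne : Nonempty V := hconn.nonempty
  obtain ⟨v, hv⟩ := G.exists_maximal_degree_vertex
  by_cases hP : ∃ x y, G.Adj v x ∧ G.Adj x y ∧ y ≠ v
  · obtain ⟨x, y, hvx, hxy, hyv⟩ := hP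
    exact (caseB G v x y hv hvx hxy hyv hext).elim
  · push_neg at hP
    have hadj : ∀ w, w ≠ v → G.Adj v w := by
      intro w hw
      rcases walk_aux ((hconn.preconnected w v).some) hP with h | h
      · exact absurd h hw
      · exact h
    have hall : ∀ a b, G.Adj a b → a = v ∨ b = v := by
      intro a b hab
      by_cases ha : a = v
      · exact Or.inl ha
      · exact Or.inr (hP a b (hadj a ha) hab)
    set T : Finset V := G.neighborFinset v with hT
    refine ⟨T.card, ⟨?_⟩⟩
    have hmem : ∀ w, w ≠ v ↔ w ∈ T := by
      intro w
      constructor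
      · intro h; simpa [hT] using hadj w h
      · intro h hx; subst hx; simp [hT] at h
    let κ : {w // w ≠ v} ≃ Fin T.card :=
      (Equiv.subtypeEquivRight hmem).trans (Fintype.equivFinOfCardEq (Fintype.card_coe T))
    let e : V ≃ Unit ⊕ Fin T.card :=
      (Equiv.optionSubtypeNe v).symm.trans ((κ.optionCongr).trans
        ((Equiv.optionEquivSumPUnit (Fin T.card)).trans (Equiv.sumComm (Fin T.card) PUnit)))
    have hev : e v = Sum.inl PUnit.unit := by
      simp [e, Equiv.optionSubtypeNe_symm_self]
    have hew : ∀ w (h : w ≠ v), e w = Sum.inr (κ ⟨w, h⟩) := by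
      intro w h
      simp [e, Equiv.optionSubtypeNe_symm_of_ne h]
    refine ⟨e, ?_⟩
    intro a b
    by_cases ha : a = v <;> by_cases hb : b = v
    · subst ha; subst hb; simp [hev]
    · subst ha
      simp [hev, hew b hb, hadj b hb]
    · subst hb
      simp [hev, hew a ha, (hadj a ha).symm]
    · simp only [hew a ha, hew b hb]
      constructor
      · rintro (⟨h1, h2⟩ | ⟨h1, h2⟩) <;> simp at h1 h2
      · intro h
        rcases hall a b h with h1 | h1 <;> [exact absurd h1 ha; exact absurd h1 hb]
end

section
/- If T is a forest with maximum degree Δ(T), then any partial proper edge coloring of T with at most Δ(T) − 1 precolored edges using colors {1,...,Δ(T)} is extendable to a proper Δ(T)-edge coloring of T. -/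
open SimpleGraph

variable {V : Type*}

lemma acyclic_mono' {G H : SimpleGraph V} (hle : G ≤ H) (hH : H.IsAcyclic) : G.IsAcyclic :=
  fun _ c hc => hH (c.mapLe hle) (hc.mapLe hle)

lemma mem_edge_exists' {G : SimpleGraph V} {f : Sym2 V} {v : V}
    (hf : f ∈ G.edgeSet) (hv : v ∈ f) : ∃ x, G.Adj v x ∧ f = s(v, x) := by
  obtain ⟨y, rfl⟩ := Sym2.mem_iff_exists.mp hv
  exact ⟨y, hf, rfl⟩

lemma pick_color' {B : Set ℕ} {t : ℕ} (hB : B.Finite) (h : B.ncard < t) :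
    ∃ b, b < t ∧ b ∉ B := by
  by_contra hcon
  push_neg at hcon
  have hsub : Set.Iio t ⊆ B := fun x hx => hcon x hx
  have h2 : (Set.Iio t).ncard ≤ B.ncard := Set.ncard_le_ncard hsub hB
  have hiio : (Set.Iio t).ncard = t := by
    have h3 : (Set.Iio t) = ↑(Finset.range t) := by ext x; simp
    rw [h3, Set.ncard_coe_finset, Finset.card_range]
  omega

lemma exists_sparse' [Fintype V] {G : SimpleGraph V} (hac : G.IsAcyclic) {D : Set V}
    (hD : D.Nonempty) : ∃ v ∈ D, (G.neighborSet v ∩ D).ncard ≤ 1 := by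
  classical
  obtain ⟨v₀, hv₀⟩ := hD
  set P : Set ℕ := {n | ∃ (a b : V) (p : G.Walk a b), p.IsPath ∧ (∀ x ∈ p.support, x ∈ D) ∧ p.length = n} with hPdef
  have hPne : P.Nonempty := ⟨0, v₀, v₀, Walk.nil, by simp, by simp [hv₀], rfl⟩
  have hPfin : P.Finite := by
    apply (Set.finite_Iio (Fintype.card V)).subset
    rintro n ⟨a, b, p, hp, _, rfl⟩
    exact hp.length_lt
  have hN : sSup P ∈ P := hPne.csSup_mem hPfin
  obtain ⟨a, b, p, hp, hsupp, hlen⟩ := hN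
  refine ⟨a, hsupp a p.start_mem_support, ?_⟩
  by_contra hcon
  push_neg at hcon
  obtain ⟨x, y, hx, hy, hxy⟩ := (Set.one_lt_ncard_iff (Set.toFinite _)).mp hcon
  -- subclaim 1 : every z in N(a) ∩ D lies on p.support
  have claim1 : ∀ z, z ∈ G.neighborSet a ∩ D → z ∈ p.support := by
    intro z hz
    by_contra hzs
    have hq : (Walk.cons ((hz.1 : G.Adj a z).symm) p).IsPath :=
      (Walk.cons_isPath_iff _ _).mpr ⟨hp, hzs⟩
    have hqmem : (Walk.cons ((hz.1 : G.Adj a z).symm) p).length ∈ P := by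
      refine ⟨z, b, _, hq, ?_, rfl⟩
      intro w hw
      rw [Walk.support_cons] at hw
      rcases List.mem_cons.mp hw with rfl | hw
      · exact hz.2
      · exact hsupp w hw
    have := le_csSup hPfin.bddAbove hqmem
    simp only [Walk.length_cons] at this
    omega
  -- subclaim 2 : edge to z is on p
  have claim2 : ∀ z, z ∈ G.neighborSet a ∩ D → s(a, z) ∈ p.edges := by
    intro z hz
    have hadj : G.Adj a z := hz.1
    have hzs : z ∈ p.support := claim1 z hz
    have hq2 : (p.takeUntil z hzs).IsPath := hp.takeUntil hzs
    have hq1 : (Walk.cons hadj Walk.nil).IsPath := by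
      simp [Walk.cons_isPath_iff, hadj.ne]
    have := hac.path_unique ⟨Walk.cons hadj Walk.nil, hq1⟩ ⟨p.takeUntil z hzs, hq2⟩
    have heq : Walk.cons hadj Walk.nil = p.takeUntil z hzs := congrArg Subtype.val this
    have : s(a, z) ∈ (p.takeUntil z hzs).edges := by
      rw [← heq]; simp
    exact p.edges_takeUntil_subset hzs this
  have hex : s(a, x) ∈ p.edges := claim2 x hx
  have hey : s(a, y) ∈ p.edges := claim2 y hy
  cases p with
  | nil =>
    simp at hex
  | cons h q =>
    rename_i c
    have hnq : a ∉ q.support := by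
      rw [Walk.cons_isPath_iff] at hp
      exact hp.2
    have hfirst : ∀ z, G.Adj a z → s(a, z) ∈ (Walk.cons h q).edges → z = c := by
      intro z hadj hz
      rw [Walk.edges_cons] at hz
      rcases List.mem_cons.mp hz with hz | hz
      · rw [Sym2.eq_iff] at hz
        rcases hz with ⟨-, rfl⟩ | ⟨rfl, rfl⟩
        · rfl
        · exact absurd rfl hadj.ne
      · exact absurd (q.fst_mem_support_of_mem_edges hz) hnq
    rw [hfirst x hx.1 hex, hfirst y hy.1 hey] at hxy
    exact hxy rfl


open scoped Classical in
lemma glue' {G : SimpleGraph V} {u v : V} {C' : Sym2 V → ℕ} {a : ℕ}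
    (hNu : G.neighborSet u = {v})
    (hC' : IsProperEdgeColoring (G.deleteEdges {s(u,v)}) C')
    (ha : ∀ x, G.Adj v x → x ≠ u → C' s(v,x) ≠ a) :
    IsProperEdgeColoring G (fun f => if f = s(u,v) then a else C' f) := by
  have hadjuv : G.Adj u v := by
    have : v ∈ G.neighborSet u := by rw [hNu]; rfl
    exact this
  -- key: any edge g ≠ s(u,v) sharing a vertex with s(u,v) is s(v,x), x ≠ u, so C' g ≠ a
  have hkey : ∀ g ∈ G.edgeSet, g ≠ s(u,v) → (∃ z, z ∈ (s(u,v) : Sym2 V) ∧ z ∈ g) → C' g ≠ a := by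
    intro g hg hgne ⟨z, hz1, hz2⟩
    rw [Sym2.mem_iff] at hz1
    rcases hz1 with rfl | rfl
    · -- z = u : impossible
      obtain ⟨x, hx, rfl⟩ := mem_edge_exists' hg hz2
      have : x ∈ G.neighborSet z := hx
      rw [hNu] at this
      rw [Set.mem_singleton_iff] at this
      subst this
      exact absurd rfl hgne
    · obtain ⟨x, hx, rfl⟩ := mem_edge_exists' hg hz2
      have hxu : x ≠ u := by
        rintro rfl
        exact hgne (Sym2.eq_swap)
      exact ha x hx hxu
  intro f g hadj
  obtain ⟨hf, hg, hfg, z, hzf, hzg⟩ := hadj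
  by_cases hfe : f = s(u,v) <;> by_cases hge : g = s(u,v)
  · exact absurd (hfe.trans hge.symm) hfg
  · subst hfe
    simp only [if_pos rfl, if_neg hge]
    exact fun h => hkey g hg hge ⟨z, hzf, hzg⟩ h.symm
  · subst hge
    simp only [if_pos rfl, if_neg hfe]
    exact hkey f hf hfe ⟨z, hzg, hzf⟩
  · simp only [if_neg hfe, if_neg hge]
    apply hC'
    refine ⟨?_, ?_, hfg, z, hzf, hzg⟩ <;>
      rw [edgeSet_deleteEdges] <;> exact ⟨‹_›, by simpa⟩


open scoped Classical in
lemma key [Fintype V] : ∀ (n : ℕ) (G : SimpleGraph V), G.IsAcyclic → G.edgeSet.ncard = n →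
    ∀ (t : ℕ) (φ : Sym2 V → Option ℕ), IsPartialProperEdgeColoring G φ → UsesColors φ t →
    (∀ v, (G.neighborSet v).ncard ≤ t) → (Precolored φ).ncard < t →
    Extendable G φ t := by
  intro n
  induction n using Nat.strong_induction_on with
  | _ n IH =>
  intro G hac hn t φ hφ huse hdeg hP
  have ht1 : 1 ≤ t := Nat.pos_of_ne_zero (by rintro rfl; omega)
  by_cases hall : ∀ f ∈ G.edgeSet, φ f ≠ none
  · -- all edges precolored
    refine ⟨fun f => (φ f).getD 0, ?_, ?_, ?_⟩
    · intro f g hadj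
      obtain ⟨c, hc⟩ := Option.ne_none_iff_exists'.mp (hall f hadj.1)
      obtain ⟨d, hd⟩ := Option.ne_none_iff_exists'.mp (hall g hadj.2.1)
      have h2 := hφ.2 hadj (hall f hadj.1)
      rw [hc, hd] at h2
      show (φ f).getD 0 ≠ (φ g).getD 0
      rw [hc, hd]
      simpa using h2
    · intro f hf
      obtain ⟨c, hc⟩ := Option.ne_none_iff_exists'.mp (hall f hf)
      show (φ f).getD 0 < t
      rw [hc]
      exact huse f c hc
    · intro f c hc
      show (φ f).getD 0 = c
      rw [hc]; rfl
  · push_neg at hall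
    obtain ⟨g, hgE, hgnone⟩ := hall
    -- generic facts about deleting a leaf edge s(u,v)
    by_cases hleaf : ∃ u v, G.neighborSet u = {v} ∧ φ s(u,v) = none
    · -- case c1 : an uncolored leaf edge
      obtain ⟨u, v, hNu, hφe⟩ := hleaf
      have hadjuv : G.Adj u v := by
        rw [← mem_neighborSet, hNu]; rfl
      have he : s(u,v) ∈ G.edgeSet := hadjuv
      set G' := G.deleteEdges {s(u,v)} with hG'
      have hE' : G'.edgeSet = G.edgeSet \ {s(u,v)} := edgeSet_deleteEdges _
      have hnlt : G'.edgeSet.ncard < n := by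
        have := Set.ncard_diff_singleton_add_one he (Set.toFinite _)
        rw [hE']; omega
      have hacy' : G'.IsAcyclic := acyclic_mono' (deleteEdges_le _) hac
      have hdeg' : ∀ w, (G'.neighborSet w).ncard ≤ t := fun w =>
        le_trans (Set.ncard_le_ncard (fun x hx => (deleteEdges_le _) hx) (Set.toFinite _)) (hdeg w)
      have hlift : ∀ {f g : Sym2 V}, EdgeAdj G' f g → EdgeAdj G f g := by
        rintro f g ⟨hf, hg, h1, h2⟩
        rw [hE'] at hf hg
        exact ⟨hf.1, hg.1, h1, h2⟩
      have hφ' : IsPartialProperEdgeColoring G' φ := by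
        constructor
        · intro f hf
          rw [hE']
          refine ⟨hφ.1 f hf, ?_⟩
          rintro rfl
          exact hf hφe
        · intro f g hadj hf
          exact hφ.2 (hlift hadj) hf
      obtain ⟨C', hC'p, hC'b, hC'x⟩ :=
        IH _ hnlt G' hacy' rfl t φ hφ' huse hdeg' hP
      -- pick a fresh color at v
      set A : Set ℕ := C' '' {f | f ∈ G.edgeSet ∧ v ∈ f ∧ f ≠ s(u,v)} with hA
      have hAcard : A.ncard < t := by
        have h1 : {f | f ∈ G.edgeSet ∧ v ∈ f ∧ f ≠ s(u,v)}
            = {f | f ∈ G.edgeSet ∧ v ∈ f} \ {s(u,v)} := by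
          ext f; simp only [Set.mem_setOf_eq, Set.mem_diff, Set.mem_singleton_iff]; tauto
        have h2 : {f | f ∈ G.edgeSet ∧ v ∈ f} = (fun x => s(v,x)) '' (G.neighborSet v) := by
          ext f
          constructor
          · rintro ⟨hf1, hf2⟩
            obtain ⟨x, hx, rfl⟩ := mem_edge_exists' hf1 hf2
            exact ⟨x, hx, rfl⟩
          · rintro ⟨x, hx, rfl⟩
            exact ⟨hx, by simp⟩
        have hinj : Set.InjOn (fun x => s(v,x)) (G.neighborSet v) := by
          intro x _ y _ hxy
          simp only [Sym2.eq_iff] at hxy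
          rcases hxy with ⟨-, h⟩ | ⟨rfl, rfl⟩ <;> [exact h; rfl]
        have h3 : {f | f ∈ G.edgeSet ∧ v ∈ f}.ncard = (G.neighborSet v).ncard := by
          rw [h2, Set.ncard_image_of_injOn hinj]
        have hmem : s(u,v) ∈ {f | f ∈ G.edgeSet ∧ v ∈ f} := ⟨he, by simp⟩
        have h4 := Set.ncard_diff_singleton_add_one hmem (Set.toFinite _)
        have h5 : A.ncard ≤ ({f | f ∈ G.edgeSet ∧ v ∈ f} \ {s(u,v)}).ncard := by
          rw [hA, h1]; exact Set.ncard_image_le (Set.toFinite _)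
        have h6 := hdeg v
        omega
      obtain ⟨a, hat, haA⟩ := pick_color' ((Set.toFinite _).image _) hAcard
      have ha' : ∀ x, G.Adj v x → x ≠ u → C' s(v,x) ≠ a := by
        intro x hx hxu hCa
        apply haA
        refine ⟨s(v,x), ⟨hx, by simp, ?_⟩, hCa⟩
        intro h
        rcases Sym2.eq_iff.mp h with ⟨rfl, rfl⟩ | ⟨-, rfl⟩
        · exact hadjuv.ne rfl
        · exact hxu rfl
      refine ⟨fun f => if f = s(u,v) then a else C' f, glue' hNu hC'p ha', ?_, ?_⟩
      · intro f hf
        by_cases hfe : f = s(u,v)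
        · simpa [hfe] using hat
        · simp only [if_neg hfe]
          exact hC'b f (by rw [hE']; exact ⟨hf, hfe⟩)
      · intro f c hfc
        have hfe : f ≠ s(u,v) := by rintro rfl; rw [hφe] at hfc; exact nomatch hfc
        simp only [if_neg hfe]
        exact hC'x f c hfc
    · -- case c2 : all leaf edges precolored, some edge uncolored
      push_neg at hleaf
      set D : Set V := {x | 2 ≤ (G.neighborSet x).ncard} with hD
      have hdegD : ∀ x y, G.Adj x y → x ∉ D → G.neighborSet x = {y} := by
        intro x y hxy hxD
        have h1 : y ∈ G.neighborSet x := hxy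
        have h2 : ¬ 2 ≤ (G.neighborSet x).ncard := hxD
        have h0 : 0 < (G.neighborSet x).ncard := (Set.ncard_pos (Set.toFinite _)).mpr ⟨y, h1⟩
        have h3 : (G.neighborSet x).ncard = 1 := by omega
        obtain ⟨z, hz⟩ := Set.ncard_eq_one.mp h3
        rw [hz] at h1
        rw [Set.mem_singleton_iff] at h1
        rw [hz, h1]
      have hDne : D.Nonempty := by
        clear hn hP
        revert hgE hgnone
        induction g using Sym2.ind with
        | _ x y =>
          intro hgE hgnone
          refine ⟨x, ?_⟩
          by_contra hxD
          exact hleaf x y (hdegD x y hgE hxD) hgnone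
      obtain ⟨v, hvD, hv1⟩ := exists_sparse' hac hDne
      have hvD2 : 2 ≤ (G.neighborSet v).ncard := hvD
      have hune : (G.neighborSet v \ D).Nonempty := by
        rw [Set.diff_nonempty]
        intro hsub
        have hh : G.neighborSet v ∩ D = G.neighborSet v := Set.inter_eq_self_of_subset_left hsub
        rw [hh] at hv1
        omega
      obtain ⟨u, huN, huD⟩ := hune
      have hadjvu : G.Adj v u := huN
      have hNu : G.neighborSet u = {v} := hdegD u v hadjvu.symm huD
      have hadjuv : G.Adj u v := hadjvu.symm
      have he : s(u,v) ∈ G.edgeSet := hadjuv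
      obtain ⟨a, hφe⟩ := Option.ne_none_iff_exists'.mp (hleaf u v hNu)
      -- facts about G'
      set G' := G.deleteEdges {s(u,v)} with hG'
      have hE' : G'.edgeSet = G.edgeSet \ {s(u,v)} := edgeSet_deleteEdges _
      have hnlt : G'.edgeSet.ncard < n := by
        have := Set.ncard_diff_singleton_add_one he (Set.toFinite _)
        rw [hE']; omega
      have hacy' : G'.IsAcyclic := acyclic_mono' (deleteEdges_le _) hac
      have hdeg' : ∀ w, (G'.neighborSet w).ncard ≤ t := fun w =>
        le_trans (Set.ncard_le_ncard (fun x hx => (deleteEdges_le _) hx) (Set.toFinite _)) (hdeg w)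
      have hlift : ∀ {f g : Sym2 V}, EdgeAdj G' f g → EdgeAdj G f g := by
        rintro f g ⟨hf, hg, h1, h2⟩
        rw [hE'] at hf hg
        exact ⟨hf.1, hg.1, h1, h2⟩
      have hePre : s(u,v) ∈ Precolored φ := by
        intro h; rw [hφe] at h; exact nomatch h
      by_cases hc2a : ∀ x, G.Adj v x → x ≠ u → φ s(v,x) ≠ none
      · -- all other edges at v precolored
        set φ' : Sym2 V → Option ℕ := fun f => if f = s(u,v) then none else φ f with hφ'def
        have hφ'ne : ∀ f, f ≠ s(u,v) → φ' f = φ f := fun f hf => if_neg hf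
        have hφ'e : φ' s(u,v) = none := if_pos rfl
        have hφ'pp : IsPartialProperEdgeColoring G' φ' := by
          constructor
          · intro f hf
            by_cases hfe : f = s(u,v)
            · exact absurd (hfe ▸ hφ'e) hf
            · rw [hφ'ne f hfe] at hf
              rw [hE']
              exact ⟨hφ.1 f hf, hfe⟩
          · intro f g hadj hf
            have hfE := hadj.1
            have hgE2 := hadj.2.1
            rw [hE'] at hfE hgE2
            have hfe : f ≠ s(u,v) := fun h => hfE.2 (by rw [h]; rfl)
            have hge : g ≠ s(u,v) := fun h => hgE2.2 (by rw [h]; rfl)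
            rw [hφ'ne f hfe, hφ'ne g hge]
            rw [hφ'ne f hfe] at hf
            exact hφ.2 (hlift hadj) hf
        have huse' : UsesColors φ' t := by
          intro f c hfc
          by_cases hfe : f = s(u,v)
          · rw [hfe, hφ'e] at hfc; exact nomatch hfc
          · rw [hφ'ne f hfe] at hfc; exact huse f c hfc
        have hP' : (Precolored φ').ncard < t := by
          refine lt_of_le_of_lt (Set.ncard_le_ncard ?_ (Set.toFinite _)) hP
          intro f hf
          by_cases hfe : f = s(u,v)
          · exact absurd (hfe ▸ hφ'e) hf
          · rwa [Precolored, Set.mem_setOf_eq, hφ'ne f hfe] at hf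
        obtain ⟨C', hC'p, hC'b, hC'x⟩ :=
          IH _ hnlt G' hacy' rfl t φ' hφ'pp huse' hdeg' hP'
        have ha' : ∀ x, G.Adj v x → x ≠ u → C' s(v,x) ≠ a := by
          intro x hx hxu
          have hnevx : s(v,x) ≠ s(u,v) := by
            intro h
            rcases Sym2.eq_iff.mp h with ⟨rfl, rfl⟩ | ⟨-, rfl⟩
            · exact hadjuv.ne rfl
            · exact hxu rfl
          obtain ⟨c, hcc⟩ := Option.ne_none_iff_exists'.mp (hc2a x hx hxu)
          have hadje : EdgeAdj G s(u,v) s(v,x) :=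
            ⟨he, hx, hnevx.symm, v, by simp, by simp⟩
          have hac2 := hφ.2 hadje (by rw [hφe]; exact fun h => nomatch h)
          rw [hφe, hcc] at hac2
          have hval : C' s(v,x) = c := hC'x _ c (by rw [hφ'ne _ hnevx]; exact hcc)
          rw [hval]
          intro hca
          exact hac2 (by rw [hca])
        refine ⟨fun f => if f = s(u,v) then a else C' f, glue' hNu hC'p ha', ?_, ?_⟩
        · intro f hf
          by_cases hfe : f = s(u,v)
          · simp only [if_pos hfe]; exact huse _ a hφe
          · simp only [if_neg hfe]; exact hC'b f (by rw [hE']; exact ⟨hf, hfe⟩)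
        · intro f c hfc
          by_cases hfe : f = s(u,v)
          · subst hfe
            rw [hφe] at hfc
            simp only [if_pos rfl]
            exact (Option.some.inj hfc)
          · simp only [if_neg hfe]
            exact hC'x f c (by rw [hφ'ne f hfe]; exact hfc)
      · -- some other edge at v uncolored : it goes to a branch vertex w
        push_neg at hc2a
        obtain ⟨w, hadjvw, hwu, hφvw⟩ := hc2a
        have hvwne : s(v,w) ≠ s(u,v) := by
          intro h
          rcases Sym2.eq_iff.mp h with ⟨rfl, rfl⟩ | ⟨-, rfl⟩
          · exact hadjuv.ne rfl
          · exact hwu rfl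
        have hcolx : ∀ x, G.Adj v x → x ≠ w → φ s(v,x) ≠ none := by
          intro x hx hxw hnone
          have hwD : w ∈ D := by
            by_contra hwD
            have hNw : G.neighborSet w = {v} := hdegD w v hadjvw.symm hwD
            exact hleaf w v hNw (by rwa [Sym2.eq_swap] at hφvw)
          have hxD : x ∉ D := by
            intro hxD2
            exact hxw ((Set.ncard_le_one (Set.toFinite _)).mp hv1 x ⟨hx, hxD2⟩ w ⟨hadjvw, hwD⟩)
          have hNx : G.neighborSet x = {v} := hdegD x v hx.symm hxD
          exact hleaf x v hNx (by rwa [Sym2.eq_swap] at hnone)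
        -- choose a fresh color b for s(v,w)
        set B : Set ℕ := (fun f => (φ f).getD 0) '' {f | φ f ≠ none ∧ (v ∈ f ∨ w ∈ f)} with hB
        have hBfin : B.Finite := (Set.toFinite _).image _
        have hBcard : B.ncard < t := by
          refine lt_of_le_of_lt (le_trans (Set.ncard_image_le (Set.toFinite _))
            (Set.ncard_le_ncard ?_ (Set.toFinite _))) hP
          intro f hf
          exact hf.1
        obtain ⟨b, hbt, hbB⟩ := pick_color' hBfin hBcard
        have hBne : ∀ f c, φ f = some c → (v ∈ f ∨ w ∈ f) → c ≠ b := by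
          intro f c hfc hvw hcb
          apply hbB
          refine ⟨f, ⟨?_, hvw⟩, ?_⟩
          · rw [hfc]; exact fun h => nomatch h
          · show (φ f).getD 0 = b
            rw [hfc, ← hcb]; rfl
        set φ'' : Sym2 V → Option ℕ :=
          fun f => if f = s(u,v) then none else if f = s(v,w) then some b else φ f with hφ''def
        have hφ''e : φ'' s(u,v) = none := if_pos rfl
        have hφ''vw : φ'' s(v,w) = some b := by
          rw [hφ''def]; simp [hvwne]
        have hφ''ne : ∀ f, f ≠ s(u,v) → f ≠ s(v,w) → φ'' f = φ f := by
          intro f h1 h2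
          rw [hφ''def]; simp only [if_neg h1, if_neg h2]
        have hφ''pp : IsPartialProperEdgeColoring G' φ'' := by
          constructor
          · intro f hf
            by_cases h1 : f = s(u,v)
            · exact absurd (h1 ▸ hφ''e) hf
            by_cases h2 : f = s(v,w)
            · rw [hE', h2]
              exact ⟨hadjvw, fun h => hvwne (by exact h)⟩
            · rw [hφ''ne f h1 h2] at hf
              rw [hE']
              exact ⟨hφ.1 f hf, h1⟩
          · intro f g hadj hf
            obtain ⟨hfE, hgE2, hfg, z, hzf, hzg⟩ := hadj
            rw [hE'] at hfE hgE2
            have hfe : f ≠ s(u,v) := fun h => hfE.2 (by rw [h]; rfl)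
            have hge : g ≠ s(u,v) := fun h => hgE2.2 (by rw [h]; rfl)
            by_cases hfvw : f = s(v,w)
            · subst hfvw
              have hgvw : g ≠ s(v,w) := fun h => hfg h.symm
              rw [hφ''vw, hφ''ne g hge hgvw]
              cases hgval : φ g with
              | none => exact fun h => nomatch (hgval ▸ h.symm ▸ hgval)
              | some c =>
                have hvwg : v ∈ g ∨ w ∈ g := by
                  rcases Sym2.mem_iff.mp hzf with rfl | rfl
                  · exact Or.inl hzg
                  · exact Or.inr hzg
                have hcb := hBne g c hgval hvwg
                intro hcon
                rw [Option.some_inj] at hcon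
                exact hcb hcon.symm
            · by_cases hgvw : g = s(v,w)
              · subst hgvw
                rw [hφ''vw, hφ''ne f hfe hfvw]
                rw [hφ''ne f hfe hfvw] at hf
                obtain ⟨c, hfc⟩ := Option.ne_none_iff_exists'.mp hf
                have hvwf : v ∈ f ∨ w ∈ f := by
                  rcases Sym2.mem_iff.mp hzg with rfl | rfl
                  · exact Or.inl hzf
                  · exact Or.inr hzf
                rw [hfc]
                intro hcon
                rw [Option.some_inj] at hcon
                exact hBne f c hfc hvwf hcon
              · rw [hφ''ne f hfe hfvw, hφ''ne g hge hgvw]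
                rw [hφ''ne f hfe hfvw] at hf
                exact hφ.2 (hlift ⟨by rw [hE']; exact hfE, by rw [hE']; exact hgE2, hfg, z, hzf, hzg⟩) hf
        have huse'' : UsesColors φ'' t := by
          intro f c hfc
          by_cases h1 : f = s(u,v)
          · rw [h1, hφ''e] at hfc; exact nomatch hfc
          by_cases h2 : f = s(v,w)
          · rw [h2, hφ''vw] at hfc
            rw [← Option.some_inj.mp hfc]
            exact hbt
          · rw [hφ''ne f h1 h2] at hfc
            exact huse f c hfc
        have hP'' : (Precolored φ'').ncard < t := by
          have hsub : Precolored φ'' ⊆ insert s(v,w) (Precolored φ \ {s(u,v)}) := by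
            intro f hf
            by_cases h1 : f = s(u,v)
            · exact absurd (h1 ▸ hφ''e) hf
            by_cases h2 : f = s(v,w)
            · exact h2 ▸ Set.mem_insert _ _
            · rw [Precolored, Set.mem_setOf_eq, hφ''ne f h1 h2] at hf
              exact Set.mem_insert_of_mem _ ⟨hf, fun h => h1 (by exact h)⟩
          have h1 := Set.ncard_le_ncard hsub (Set.toFinite _)
          have h2 := Set.ncard_insert_le s(v,w) (Precolored φ \ {s(u,v)})
          have h3 := Set.ncard_diff_singleton_add_one hePre (Set.toFinite _)
          omega
        obtain ⟨C', hC'p, hC'b, hC'x⟩ :=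
          IH _ hnlt G' hacy' rfl t φ'' hφ''pp huse'' hdeg' hP''
        have hab : a ≠ b := hBne s(u,v) a hφe (Or.inl (by simp))
        have ha' : ∀ x, G.Adj v x → x ≠ u → C' s(v,x) ≠ a := by
          intro x hx hxu
          by_cases hxw : x = w
          · subst hxw
            rw [hC'x _ b hφ''vw]
            exact fun h => hab h.symm
          · have hnevx : s(v,x) ≠ s(u,v) := by
              intro h
              rcases Sym2.eq_iff.mp h with ⟨rfl, rfl⟩ | ⟨-, rfl⟩
              · exact hadjuv.ne rfl
              · exact hxu rfl
            have hnevw : s(v,x) ≠ s(v,w) := by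
              intro h
              rcases Sym2.eq_iff.mp h with ⟨-, rfl⟩ | ⟨rfl, rfl⟩
              · exact hxw rfl
              · exact hadjvw.ne rfl
            obtain ⟨c, hcc⟩ := Option.ne_none_iff_exists'.mp (hcolx x hx hxw)
            have hadje : EdgeAdj G s(u,v) s(v,x) :=
              ⟨he, hx, hnevx.symm, v, by simp, by simp⟩
            have hac2 := hφ.2 hadje (by rw [hφe]; exact fun h => nomatch h)
            rw [hφe, hcc] at hac2
            have hval : C' s(v,x) = c := hC'x _ c (by rw [hφ''ne _ hnevx hnevw]; exact hcc)
            rw [hval]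
            intro hca
            exact hac2 (by rw [hca])
        refine ⟨fun f => if f = s(u,v) then a else C' f, glue' hNu hC'p ha', ?_, ?_⟩
        · intro f hf
          by_cases hfe : f = s(u,v)
          · simp only [if_pos hfe]; exact huse _ a hφe
          · simp only [if_neg hfe]; exact hC'b f (by rw [hE']; exact ⟨hf, hfe⟩)
        · intro f c hfc
          by_cases hfe : f = s(u,v)
          · subst hfe
            rw [hφe] at hfc
            simp only [if_pos rfl]
            exact (Option.some.inj hfc)
          · have hfvw : f ≠ s(v,w) := by
              rintro rfl
              rw [hφvw] at hfc
              exact nomatch hfc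
            simp only [if_neg hfe]
            exact hC'x f c (by rw [hφ''ne f hfe hfvw]; exact hfc)

theorem stmt6 [Fintype V] (T : SimpleGraph V) [DecidableRel T.Adj] (hT : T.IsAcyclic)
    (φ : Sym2 V → Option ℕ) (hφ : IsPartialProperEdgeColoring T φ)
    (hc : UsesColors φ T.maxDegree)
    (hcard : (Precolored φ).ncard ≤ T.maxDegree - 1) :
    Extendable T φ T.maxDegree := by
  by_cases ht : T.maxDegree = 0
  · have hE : T.edgeSet = ∅ := by
      by_contra hne
      obtain ⟨e, he⟩ := Set.nonempty_iff_ne_empty.mpr hne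
      revert he
      induction e using Sym2.ind with
      | _ x y =>
        intro he
        have h1 : 0 < T.degree x := (T.degree_pos_iff_exists_adj x).mpr ⟨y, he⟩
        have h2 := T.degree_le_maxDegree x
        omega
    refine ⟨fun _ => 0, ?_, ?_, ?_⟩
    · intro e f hadj
      have := hadj.1
      rw [hE] at this
      exact absurd this (Set.notMem_empty e)
    · intro e he
      rw [hE] at he
      exact absurd he (Set.notMem_empty e)
    · intro e a hea
      have h3 := hφ.1 e (by rw [hea]; exact fun h => nomatch h)
      rw [hE] at h3
      exact absurd h3 (Set.notMem_empty e)
  · have ht1 : 1 ≤ T.maxDegree := Nat.pos_of_ne_zero ht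
    have hdeg : ∀ v, (T.neighborSet v).ncard ≤ T.maxDegree := by
      intro v
      have h1 : (T.neighborSet v).ncard = T.degree v := by
        rw [Set.ncard_eq_toFinset_card']
        rfl
      rw [h1]
      exact T.degree_le_maxDegree v
    exact key T.edgeSet.ncard T hT rfl T.maxDegree φ hφ hc hdeg (by omega)
end

section
/- If G is a triangle-free regular graph in which every partial proper edge coloring of at most k < Δ(G) pairwise nonadjacent (independent) edges extends to a proper χ'(G)-edge coloring of G, then every partial proper edge coloring of at most k+1 independent edges of G □ K_2 extends to a proper (χ'(G)+1)-edge coloring of G □ K_2. -/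
open SimpleGraph

variable {V : Type*}

/-! ### color shift -/

def sig (c x : ℕ) : ℕ := if x < c then x else x + 1
def siginv (c y : ℕ) : ℕ := if y < c then y else y - 1

lemma sig_lt {t c x : ℕ} (hc : c ≤ t) (hx : x < t) : sig c x < t + 1 := by
  unfold sig; split <;> omega

lemma sig_ne_c {c x : ℕ} : sig c x ≠ c := by unfold sig; split <;> omega

lemma sig_inj {c x y : ℕ} (h : sig c x = sig c y) : x = y := by
  unfold sig at h; split at h <;> split at h <;> omega

lemma sig_siginv {c y : ℕ} (hy : y ≠ c) : sig c (siginv c y) = y := by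
  unfold sig siginv; split_ifs <;> omega

lemma siginv_lt {t c y : ℕ} (hc : c ≤ t) (hy : y < t + 1) (hyc : y ≠ c) : siginv c y < t := by
  unfold siginv; split <;> omega

/-! ### small helpers -/

lemma mem_exists_other {v : V} {e : Sym2 V} (h : v ∈ e) : ∃ x, e = s(v, x) :=
  ⟨Sym2.Mem.other h, (Sym2.other_spec h).symm⟩

/-- from independence, partial properness is almost free -/
lemma partialProper_of_indep {G : SimpleGraph V} {ψ : Sym2 V → Option ℕ}
    (hedge : ∀ e, ψ e ≠ none → e ∈ G.edgeSet)
    (hind : IndependentEdges (Precolored ψ)) : IsPartialProperEdgeColoring G ψ := by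
  refine ⟨hedge, ?_⟩
  intro e f hadj he
  by_cases hf : ψ f = none
  · rw [hf]; exact he
  · obtain ⟨-, -, hne, v, hv, hv'⟩ := hadj
    exact absurd hv' (hind e he f hf hne v hv)

/-- a vertex misses some color (pigeonhole) -/
lemma exists_missing (G : SimpleGraph V) [Fintype V] [DecidableRel G.Adj]
    {D : Sym2 V → ℕ} {t : ℕ}
    (hprop : IsProperEdgeColoring G D) (hb : ColorsBelow G D (t + 1))
    (hdeg : ∀ v : V, G.degree v ≤ t) (v : V) :
    ∃ b, b < t + 1 ∧ ∀ x, G.Adj v x → D s(v, x) ≠ b := by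
  classical
  have hsub : (G.neighborFinset v).image (fun x => D s(v, x)) ⊆ Finset.range (t + 1) := by
    intro b hb'
    simp only [Finset.mem_image, mem_neighborFinset] at hb'
    obtain ⟨x, hx, rfl⟩ := hb'
    exact Finset.mem_range.2 (hb _ ((G.mem_edgeSet).2 hx))
  have hcard : ((G.neighborFinset v).image (fun x => D s(v, x))).card < (Finset.range (t + 1)).card := by
    calc ((G.neighborFinset v).image (fun x => D s(v, x))).card ≤ G.degree v :=
          (Finset.card_image_le).trans_eq (G.card_neighborFinset_eq_degree v)
      _ < t + 1 := Nat.lt_succ_of_le (hdeg v)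
      _ = (Finset.range (t + 1)).card := (Finset.card_range _).symm
  have hss : (G.neighborFinset v).image (fun x => D s(v, x)) ⊂ Finset.range (t + 1) :=
    Finset.ssubset_iff_subset_ne.2 ⟨hsub, by intro h; rw [h] at hcard; exact lt_irrefl _ hcard⟩
  obtain ⟨b, hbr, hbi⟩ := Finset.exists_of_ssubset hss
  refine ⟨b, Finset.mem_range.1 hbr, fun x hx hD => hbi ?_⟩
  exact Finset.mem_image.2 ⟨x, (mem_neighborFinset _ _ _).2 hx, hD⟩

/-! ### the product graph -/

section Product

abbrev HG (G : SimpleGraph V) : SimpleGraph (V × Fin 2) := G.boxProd (⊤ : SimpleGraph (Fin 2))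

def copyE (i : Fin 2) (e : Sym2 V) : Sym2 (V × Fin 2) := e.map (·, i)

def matchE (v : V) : Sym2 (V × Fin 2) := s((v, 0), (v, 1))

variable {G : SimpleGraph V}

lemma mem_copyE {x : V} {j i : Fin 2} {e : Sym2 V} :
    (x, j) ∈ copyE i e ↔ j = i ∧ x ∈ e := by
  simp only [copyE, Sym2.mem_map, Prod.mk.injEq]
  constructor
  · rintro ⟨a, ha, rfl, rfl⟩; exact ⟨rfl, ha⟩
  · rintro ⟨rfl, hx⟩; exact ⟨x, hx, rfl, rfl⟩

lemma mem_matchE {x : V} {j : Fin 2} {v : V} :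
    (x, j) ∈ matchE v ↔ x = v := by
  unfold matchE
  rw [Sym2.mem_iff]
  constructor
  · rintro (h | h) <;> exact (Prod.mk.injEq .. ▸ h).1
  · rintro rfl
    fin_cases j
    · left; rfl
    · right; rfl

lemma copyE_mk (i : Fin 2) (u v : V) : copyE i s(u, v) = s((u, i), (v, i)) := rfl

lemma copyE_inj {i : Fin 2} {e f : Sym2 V} (h : copyE i e = copyE i f) : e = f := by
  have : e.map (fun x => ((x, i) : V × Fin 2)) = f.map (fun x => (x, i)) := h
  have hinj : Function.Injective (fun x : V => ((x, i) : V × Fin 2)) := by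
    intro a b hab; exact (Prod.mk.injEq .. ▸ hab).1
  exact Sym2.map.injective hinj this

lemma matchE_inj {u v : V} (h : matchE u = matchE v) : u = v := by
  have : (u, (0 : Fin 2)) ∈ matchE v := h ▸ (mem_matchE.2 rfl : (u, (0:Fin 2)) ∈ matchE u)
  exact mem_matchE.1 this

lemma copyE_mem_edgeSet {i : Fin 2} {e : Sym2 V} (he : e ∈ G.edgeSet) :
    copyE i e ∈ (HG G).edgeSet := by
  induction e using Sym2.ind with
  | _ u v =>
    rw [copyE_mk]
    exact (HG G).mem_edgeSet.2 (by simp [SimpleGraph.boxProd_adj, G.mem_edgeSet.1 he])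

lemma matchE_mem_edgeSet (v : V) : matchE v ∈ (HG G).edgeSet := by
  refine (HG G).mem_edgeSet.2 ?_
  simp [SimpleGraph.boxProd_adj]

lemma copyE_edge {i : Fin 2} {e : Sym2 V} (he : copyE i e ∈ (HG G).edgeSet) :
    e ∈ G.edgeSet := by
  induction e using Sym2.ind with
  | _ u v =>
    rw [copyE_mk] at he
    have := (HG G).mem_edgeSet.1 he
    simp only [SimpleGraph.boxProd_adj, SimpleGraph.top_adj, ne_eq, not_true_eq_false,
      false_and, and_false, or_false, and_true] at this
    exact G.mem_edgeSet.2 this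

/-- classification of edges of the product -/
lemma edge_classify {eb : Sym2 (V × Fin 2)} (h : eb ∈ (HG G).edgeSet) :
    (∃ i e, e ∈ G.edgeSet ∧ eb = copyE i e) ∨ (∃ v, eb = matchE v) := by
  induction eb using Sym2.ind with
  | _ x y =>
    obtain ⟨u, i⟩ := x; obtain ⟨v, j⟩ := y
    have := (HG G).mem_edgeSet.1 h
    rw [SimpleGraph.boxProd_adj] at this
    rcases this with ⟨hadj, hij⟩ | ⟨hij, huv⟩
    · left
      refine ⟨i, s(u, v), G.mem_edgeSet.2 hadj, ?_⟩
      simp only at hij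
      rw [copyE_mk, hij]
    · right
      simp only [SimpleGraph.top_adj] at hij
      simp only at huv
      refine ⟨u, ?_⟩
      subst huv
      unfold matchE
      fin_cases i <;> fin_cases j <;> simp_all (config := {decide := true}) <;>
        first
          | rfl
          | exact Sym2.eq_swap

/-! ### assembling a coloring of the product -/

open Classical in
noncomputable def buildH (D : Fin 2 → Sym2 V → ℕ) (M : V → ℕ) : Sym2 (V × Fin 2) → ℕ :=
  Sym2.lift ⟨fun a b =>
    if a.2 = b.2 then D a.2 s(a.1, b.1) else if a.1 = b.1 then M a.1 else 0, by
    intro a b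
    by_cases h : a.2 = b.2
    · simp [h, Sym2.eq_swap]
    · have h' : ¬ b.2 = a.2 := fun hh => h hh.symm
      simp only [if_neg h, if_neg h']
      by_cases h2 : a.1 = b.1
      · simp only [h2, if_pos rfl]
      · have h2' : ¬ b.1 = a.1 := fun hh => h2 hh.symm
        simp only [if_neg h2, if_neg h2']⟩

lemma buildH_copyE (D : Fin 2 → Sym2 V → ℕ) (M : V → ℕ) (i : Fin 2) (e : Sym2 V) :
    buildH D M (copyE i e) = D i e := by
  induction e using Sym2.ind with
  | _ u v => rw [copyE_mk]; simp [buildH]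

lemma buildH_matchE (D : Fin 2 → Sym2 V → ℕ) (M : V → ℕ) (v : V) :
    buildH D M (matchE v) = M v := by
  unfold matchE buildH
  rw [Sym2.lift_mk]
  simp

lemma assembly {G : SimpleGraph V} (φ : Sym2 (V × Fin 2) → Option ℕ) (t : ℕ)
    (hφedge : ∀ e, φ e ≠ none → e ∈ (HG G).edgeSet)
    (D : Fin 2 → Sym2 V → ℕ) (M : V → ℕ)
    (hDp : ∀ i, IsProperEdgeColoring G (D i))
    (hDb : ∀ i, ColorsBelow G (D i) (t + 1))
    (hMb : ∀ v, M v < t + 1)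
    (hMD : ∀ (i : Fin 2) (v x : V), G.Adj v x → D i s(v, x) ≠ M v)
    (hDφ : ∀ i e a, e ∈ G.edgeSet → φ (copyE i e) = some a → D i e = a)
    (hMφ : ∀ v a, φ (matchE v) = some a → M v = a) :
    Extendable (HG G) φ (t + 1) := by
  classical
  refine ⟨buildH D M, ?_, ?_, ?_⟩
  · -- proper
    rintro eb fb ⟨heb, hfb, hne, ⟨x, j⟩, hv1, hv2⟩
    rcases edge_classify heb with ⟨i, e, he, rfl⟩ | ⟨v, rfl⟩ <;>
      rcases edge_classify hfb with ⟨i', f, hf, rfl⟩ | ⟨v', rfl⟩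
    · -- copy/copy
      obtain ⟨rfl, hxe⟩ := mem_copyE.1 hv1
      obtain ⟨hii, hxf⟩ := mem_copyE.1 hv2
      subst hii
      rw [buildH_copyE, buildH_copyE]
      exact hDp _ ⟨he, hf, fun hef => hne (by rw [hef]), x, hxe, hxf⟩
    · -- copy/match
      obtain ⟨rfl, hxe⟩ := mem_copyE.1 hv1
      have hxv : x = v' := mem_matchE.1 hv2
      subst hxv
      obtain ⟨y, rfl⟩ := mem_exists_other hxe
      rw [buildH_copyE, buildH_matchE]
      exact hMD j x y (G.mem_edgeSet.1 he)
    · -- match/copy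
      obtain ⟨rfl, hxf⟩ := mem_copyE.1 hv2
      have hxv : x = v := mem_matchE.1 hv1
      subst hxv
      obtain ⟨y, rfl⟩ := mem_exists_other hxf
      rw [buildH_copyE, buildH_matchE]
      exact (hMD j x y (G.mem_edgeSet.1 hf)).symm
    · -- match/match
      have h1 : x = v := mem_matchE.1 hv1
      have h2 : x = v' := mem_matchE.1 hv2
      exact absurd (by rw [← h1, ← h2]) hne
  · -- colors below
    intro eb heb
    rcases edge_classify heb with ⟨i, e, he, rfl⟩ | ⟨v, rfl⟩
    · rw [buildH_copyE]; exact hDb i e he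
    · rw [buildH_matchE]; exact hMb v
  · -- extends
    intro eb a hea
    have heb : eb ∈ (HG G).edgeSet := hφedge eb (by rw [hea]; exact Option.some_ne_none a)
    rcases edge_classify heb with ⟨i, e, he, rfl⟩ | ⟨v, rfl⟩
    · rw [buildH_copyE]; exact hDφ i e a he hea
    · rw [buildH_matchE]; exact hMφ v a hea

/-! ### Kempe swaps -/

open Classical in
noncomputable def kempeSwap (G : SimpleGraph V) (D : Sym2 V → ℕ) (a b : ℕ) (R : Set V) :
    Sym2 V → ℕ := fun e =>
  if e ∈ G.edgeSet ∧ (D e = a ∨ D e = b) ∧ (∃ v ∈ e, v ∈ R) then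
    (if D e = a then b else a) else D e

section Kempe

variable {G : SimpleGraph V} {D : Sym2 V → ℕ} {a b : ℕ} {R : Set V}

/-- closedness of `R` propagates to both endpoints -/
lemma kempe_closed (hR : ∀ x y, x ∈ R → G.Adj x y → (D s(x, y) = a ∨ D s(x, y) = b) → y ∈ R)
    {e : Sym2 V} (he : e ∈ G.edgeSet) (hcol : D e = a ∨ D e = b)
    (hv : ∃ v ∈ e, v ∈ R) : ∀ u ∈ e, u ∈ R := by
  induction e using Sym2.ind with
  | _ x y =>
    obtain ⟨v, hv1, hv2⟩ := hv
    have hadj : G.Adj x y := G.mem_edgeSet.1 he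
    intro u hu
    rw [Sym2.mem_iff] at hv1 hu
    have hyx : s(y, x) = s(x, y) := Sym2.eq_swap
    rcases hv1 with h1 | h1 <;> rcases hu with h2 | h2 <;> subst_vars
    · exact hv2
    · exact hR _ _ hv2 hadj hcol
    · exact hR _ _ hv2 hadj.symm (by rwa [Sym2.eq_swap])
    · exact hv2

lemma kempeSwap_eq_of_ne {e : Sym2 V} (h1 : D e ≠ a) (h2 : D e ≠ b) :
    kempeSwap G D a b R e = D e := by
  unfold kempeSwap
  rw [if_neg]
  rintro ⟨-, h, -⟩
  rcases h with h | h
  exacts [h1 h, h2 h]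

lemma kempeSwap_cases (e : Sym2 V) :
    kempeSwap G D a b R e = D e ∨
      (kempeSwap G D a b R e = b ∧ D e = a) ∨ (kempeSwap G D a b R e = a ∧ D e = b) := by
  unfold kempeSwap
  split
  · rename_i h
    by_cases h2 : D e = a
    · right; left; rw [if_pos h2]; exact ⟨rfl, h2⟩
    · right; right
      have h1 : D e = b := h.2.1.resolve_left h2
      rw [if_neg h2]; exact ⟨rfl, h1⟩
  · left; rfl

lemma kempeSwap_proper (hD : IsProperEdgeColoring G D) (hab : a ≠ b)
    (hR : ∀ x y, x ∈ R → G.Adj x y → (D s(x, y) = a ∨ D s(x, y) = b) → y ∈ R) :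
    IsProperEdgeColoring G (kempeSwap G D a b R) := by
  rintro e f ⟨he, hf, hnef, v, hve, hvf⟩
  have hne : D e ≠ D f := hD ⟨he, hf, hnef, v, hve, hvf⟩
  unfold kempeSwap
  by_cases ce : e ∈ G.edgeSet ∧ (D e = a ∨ D e = b) ∧ (∃ w ∈ e, w ∈ R) <;>
    by_cases cf : f ∈ G.edgeSet ∧ (D f = a ∨ D f = b) ∧ (∃ w ∈ f, w ∈ R)
  · rw [if_pos ce, if_pos cf]
    rcases ce.2.1 with h1 | h1 <;> rcases cf.2.1 with h2 | h2
    · exact absurd (h1.trans h2.symm) hne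
    · rw [if_pos h1, if_neg (fun hh : D f = a => hab (hh ▸ h2))]
      exact hab.symm
    · rw [if_neg (fun hh : D e = a => hab (hh ▸ h1)), if_pos h2]
      exact hab
    · exact absurd (h1.trans h2.symm) hne
  · rw [if_pos ce, if_neg cf]
    have hvR : v ∈ R := kempe_closed hR he ce.2.1 ce.2.2 v hve
    have hfn : ¬(D f = a ∨ D f = b) := fun hcol => cf ⟨hf, hcol, v, hvf, hvR⟩
    push_neg at hfn
    by_cases h2 : D e = a
    · rw [if_pos h2]; exact fun hh => hfn.2 hh.symm
    · rw [if_neg h2]; exact fun hh => hfn.1 hh.symm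
  · rw [if_neg ce, if_pos cf]
    have hvR : v ∈ R := kempe_closed hR hf cf.2.1 cf.2.2 v hvf
    have hen : ¬(D e = a ∨ D e = b) := fun hcol => ce ⟨he, hcol, v, hve, hvR⟩
    push_neg at hen
    by_cases h2 : D f = a
    · rw [if_pos h2]; exact hen.2
    · rw [if_neg h2]; exact hen.1
  · rw [if_neg ce, if_neg cf]; exact hne

/-- at a vertex of `R` with no `b`-edge, after the swap there is no `a`-edge -/
lemma kempeSwap_missing (hτR : ∀ f, f ∈ G.edgeSet → (D f = a ∨ D f = b) → ∀ τ' ∈ f, τ' ∈ R → True) -- dummy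
    : True := trivial

lemma kempeSwap_target (hab : a ≠ b) {τ : V} (hτ : τ ∈ R)
    (hnb : ∀ f, f ∈ G.edgeSet → τ ∈ f → D f ≠ b) :
    ∀ f, f ∈ G.edgeSet → τ ∈ f → kempeSwap G D a b R f ≠ a := by
  intro f hf hτf
  unfold kempeSwap
  split
  · rename_i h
    rcases h.2.1 with h1 | h1
    · rw [if_pos h1]
      exact fun hh => hab hh.symm
    · exact absurd h1 (hnb f hf hτf)
  · rename_i h
    intro hh
    exact h ⟨hf, Or.inl hh, τ, hτf, hτ⟩

end Kempe

/-! ### choosing the pendant edges via Hall's theorem -/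

lemma no_triangle {G : SimpleGraph V} (htf : G.CliqueFree 3) {x u v : V}
    (h1 : G.Adj x u) (h2 : G.Adj x v) (h3 : G.Adj u v) : False := by
  classical
  exact htf {x, u, v} (SimpleGraph.is3Clique_triple_iff.2 ⟨h1, h2, h3⟩)

lemma adj_of_mem_mem {G : SimpleGraph V} {e : Sym2 V} (he : e ∈ G.edgeSet) :
    ∀ {v v' : V}, v ∈ e → v' ∈ e → v ≠ v' → G.Adj v v' := by
  induction e using Sym2.ind with
  | _ p q =>
    intro v v' h1 h2 hne
    rw [Sym2.mem_iff] at h1 h2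
    have := G.mem_edgeSet.1 he
    rcases h1 with rfl | rfl <;> rcases h2 with rfl | rfl
    · exact absurd rfl hne
    · exact this
    · exact this.symm
    · exact absurd rfl hne

lemma exists_w [Fintype V] (G : SimpleGraph V) [DecidableRel G.Adj]
    (htf : G.CliqueFree 3) {Δ : ℕ} (hreg : G.IsRegularOfDegree Δ)
    (U : Finset V) (EP : Finset (Sym2 V)) (hEP : ∀ e ∈ EP, e ∈ G.edgeSet)
    (hcard : U.card + EP.card ≤ Δ) :
    ∃ w : V → V, Set.InjOn w ↑U ∧
      ∀ j ∈ U, G.Adj j (w j) ∧ w j ∉ U ∧ ∀ e ∈ EP, w j ∉ e := by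
  classical
  set F : Finset V := Finset.univ.filter (fun v => ∃ e ∈ EP, v ∈ e) with hF
  set X : Finset V := U ∪ F with hX
  -- each neighborhood meets the precolored-endpoint set in at most `EP.card` vertices
  have subA : ∀ x : V, (F ∩ G.neighborFinset x).card ≤ EP.card := by
    intro x
    have : ∀ v ∈ F ∩ G.neighborFinset x, ∃ e ∈ EP, v ∈ e := by
      intro v hv
      have := Finset.mem_filter.1 (Finset.mem_inter.1 hv).1
      exact this.2
    choose g hg1 hg2 using this
    apply Finset.card_le_card_of_injOn (fun v => if h : v ∈ F ∩ G.neighborFinset x then g v h else s(x, x))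
    · intro v hv
      rw [Finset.mem_coe] at hv
      show (if h : v ∈ F ∩ G.neighborFinset x then g v h else s(x, x)) ∈ EP
      rw [dif_pos hv]
      exact hg1 v hv
    · intro v hv v' hv' hvv'
      rw [Finset.mem_coe] at hv hv'
      simp only [dif_pos hv, dif_pos hv'] at hvv'
      by_contra hne
      -- v ≠ v' both in the same edge e and both adjacent to x : triangle
      have hv2 : v ∈ g v hv := hg2 v hv
      have hv'2 : v' ∈ g v hv := hvv' ▸ hg2 v' hv'
      have hedge : g v hv ∈ G.edgeSet := hEP _ (hg1 v hv)
      have hadj : G.Adj v v' := adj_of_mem_mem hedge hv2 hv'2 hne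
      have hx1 : G.Adj x v := (G.mem_neighborFinset _ _).1 (Finset.mem_inter.1 hv).2
      have hx2 : G.Adj x v' := (G.mem_neighborFinset _ _).1 (Finset.mem_inter.1 hv').2
      exact no_triangle htf hx1 hx2 hadj
  have subN : ∀ x : V, Δ ≤ (G.neighborFinset x \ X).card + (U ∩ G.neighborFinset x).card + EP.card := by
    intro x
    have h1 : (G.neighborFinset x \ X).card + (X ∩ G.neighborFinset x).card = Δ := by
      rw [Finset.inter_comm, Finset.card_sdiff_add_card_inter]
      rw [G.card_neighborFinset_eq_degree]
      exact hreg x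
    have h2 : (X ∩ G.neighborFinset x).card ≤ (U ∩ G.neighborFinset x).card + (F ∩ G.neighborFinset x).card := by
      rw [hX, Finset.union_inter_distrib_right]
      exact Finset.card_union_le _ _
    have := subA x
    omega
  -- Hall's condition
  have hall : ∀ s : Finset {v // v ∈ U},
      s.card ≤ (s.biUnion (fun j => G.neighborFinset ↑j \ X)).card := by
    intro s
    rcases Finset.eq_empty_or_nonempty s with rfl | ⟨j₁, hj₁⟩
    · rw [Finset.card_empty]; exact Nat.zero_le _
    by_cases hpair : ∃ a ∈ s, ∃ b ∈ s, G.Adj (↑a : V) ↑b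
    · obtain ⟨p, hp, q, hq, hpq⟩ := hpair
      have hNdisj : Disjoint (G.neighborFinset (↑p : V)) (G.neighborFinset (↑q : V)) := by
        rw [Finset.disjoint_left]
        intro z hz1 hz2
        exact no_triangle htf ((G.mem_neighborFinset _ _).1 hz1).symm
          ((G.mem_neighborFinset _ _).1 hz2).symm hpq
      have hsub : (G.neighborFinset (↑p : V) \ X) ∪ (G.neighborFinset (↑q : V) \ X) ⊆
          s.biUnion (fun j => G.neighborFinset ↑j \ X) := by
        intro z hz
        rcases Finset.mem_union.1 hz with h | h
        · exact Finset.mem_biUnion.2 ⟨p, hp, h⟩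
        · exact Finset.mem_biUnion.2 ⟨q, hq, h⟩
      have hdisj2 : Disjoint (G.neighborFinset (↑p : V) \ X) (G.neighborFinset (↑q : V) \ X) :=
        hNdisj.mono (Finset.sdiff_subset) (Finset.sdiff_subset)
      have hcardU : (U ∩ G.neighborFinset (↑p : V)).card + (U ∩ G.neighborFinset (↑q : V)).card ≤ U.card := by
        rw [← Finset.card_union_of_disjoint (hNdisj.mono Finset.inter_subset_right Finset.inter_subset_right)]
        exact Finset.card_le_card (Finset.union_subset Finset.inter_subset_left Finset.inter_subset_left)
      have hsc : s.card ≤ U.card := by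
        have := Finset.card_le_univ s
        rwa [Fintype.card_coe] at this
      have hNp := subN (↑p : V)
      have hNq := subN (↑q : V)
      have hbig := Finset.card_le_card hsub
      rw [Finset.card_union_of_disjoint hdisj2] at hbig
      omega
    · -- s is an independent set
      push_neg at hpair
      have hsub : G.neighborFinset (↑j₁ : V) \ X ⊆ s.biUnion (fun j => G.neighborFinset ↑j \ X) :=
        fun z hz => Finset.mem_biUnion.2 ⟨j₁, hj₁, hz⟩
      have himg : (s.image Subtype.val) ⊆ U \ (U ∩ G.neighborFinset (↑j₁ : V)) := by
        intro z hz
        obtain ⟨b, hb, rfl⟩ := Finset.mem_image.1 hz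
        refine Finset.mem_sdiff.2 ⟨b.2, fun hmem => ?_⟩
        exact hpair j₁ hj₁ b hb ((G.mem_neighborFinset _ _).1 (Finset.mem_inter.1 hmem).2)
      have himgcard : (s.image Subtype.val).card = s.card :=
        Finset.card_image_of_injective _ Subtype.coe_injective
      have h5 : s.card ≤ U.card - (U ∩ G.neighborFinset (↑j₁ : V)).card := by
        have := Finset.card_le_card himg
        rw [himgcard, Finset.card_sdiff_of_subset Finset.inter_subset_left] at this
        exact this
      have h6 : (U ∩ G.neighborFinset (↑j₁ : V)).card ≤ U.card :=
        Finset.card_le_card Finset.inter_subset_left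
      have hNj := subN (↑j₁ : V)
      have hbig := Finset.card_le_card hsub
      omega
  obtain ⟨f, hfinj, hf⟩ := (Finset.all_card_le_biUnion_card_iff_exists_injective
    (fun j : {v // v ∈ U} => G.neighborFinset ↑j \ X)).1 hall
  refine ⟨fun v => if h : v ∈ U then f ⟨v, h⟩ else v, ?_, ?_⟩
  · intro p hp q hq hpq
    have hp' : p ∈ U := hp
    have hq' : q ∈ U := hq
    simp only [dif_pos hp', dif_pos hq'] at hpq
    exact congrArg Subtype.val (hfinj hpq)
  · intro j hj
    simp only [dif_pos hj]
    have := hf ⟨j, hj⟩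
    rw [Finset.mem_sdiff] at this
    obtain ⟨hN, hXn⟩ := this
    refine ⟨(G.mem_neighborFinset _ _).1 hN, fun hU => hXn (Finset.mem_union_left _ hU), ?_⟩
    intro e he hmem
    exact hXn (Finset.mem_union_right _ (Finset.mem_filter.2 ⟨Finset.mem_univ _, e, he, hmem⟩))

/-! ### the pendant-edge recoloring layer -/

lemma caseA_D {G : SimpleGraph V} (t c : ℕ) (hct : c ≤ t)
    (C : Sym2 V → ℕ) (hC : IsProperEdgeColoring G C) (hCb : ColorsBelow G C t)
    (U : Finset V) (γ : V → ℕ) (w : V → V)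
    (hwAdj : ∀ j ∈ U, G.Adj j (w j))
    (hwU : ∀ j ∈ U, w j ∉ U)
    (hwinj : Set.InjOn w ↑U)
    (hCf : ∀ j ∈ U, C s(j, w j) = siginv c (γ j))
    (hγc : ∀ j ∈ U, γ j ≠ c) :
    ∃ D : Sym2 V → ℕ, IsProperEdgeColoring G D ∧ ColorsBelow G D (t + 1) ∧
      (∀ e, (∀ j ∈ U, e ≠ s(j, w j)) → D e = sig c (C e)) ∧
      (∀ j ∈ U, ∀ x, G.Adj j x → D s(j, x) ≠ γ j) ∧
      (∀ j ∈ U, ∀ x, G.Adj (w j) x → D s(w j, x) ≠ γ j) ∧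
      (∀ v, v ∉ U → (∀ j ∈ U, v ≠ w j) → ∀ x, G.Adj v x → D s(v, x) ≠ c) ∧
      (∀ e, D e = c → ∃ j ∈ U, e = s(j, w j)) := by
  classical
  set S : Set (Sym2 V) := {e | ∃ j ∈ U, e = s(j, w j)} with hS
  -- pendant edges share no vertices
  have hSind : ∀ j ∈ U, ∀ j' ∈ U, ∀ v : V, v ∈ s(j, w j) → v ∈ s(j', w j') → j = j' := by
    intro j hj j' hj' v hv hv'
    rw [Sym2.mem_iff] at hv hv'
    rcases hv with rfl | rfl <;> rcases hv' with h | h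
    · exact h
    · exact absurd hj (h ▸ hwU j' hj')
    · exact absurd hj' (h.symm ▸ hwU j hj)
    · exact hwinj hj hj' h
  set D : Sym2 V → ℕ := fun e => if e ∈ S then c else sig c (C e) with hDdef0
  have hDdef : ∀ e, D e = if e ∈ S then c else sig c (C e) := fun e => rfl
  refine ⟨D, ?_, ?_, ?_, ?_, ?_, ?_, ?_⟩
  · -- proper
    rintro e f ⟨he, hf, hnef, v, hve, hvf⟩
    rw [hDdef, hDdef]
    by_cases he' : e ∈ S <;> by_cases hf' : f ∈ S
    · obtain ⟨j, hj, rfl⟩ := he'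
      obtain ⟨j', hj', rfl⟩ := hf'
      exact absurd (by rw [hSind j hj j' hj' v hve hvf]) hnef
    · rw [if_pos he', if_neg hf']
      exact fun hh => sig_ne_c hh.symm
    · rw [if_neg he', if_pos hf']
      exact fun hh => sig_ne_c hh
    · rw [if_neg he', if_neg hf']
      exact fun hh => hC ⟨he, hf, hnef, v, hve, hvf⟩ (sig_inj hh)
  · -- colors below
    intro e he
    rw [hDdef]
    by_cases he' : e ∈ S
    · rw [if_pos he']; omega
    · rw [if_neg he']; exact sig_lt hct (hCb e he)
  · -- agrees off pendant edges
    intro e hne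
    rw [hDdef]
    rw [if_neg (fun hmem => by obtain ⟨j, hj, rfl⟩ := hmem; exact hne j hj rfl)]
  · -- γ j is missing at j
    intro j hj x hadj
    rw [hDdef]
    by_cases hmem : s(j, x) ∈ S
    · rw [if_pos hmem]; exact fun hh => hγc j hj hh.symm
    · rw [if_neg hmem]
      intro hh
      have hx : C s(j, x) = C s(j, w j) := by
        rw [hCf j hj]
        have := sig_siginv (c := c) (hγc j hj)
        apply sig_inj
        rw [hh, this]
      have hne : s(j, x) ≠ s(j, w j) := fun hh' => hmem ⟨j, hj, hh'⟩
      exact hC ⟨G.mem_edgeSet.2 hadj, G.mem_edgeSet.2 (hwAdj j hj), hne,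
        j, Sym2.mem_mk_left _ _, Sym2.mem_mk_left _ _⟩ hx
  · -- γ j is missing at w j
    intro j hj x hadj
    rw [hDdef]
    by_cases hmem : s(w j, x) ∈ S
    · rw [if_pos hmem]; exact fun hh => hγc j hj hh.symm
    · rw [if_neg hmem]
      intro hh
      have hx : C s(w j, x) = C s(j, w j) := by
        rw [hCf j hj]
        apply sig_inj
        rw [hh, sig_siginv (hγc j hj)]
      have hne : s(w j, x) ≠ s(j, w j) := fun hh' => hmem ⟨j, hj, hh'⟩
      exact hC ⟨G.mem_edgeSet.2 hadj, G.mem_edgeSet.2 (hwAdj j hj), hne,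
        w j, Sym2.mem_mk_left _ _, Sym2.mem_mk_right _ _⟩ hx
  · -- c is missing away from pendant vertices
    intro v hvU hvW x hadj
    rw [hDdef]
    by_cases hmem : s(v, x) ∈ S
    · obtain ⟨j, hj, hh⟩ := hmem
      have : v ∈ s(j, w j) := hh ▸ Sym2.mem_mk_left v x
      rw [Sym2.mem_iff] at this
      rcases this with rfl | rfl
      · exact absurd hj hvU
      · exact absurd rfl (hvW j hj)
    · rw [if_neg hmem]; exact sig_ne_c
  · -- the only c-edges are pendant edges
    intro e he
    rw [hDdef] at he
    by_cases hmem : e ∈ S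
    · exact hmem
    · rw [if_neg hmem] at he; exact absurd he sig_ne_c

/-! ### the overflow case : drop a color class and fix it with Kempe swaps -/

lemma caseB_D {G : SimpleGraph V} (t c : ℕ) (hct : c ≤ t)
    (C : Sym2 V → ℕ) (hC : IsProperEdgeColoring G C) (hCb : ColorsBelow G C t)
    (U : Finset V) (γ : V → ℕ) (w : V → V)
    (hwAdj : ∀ j ∈ U, G.Adj j (w j))
    (hwU : ∀ j ∈ U, w j ∉ U)
    (hwinj : Set.InjOn w ↑U)
    (hγc : ∀ j ∈ U, γ j ≠ c)
    (E : Finset (Sym2 V)) (β : Sym2 V → ℕ)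
    (hEedge : ∀ e ∈ E, e ∈ G.edgeSet)
    (hEind : ∀ e ∈ E, ∀ f ∈ E, e ≠ f → ∀ v ∈ e, v ∉ f)
    (hUE : ∀ j ∈ U, ∀ e ∈ E, j ∉ e)
    (hwE : ∀ j ∈ U, ∀ e ∈ E, w j ∉ e)
    (hβc : ∀ e ∈ E, β e ≠ c)
    (bh : ℕ) (hbhc : bh ≠ c) (hbht : bh < t + 1)
    (hCE : ∀ e ∈ E, β e ≠ bh → C e = siginv c (β e))
    (hCf : ∀ j ∈ U, γ j ≠ bh → C s(j, w j) = siginv c (γ j)) :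
    ∃ D : Sym2 V → ℕ, IsProperEdgeColoring G D ∧ ColorsBelow G D (t + 1) ∧
      (∀ e ∈ E, D e = β e) ∧
      (∀ j ∈ U, ∀ x, G.Adj j x → D s(j, x) ≠ γ j) := by
  classical
  set U' : Finset V := U.filter (fun j => γ j ≠ bh) with hU'
  have hU'sub : U' ⊆ U := Finset.filter_subset _ _
  have hU'g : ∀ j ∈ U', γ j ≠ bh := fun j hj => (Finset.mem_filter.1 hj).2
  obtain ⟨D₀, hD₀p, hD₀b, hD₀off, hD₀γ, hD₀γw, hD₀c, hD₀conly⟩ :=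
    caseA_D t c hct C hC hCb U' γ w
      (fun j hj => hwAdj j (hU'sub hj))
      (fun j hj hmem => hwU j (hU'sub hj) (hU'sub hmem))
      (hwinj.mono (by intro x hx; exact hU'sub hx))
      (fun j hj => hCf j (hU'sub hj) (hU'g j hj))
      (fun j hj => hγc j (hU'sub hj))
  -- the target vertices : endpoints of dropped copy edges and dropped matching vertices
  set T : Set V := {v | (∃ e ∈ E, β e = bh ∧ v ∈ e) ∨ (v ∈ U ∧ γ v = bh)} with hT
  -- the (bh , c) subgraph
  set Sub : SimpleGraph V :=
    { Adj := fun x y => G.Adj x y ∧ (D₀ s(x, y) = bh ∨ D₀ s(x, y) = c),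
      symm := by
        constructor
        intro x y hxy
        refine ⟨hxy.1.symm, ?_⟩
        rw [Sym2.eq_swap]
        exact hxy.2,
      loopless := ⟨fun x h => G.irrefl h.1⟩ } with hSub
  set R : Set V := {x | ∃ τ ∈ T, Sub.Reachable τ x} with hR
  have hRclosed : ∀ x y, x ∈ R → G.Adj x y → (D₀ s(x, y) = bh ∨ D₀ s(x, y) = c) → y ∈ R := by
    rintro x y ⟨τ, hτ, hreach⟩ hadj hcol
    exact ⟨τ, hτ, hreach.trans (SimpleGraph.Adj.reachable ⟨hadj, hcol⟩)⟩
  have hTR : ∀ τ, τ ∈ T → τ ∈ R := fun τ hτ => ⟨τ, hτ, SimpleGraph.Reachable.refl τ⟩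
  -- target vertices see no c-edge in D₀
  have hTc : ∀ τ ∈ T, ∀ f, f ∈ G.edgeSet → τ ∈ f → D₀ f ≠ c := by
    intro τ hτ f hf hτf hcol
    obtain ⟨j, hj, rfl⟩ := hD₀conly f hcol
    rw [Sym2.mem_iff] at hτf
    rcases hτ with ⟨e, he, hbe, hτe⟩ | ⟨hτU, hγτ⟩
    · rcases hτf with rfl | rfl
      · exact hUE τ (hU'sub hj) e he hτe
      · exact hwE j (hU'sub hj) e he hτe
    · rcases hτf with rfl | rfl
      · exact hU'g τ hj hγτ
      · exact hwU j (hU'sub hj) hτU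
  set D₁ : Sym2 V → ℕ := kempeSwap G D₀ bh c R with hD₁
  have hD₁p : IsProperEdgeColoring G D₁ := kempeSwap_proper hD₀p hbhc hRclosed
  have htgt : ∀ τ ∈ T, ∀ f, f ∈ G.edgeSet → τ ∈ f → D₁ f ≠ bh :=
    fun τ hτ => kempeSwap_target hbhc (hTR τ hτ) (hTc τ hτ)
  -- final coloring : restore the dropped color class
  set D₂ : Sym2 V → ℕ := fun e => if e ∈ E ∧ β e = bh then bh else D₁ e with hD₂0
  have hD₂def : ∀ e, D₂ e = if e ∈ E ∧ β e = bh then bh else D₁ e := fun _ => rfl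
  have hD₁cases : ∀ e, D₁ e = D₀ e ∨ (D₁ e = c ∧ D₀ e = bh) ∨ (D₁ e = bh ∧ D₀ e = c) :=
    fun e => kempeSwap_cases (G := G) (D := D₀) (a := bh) (b := c) (R := R) e
  refine ⟨D₂, ?_, ?_, ?_, ?_⟩
  · -- proper
    rintro e f ⟨he, hf, hnef, v, hve, hvf⟩
    rw [hD₂def, hD₂def]
    by_cases ce : e ∈ E ∧ β e = bh <;> by_cases cf : f ∈ E ∧ β f = bh
    · exact absurd hvf (hEind e ce.1 f cf.1 hnef v hve)
    · rw [if_pos ce, if_neg cf]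
      have hvT : v ∈ T := Or.inl ⟨e, ce.1, ce.2, hve⟩
      exact fun hh => htgt v hvT f hf hvf hh.symm
    · rw [if_neg ce, if_pos cf]
      have hvT : v ∈ T := Or.inl ⟨f, cf.1, cf.2, hvf⟩
      exact htgt v hvT e he hve
    · rw [if_neg ce, if_neg cf]
      exact hD₁p ⟨he, hf, hnef, v, hve, hvf⟩
  · -- colors below
    intro e he
    rw [hD₂def]
    split
    · exact hbht
    · rcases hD₁cases e with h | ⟨h, -⟩ | ⟨h, -⟩
      · rw [h]; exact hD₀b e he
      · rw [h]; omega
      · rw [h]; exact hbht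
  · -- extends the copy precoloring
    intro e he
    rw [hD₂def]
    by_cases hbe : β e = bh
    · rw [if_pos ⟨he, hbe⟩, hbe]
    · rw [if_neg (fun hh => hbe hh.2)]
      have h0 : D₀ e = β e := by
        have : ∀ j ∈ U', e ≠ s(j, w j) := by
          intro j hj hh
          exact hUE j (hU'sub hj) e he (hh ▸ Sym2.mem_mk_left _ _)
        rw [hD₀off e this, hCE e he hbe, sig_siginv (hβc e he)]
      rw [hD₁, kempeSwap_eq_of_ne (h0 ▸ hbe) (h0 ▸ hβc e he), h0]
  · -- γ j missing at j
    intro j hj x hadj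
    rw [hD₂def]
    have hnotE : ¬(s(j, x) ∈ E ∧ β s(j, x) = bh) :=
      fun hh => hUE j hj s(j, x) hh.1 (Sym2.mem_mk_left _ _)
    rw [if_neg hnotE]
    by_cases hγj : γ j = bh
    · have hjT : j ∈ T := Or.inr ⟨hj, hγj⟩
      exact fun hh => htgt j hjT s(j, x) (G.mem_edgeSet.2 hadj) (Sym2.mem_mk_left _ _) (hγj ▸ hh)
    · intro hh
      rcases hD₁cases s(j, x) with h | ⟨h, -⟩ | ⟨h, -⟩
      · exact hD₀γ j (Finset.mem_filter.2 ⟨hj, hγj⟩) x hadj (h ▸ hh)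
      · rw [hh] at h; exact hγc j hj h
      · rw [hh] at h; exact hγj h

/-! ### building an extension of the auxiliary precoloring -/

lemma build_ext {G : SimpleGraph V} (t k c : ℕ) (hct : c ≤ t)
    (hx : ∀ ψ : Sym2 V → Option ℕ, IsPartialProperEdgeColoring G ψ → UsesColors ψ t →
      IndependentEdges (Precolored ψ) → (Precolored ψ).ncard ≤ k → Extendable G ψ t)
    (EK : Finset (Sym2 V)) (βk : Sym2 V → ℕ) (K : Finset V) (γ : V → ℕ) (w : V → V)
    (hEKedge : ∀ e ∈ EK, e ∈ G.edgeSet)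
    (hEKind : ∀ e ∈ EK, ∀ f ∈ EK, e ≠ f → ∀ v ∈ e, v ∉ f)
    (hKadj : ∀ j ∈ K, G.Adj j (w j))
    (hKwK : ∀ j ∈ K, w j ∉ K)
    (hwinj : Set.InjOn w ↑K)
    (hKE : ∀ j ∈ K, ∀ e ∈ EK, j ∉ e)
    (hwKE : ∀ j ∈ K, ∀ e ∈ EK, w j ∉ e)
    (hβ : ∀ e ∈ EK, βk e < t + 1 ∧ βk e ≠ c)
    (hγ : ∀ j ∈ K, γ j < t + 1 ∧ γ j ≠ c)
    (hcard : EK.card + K.card ≤ k) :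
    ∃ C, IsProperEdgeColoring G C ∧ ColorsBelow G C t ∧
      (∀ e ∈ EK, C e = siginv c (βk e)) ∧ (∀ j ∈ K, C s(j, w j) = siginv c (γ j)) := by
  classical
  set ψ : Sym2 V → Option ℕ := fun e =>
    if e ∈ EK then some (siginv c (βk e))
    else if hj : ∃ j, j ∈ K ∧ e = s(j, w j) then some (siginv c (γ hj.choose)) else none
    with hψ0
  have hψdef : ∀ e, ψ e =
      if e ∈ EK then some (siginv c (βk e))
      else if hj : ∃ j, j ∈ K ∧ e = s(j, w j) then some (siginv c (γ hj.choose)) else none :=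
    fun _ => rfl
  have hunique : ∀ j, j ∈ K → ∀ j', j' ∈ K → s(j, w j) = s(j', w j') → j' = j := by
    intro j hj j' hj' heq
    rw [Sym2.eq_iff] at heq
    rcases heq with ⟨h1, -⟩ | ⟨h1, h2⟩
    · exact h1.symm
    · exact absurd (h1 ▸ hj) (hKwK j' hj')
  have hpendnot : ∀ j ∈ K, s(j, w j) ∉ EK :=
    fun j hj hmem => hKE j hj _ hmem (Sym2.mem_mk_left _ _)
  have hpend : ∀ j ∈ K, ψ s(j, w j) = some (siginv c (γ j)) := by
    intro j hj
    rw [hψdef, if_neg (hpendnot j hj), dif_pos ⟨j, hj, rfl⟩]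
    have hspec := (⟨j, hj, rfl⟩ : ∃ j', j' ∈ K ∧ s(j, w j) = s(j', w j')).choose_spec
    rw [hunique j hj _ hspec.1 hspec.2]
  have hprec : Precolored ψ = ↑(EK ∪ K.image (fun j => s(j, w j))) := by
    ext e
    simp only [Precolored, Set.mem_setOf_eq, Finset.coe_union, Set.mem_union,
      Finset.mem_coe, Finset.mem_image]
    rw [hψdef]
    constructor
    · intro hne
      by_cases h1 : e ∈ EK
      · exact Or.inl h1
      · rw [if_neg h1] at hne
        by_cases h2 : ∃ j, j ∈ K ∧ e = s(j, w j)
        · obtain ⟨j, hj, rfl⟩ := h2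
          exact Or.inr ⟨j, hj, rfl⟩
        · rw [dif_neg h2] at hne; exact absurd rfl hne
    · intro h
      rcases h with h1 | ⟨j, hj, rfl⟩
      · rw [if_pos h1]; exact Option.some_ne_none _
      · rw [if_neg (hpendnot j hj), dif_pos ⟨j, hj, rfl⟩]; exact Option.some_ne_none _
  have hindep : IndependentEdges (Precolored ψ) := by
    rw [hprec]
    intro e he f hf hne v hv hvf
    simp only [Finset.coe_union, Set.mem_union, Finset.mem_coe, Finset.mem_image] at he hf
    rcases he with he | ⟨j, hj, rfl⟩ <;> rcases hf with hf | ⟨j', hj', rfl⟩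
    · exact hEKind e he f hf hne v hv hvf
    · rw [Sym2.mem_iff] at hvf
      rcases hvf with rfl | rfl
      · exact hKE v hj' e he hv
      · exact hwKE j' hj' e he hv
    · rw [Sym2.mem_iff] at hv
      rcases hv with rfl | rfl
      · exact hKE v hj f hf hvf
      · exact hwKE j hj f hf hvf
    · -- two pendant edges sharing a vertex must be equal
      rw [Sym2.mem_iff] at hv hvf
      have : j = j' := by
        rcases hv with rfl | rfl <;> rcases hvf with h | h
        · exact h
        · exact absurd (h ▸ hj) (hKwK j' hj')
        · exact absurd (h.symm ▸ hj') (hKwK j hj)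
        · exact hwinj hj hj' h
      exact hne (by rw [this])
  have hpart : IsPartialProperEdgeColoring G ψ := by
    refine partialProper_of_indep ?_ hindep
    intro e hne
    rw [hψdef] at hne
    by_cases h1 : e ∈ EK
    · exact hEKedge e h1
    · rw [if_neg h1] at hne
      by_cases h2 : ∃ j, j ∈ K ∧ e = s(j, w j)
      · obtain ⟨j, hj, rfl⟩ := h2
        exact G.mem_edgeSet.2 (hKadj j hj)
      · rw [dif_neg h2] at hne; exact absurd rfl hne
  have huses : UsesColors ψ t := by
    intro e a ha
    rw [hψdef] at ha
    by_cases h1 : e ∈ EK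
    · rw [if_pos h1] at ha
      obtain ⟨hb1, hb2⟩ := hβ e h1
      have := Option.some_injective _ ha
      rw [← this]
      exact siginv_lt hct hb1 hb2
    · rw [if_neg h1] at ha
      by_cases h2 : ∃ j, j ∈ K ∧ e = s(j, w j)
      · rw [dif_pos h2] at ha
        obtain ⟨hg1, hg2⟩ := hγ h2.choose h2.choose_spec.1
        have := Option.some_injective _ ha
        rw [← this]
        exact siginv_lt hct hg1 hg2
      · rw [dif_neg h2] at ha; exact absurd ha (by simp)
  have hcard' : (Precolored ψ).ncard ≤ k := by
    rw [hprec, Set.ncard_coe_finset]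
    calc (EK ∪ K.image (fun j => s(j, w j))).card
        ≤ EK.card + (K.image (fun j => s(j, w j))).card := Finset.card_union_le _ _
      _ ≤ EK.card + K.card := by
          have := Finset.card_image_le (s := K) (f := fun j => s(j, w j))
          omega
      _ ≤ k := hcard
  obtain ⟨C, hCp, hCb, hCe⟩ := hx ψ hpart huses hindep hcard'
  refine ⟨C, hCp, hCb, ?_, ?_⟩
  · intro e he
    exact hCe e _ (by rw [hψdef, if_pos he])
  · intro j hj
    exact hCe _ _ (hpend j hj)

/-! ### helpers for the main theorem -/

lemma sym2_nonempty (e : Sym2 V) : ∃ x, x ∈ e := by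
  induction e using Sym2.ind with
  | _ a b => exact ⟨a, Sym2.mem_mk_left _ _⟩

lemma fin2_cases (i : Fin 2) : i = 0 ∨ i = 1 := by omega

end Product

theorem stmt14 [Fintype V] (G : SimpleGraph V) [DecidableRel G.Adj]
    (hreg : G.IsRegularOfDegree G.maxDegree) (htf : G.CliqueFree 3)
    (k : ℕ) (hk : k < G.maxDegree)
    (hext : ∀ φ : Sym2 V → Option ℕ, IsPartialProperEdgeColoring G φ →
      UsesColors φ (chromaticIndex G) → IndependentEdges (Precolored φ) →
      (Precolored φ).ncard ≤ k → Extendable G φ (chromaticIndex G)) :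
    ∀ φ : Sym2 (V × Fin 2) → Option ℕ,
      IsPartialProperEdgeColoring (G.boxProd (⊤ : SimpleGraph (Fin 2))) φ →
      UsesColors φ (chromaticIndex G + 1) → IndependentEdges (Precolored φ) →
      (Precolored φ).ncard ≤ k + 1 →
      Extendable (G.boxProd (⊤ : SimpleGraph (Fin 2))) φ (chromaticIndex G + 1) := by
  classical
  intro φ hφ huse hind hcard
  set t := chromaticIndex G with ht
  set Δ := G.maxDegree with hΔd
  -- a base proper coloring with t colors
  obtain ⟨C₀, hC₀p, hC₀b, -⟩ :=
    hext (fun _ => none) ⟨fun e h => absurd rfl h, fun e f _ h => absurd rfl h⟩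
      (fun e a h => absurd h (by simp)) (fun e he => absurd rfl he)
      (by
        have : Precolored (fun _ : Sym2 V => none) = ∅ :=
          Set.eq_empty_iff_forall_notMem.2 (fun e he => he rfl)
        rw [this, Set.ncard_empty]
        exact Nat.zero_le k)
  have hΔpos : 0 < Δ := lt_of_le_of_lt (Nat.zero_le k) hk
  have hVne : Nonempty V := by
    by_contra hV
    rw [not_nonempty_iff] at hV
    have : Δ = 0 := by
      rw [hΔd]
      unfold SimpleGraph.maxDegree
      simp
    omega
  -- the maximum degree is at most the chromatic index
  have hΔt : Δ ≤ t := by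
    obtain ⟨v₀⟩ := hVne
    have hinj : Set.InjOn (fun x => C₀ s(v₀, x)) ↑(G.neighborFinset v₀) := by
      intro x hx y hy hxy
      by_contra hne
      have hadjx : G.Adj v₀ x := (G.mem_neighborFinset _ _).1 hx
      have hadjy : G.Adj v₀ y := (G.mem_neighborFinset _ _).1 hy
      have hedne : s(v₀, x) ≠ s(v₀, y) := by
        intro h
        rw [Sym2.eq_iff] at h
        rcases h with ⟨-, h⟩ | ⟨h1, -⟩
        · exact hne h
        · exact G.irrefl (h1 ▸ hadjy)
      exact hC₀p ⟨G.mem_edgeSet.2 hadjx, G.mem_edgeSet.2 hadjy, hedne,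
        v₀, Sym2.mem_mk_left _ _, Sym2.mem_mk_left _ _⟩ hxy
    have himg : (G.neighborFinset v₀).image (fun x => C₀ s(v₀, x)) ⊆ Finset.range t := by
      intro a ha
      obtain ⟨x, hx, rfl⟩ := Finset.mem_image.1 ha
      exact Finset.mem_range.2 (hC₀b _ (G.mem_edgeSet.2 ((G.mem_neighborFinset _ _).1 hx)))
    calc Δ = G.degree v₀ := (hreg v₀).symm
      _ = (G.neighborFinset v₀).card := (G.card_neighborFinset_eq_degree v₀).symm
      _ = ((G.neighborFinset v₀).image (fun x => C₀ s(v₀, x))).card :=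
          (Finset.card_image_of_injOn hinj).symm
      _ ≤ (Finset.range t).card := Finset.card_le_card himg
      _ = t := Finset.card_range t
  -- classification of the precolored edges
  set Uset : Finset V := Finset.univ.filter (fun v => φ (matchE v) ≠ none) with hUd
  set γ : V → ℕ := fun v => (φ (matchE v)).getD 0 with hγd
  have hγval : ∀ v, γ v = (φ (matchE v)).getD 0 := fun _ => rfl
  set EE : Fin 2 → Finset (Sym2 V) :=
    fun i => Finset.univ.filter (fun e => e ∈ G.edgeSet ∧ φ (copyE i e) ≠ none) with hEd
  set β : Fin 2 → Sym2 V → ℕ := fun i e => (φ (copyE i e)).getD 0 with hβd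
  have hβval : ∀ i e, β i e = (φ (copyE i e)).getD 0 := fun _ _ => rfl
  have hUmem : ∀ v, v ∈ Uset ↔ φ (matchE v) ≠ none := by
    intro v
    rw [hUd, Finset.mem_filter]
    exact ⟨fun h => h.2, fun h => ⟨Finset.mem_univ _, h⟩⟩
  have hEmem : ∀ i e, e ∈ EE i ↔ e ∈ G.edgeSet ∧ φ (copyE i e) ≠ none := by
    intro i e
    rw [hEd, Finset.mem_filter]
    exact ⟨fun h => h.2, fun h => ⟨Finset.mem_univ _, h⟩⟩
  have hEEedge : ∀ i, ∀ e ∈ EE i, e ∈ G.edgeSet := fun i e he => ((hEmem i e).1 he).1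
  have hUγ : ∀ v ∈ Uset, φ (matchE v) = some (γ v) := by
    intro v hv
    obtain ⟨a, ha⟩ := Option.ne_none_iff_exists'.1 ((hUmem v).1 hv)
    rw [ha, hγval, ha, Option.getD_some]
  have hEβ : ∀ i, ∀ e ∈ EE i, φ (copyE i e) = some (β i e) := by
    intro i e he
    obtain ⟨a, ha⟩ := Option.ne_none_iff_exists'.1 ((hEmem i e).1 he).2
    rw [ha, hβval, ha, Option.getD_some]
  have hγt : ∀ v ∈ Uset, γ v < t + 1 := fun v hv => huse _ _ (hUγ v hv)
  have hβt : ∀ i, ∀ e ∈ EE i, β i e < t + 1 := fun i e he => huse _ _ (hEβ i e he)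
  -- independence consequences
  have hmatch_ne_copy : ∀ (v : V) (i : Fin 2) (e : Sym2 V), matchE v ≠ copyE i e := by
    intro v i e heq
    have h0 : (v, (0 : Fin 2)) ∈ matchE v := mem_matchE.2 rfl
    have h1 : (v, (1 : Fin 2)) ∈ matchE v := mem_matchE.2 rfl
    rw [heq] at h0 h1
    have := (mem_copyE.1 h0).1
    have := (mem_copyE.1 h1).1
    omega
  have hIUE : ∀ v ∈ Uset, ∀ (i : Fin 2), ∀ e ∈ EE i, v ∉ e := by
    intro v hv i e he hve
    exact hind (matchE v) ((hUmem v).1 hv) (copyE i e) ((hEmem i e).1 he).2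
      (hmatch_ne_copy v i e) (v, i) (mem_matchE.2 rfl) (mem_copyE.2 ⟨rfl, hve⟩)
  have hIEE : ∀ (i : Fin 2), ∀ e ∈ EE i, ∀ f ∈ EE i, e ≠ f → ∀ v ∈ e, v ∉ f := by
    intro i e he f hf hne v hv hvf
    exact hind (copyE i e) ((hEmem i e).1 he).2 (copyE i f) ((hEmem i f).1 hf).2
      (fun h => hne (copyE_inj h)) (v, i) (mem_copyE.2 ⟨rfl, hv⟩) (mem_copyE.2 ⟨rfl, hvf⟩)
  -- counting
  set P : Finset (Sym2 (V × Fin 2)) := Finset.univ.filter (fun e => φ e ≠ none) with hPd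
  have hPmem : ∀ e, e ∈ P ↔ φ e ≠ none := by
    intro e
    rw [hPd, Finset.mem_filter]
    exact ⟨fun h => h.2, fun h => ⟨Finset.mem_univ _, h⟩⟩
  have hPcard : P.card ≤ k + 1 := by
    have : Precolored φ = ↑P := by
      ext e
      simp only [Precolored, Set.mem_setOf_eq, Finset.mem_coe]
      exact (hPmem e).symm
    rwa [this, Set.ncard_coe_finset] at hcard
  have hm : Uset.card + (EE 0).card + (EE 1).card ≤ k + 1 := by
    have hAc : (Uset.image matchE).card = Uset.card :=
      Finset.card_image_of_injOn (fun a _ b _ h => matchE_inj h)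
    have hBc : ∀ i : Fin 2, ((EE i).image (copyE i)).card = (EE i).card :=
      fun i => Finset.card_image_of_injOn (fun a _ b _ h => copyE_inj h)
    have hdisj2 : Disjoint ((EE 0).image (copyE 0)) ((EE 1).image (copyE 1)) := by
      rw [Finset.disjoint_left]
      intro x hx hx'
      obtain ⟨e, he, rfl⟩ := Finset.mem_image.1 hx
      obtain ⟨f, hf, heq⟩ := Finset.mem_image.1 hx'
      obtain ⟨y, hy⟩ := sym2_nonempty f
      have hy1 : (y, (1 : Fin 2)) ∈ copyE 1 f := mem_copyE.2 ⟨rfl, hy⟩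
      rw [heq] at hy1
      exact absurd (mem_copyE.1 hy1).1 (by decide)
    have hdisj1 : Disjoint (Uset.image matchE)
        (((EE 0).image (copyE 0)) ∪ ((EE 1).image (copyE 1))) := by
      rw [Finset.disjoint_left]
      intro x hx hx'
      obtain ⟨v, hv, rfl⟩ := Finset.mem_image.1 hx
      rcases Finset.mem_union.1 hx' with h | h <;>
        obtain ⟨e, he, heq⟩ := Finset.mem_image.1 h
      · exact hmatch_ne_copy v 0 e heq.symm
      · exact hmatch_ne_copy v 1 e heq.symm
    have hsub : (Uset.image matchE) ∪ (((EE 0).image (copyE 0)) ∪ ((EE 1).image (copyE 1))) ⊆ P := by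
      intro x hx
      rcases Finset.mem_union.1 hx with h | h
      · obtain ⟨v, hv, rfl⟩ := Finset.mem_image.1 h
        exact (hPmem _).2 ((hUmem v).1 hv)
      · rcases Finset.mem_union.1 h with h' | h' <;>
          obtain ⟨e, he, rfl⟩ := Finset.mem_image.1 h'
        · exact (hPmem _).2 ((hEmem 0 e).1 he).2
        · exact (hPmem _).2 ((hEmem 1 e).1 he).2
    have := Finset.card_le_card hsub
    rw [Finset.card_union_of_disjoint hdisj1, Finset.card_union_of_disjoint hdisj2,
      hAc, hBc 0, hBc 1] at this
    omega
  -- an unused color c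
  obtain ⟨c, hcr, hcu⟩ : ∃ c, c ∈ Finset.range (t + 1) ∧ c ∉ P.image (fun e => (φ e).getD 0) := by
    have husedsub : P.image (fun e => (φ e).getD 0) ⊆ Finset.range (t + 1) := by
      intro a ha
      obtain ⟨e, he, rfl⟩ := Finset.mem_image.1 ha
      obtain ⟨b, hb⟩ := Option.ne_none_iff_exists'.1 ((hPmem e).1 he)
      rw [hb, Option.getD_some]
      exact Finset.mem_range.2 (huse e b hb)
    have hucard : (P.image (fun e => (φ e).getD 0)).card < (Finset.range (t + 1)).card := by
      have h1 := Finset.card_image_le (s := P) (f := fun e => (φ e).getD 0)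
      rw [Finset.card_range]
      omega
    have hss : P.image (fun e => (φ e).getD 0) ⊂ Finset.range (t + 1) :=
      Finset.ssubset_iff_subset_ne.2 ⟨husedsub, by
        intro h; rw [h] at hucard; exact lt_irrefl _ hucard⟩
    obtain ⟨c, h1, h2⟩ := Finset.exists_of_ssubset hss
    exact ⟨c, h1, h2⟩
  have hctle : c ≤ t := by
    have := Finset.mem_range.1 hcr
    omega
  have hunused : ∀ e, φ e ≠ none → (φ e).getD 0 ≠ c :=
    fun e he hh => hcu (Finset.mem_image.2 ⟨e, (hPmem e).2 he, hh⟩)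
  have hγc : ∀ v ∈ Uset, γ v ≠ c := fun v hv => hunused (matchE v) ((hUmem v).1 hv)
  have hβc : ∀ i, ∀ e ∈ EE i, β i e ≠ c :=
    fun i e he => hunused (copyE i e) ((hEmem i e).1 he).2
  -- Hall's theorem gives the pendant edges
  set EP : Finset (Sym2 V) := EE 0 ∪ EE 1 with hEPd
  have hEPsub : ∀ i : Fin 2, ∀ e ∈ EE i, e ∈ EP := by
    intro i e he
    rcases fin2_cases i with rfl | rfl
    · exact Finset.mem_union_left _ he
    · exact Finset.mem_union_right _ he
  obtain ⟨w, hwinj, hwall⟩ := exists_w G htf hreg Uset EP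
    (fun e he => by
      rcases Finset.mem_union.1 he with h | h
      exacts [hEEedge 0 e h, hEEedge 1 e h])
    (by
      have := Finset.card_union_le (EE 0) (EE 1)
      rw [← hEPd] at this
      omega)
  have hwAdj : ∀ j ∈ Uset, G.Adj j (w j) := fun j hj => (hwall j hj).1
  have hwU : ∀ j ∈ Uset, w j ∉ Uset := fun j hj => (hwall j hj).2.1
  have hwEE : ∀ j ∈ Uset, ∀ (i : Fin 2), ∀ e ∈ EE i, w j ∉ e :=
    fun j hj i e he => (hwall j hj).2.2 e (hEPsub i e he)
  have hdegle : ∀ v, G.degree v ≤ t := fun v => (hreg v).le.trans hΔt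
  -- a uniform builder for one copy (case A)
  have mkD : ∀ i : Fin 2, (EE i).card + Uset.card ≤ k →
      ∃ D, IsProperEdgeColoring G D ∧ ColorsBelow G D (t + 1) ∧
        (∀ e ∈ EE i, D e = β i e) ∧
        (∀ j ∈ Uset, ∀ x, G.Adj j x → D s(j, x) ≠ γ j) ∧
        (∀ j ∈ Uset, ∀ x, G.Adj (w j) x → D s(w j, x) ≠ γ j) ∧
        (∀ v, v ∉ Uset → (∀ j ∈ Uset, v ≠ w j) → ∀ x, G.Adj v x → D s(v, x) ≠ c) := by
    intro i hki
    obtain ⟨C, hCp, hCb, hCE, hCf⟩ := build_ext t k c hctle hext (EE i) (β i) Uset γ w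
      (hEEedge i) (hIEE i) hwAdj hwU hwinj
      (fun j hj e he => hIUE j hj i e he)
      (fun j hj e he => hwEE j hj i e he)
      (fun e he => ⟨hβt i e he, hβc i e he⟩)
      (fun j hj => ⟨hγt j hj, hγc j hj⟩)
      (by omega)
    obtain ⟨D, hDp, hDb, hDoff, hDγ, hDγw, hDc, -⟩ :=
      caseA_D t c hctle C hCp hCb Uset γ w hwAdj hwU hwinj hCf hγc
    refine ⟨D, hDp, hDb, ?_, hDγ, hDγw, hDc⟩
    intro e he
    have hpend : ∀ j ∈ Uset, e ≠ s(j, w j) :=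
      fun j hj heq => hIUE j hj i e he (heq ▸ Sym2.mem_mk_left _ _)
    rw [hDoff e hpend, hCE e he, sig_siginv (hβc i e he)]
  -- the overflow case
  have caseBgen : ∀ i₀ i₁ : Fin 2, (∀ i : Fin 2, i = i₀ ∨ i = i₁) →
      Uset.card + (EE i₀).card + (EE i₁).card ≤ k + 1 →
      k + 1 ≤ (EE i₀).card + Uset.card →
      Extendable (G.boxProd (⊤ : SimpleGraph (Fin 2))) φ (t + 1) := by
    intro i₀ i₁ hcover hmB hover
    have hE1 : EE i₁ = ∅ := Finset.card_eq_zero.1 (by omega)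
    have go : ∀ bh : ℕ, bh ≠ c → bh < t + 1 →
        ((EE i₀).filter (fun e => β i₀ e ≠ bh)).card +
          (Uset.filter (fun j => γ j ≠ bh)).card ≤ k →
        Extendable (G.boxProd (⊤ : SimpleGraph (Fin 2))) φ (t + 1) := by
      intro bh hbhc hbht hkept
      obtain ⟨C, hCp, hCb, hCE, hCf⟩ := build_ext t k c hctle hext
        ((EE i₀).filter (fun e => β i₀ e ≠ bh)) (β i₀)
        (Uset.filter (fun j => γ j ≠ bh)) γ w
        (fun e he => hEEedge i₀ e (Finset.mem_filter.1 he).1)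
        (fun e he f hf => hIEE i₀ e (Finset.mem_filter.1 he).1 f (Finset.mem_filter.1 hf).1)
        (fun j hj => hwAdj j (Finset.mem_filter.1 hj).1)
        (fun j hj hmem => hwU j (Finset.mem_filter.1 hj).1 (Finset.filter_subset _ _ hmem))
        (hwinj.mono (by intro x hx; exact Finset.mem_coe.2 (Finset.filter_subset _ _ (Finset.mem_coe.1 hx))))
        (fun j hj e he => hIUE j (Finset.mem_filter.1 hj).1 i₀ e (Finset.mem_filter.1 he).1)
        (fun j hj e he => hwEE j (Finset.mem_filter.1 hj).1 i₀ e (Finset.mem_filter.1 he).1)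
        (fun e he => ⟨hβt i₀ e (Finset.mem_filter.1 he).1, hβc i₀ e (Finset.mem_filter.1 he).1⟩)
        (fun j hj => ⟨hγt j (Finset.mem_filter.1 hj).1, hγc j (Finset.mem_filter.1 hj).1⟩)
        hkept
      obtain ⟨D, hDp, hDb, hDE, hDγ⟩ := caseB_D t c hctle C hCp hCb Uset γ w
        hwAdj hwU hwinj hγc (EE i₀) (β i₀) (hEEedge i₀) (hIEE i₀)
        (fun j hj e he => hIUE j hj i₀ e he)
        (fun j hj e he => hwEE j hj i₀ e he)
        (hβc i₀) bh hbhc hbht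
        (fun e he hne => hCE e (Finset.mem_filter.2 ⟨he, hne⟩))
        (fun j hj hne => hCf j (Finset.mem_filter.2 ⟨hj, hne⟩))
      set M : V → ℕ := fun v => if v ∈ Uset then γ v
        else Classical.choose (exists_missing G hDp hDb hdegle v) with hMd
      have hMdef : ∀ v, M v = if v ∈ Uset then γ v
          else Classical.choose (exists_missing G hDp hDb hdegle v) := fun _ => rfl
      refine assembly φ t hφ.1 (fun _ => D) M (fun _ => hDp) (fun _ => hDb) ?_ ?_ ?_ ?_
      · intro v
        rw [hMdef]
        split
        · exact hγt v (by assumption)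
        · exact (Classical.choose_spec (exists_missing G hDp hDb hdegle v)).1
      · intro i v x hadj
        show D s(v, x) ≠ M v
        rw [hMdef]
        split
        · exact hDγ v (by assumption) x hadj
        · exact (Classical.choose_spec (exists_missing G hDp hDb hdegle v)).2 x hadj
      · intro i e a he ha
        have heE : e ∈ EE i := (hEmem i e).2 ⟨he, by rw [ha]; exact Option.some_ne_none _⟩
        have hba : β i e = a := by
          rw [hβval, ha, Option.getD_some]
        show D e = a
        rcases hcover i with rfl | rfl
        · rw [hDE e heE, hba]
        · rw [hE1] at heE
          exact absurd heE (Finset.notMem_empty e)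
      · intro v a ha
        have hvU : v ∈ Uset := (hUmem v).2 (by rw [ha]; exact Option.some_ne_none _)
        rw [hMdef, if_pos hvU, hγval, ha, Option.getD_some]
    -- choose the dropped color
    by_cases hUne : Uset.Nonempty
    · obtain ⟨v₁, hv₁⟩ := hUne
      refine go (γ v₁) (hγc v₁ hv₁) (hγt v₁ hv₁) ?_
      have h1 : (Uset.filter (fun j => γ j ≠ γ v₁)) ⊆ Uset.erase v₁ := by
        intro x hx
        obtain ⟨hx1, hx2⟩ := Finset.mem_filter.1 hx
        exact Finset.mem_erase.2 ⟨fun hh => hx2 (hh ▸ rfl), hx1⟩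
      have h2 := Finset.card_le_card h1
      rw [Finset.card_erase_of_mem hv₁] at h2
      have h3 := Finset.card_le_card (Finset.filter_subset (fun e => β i₀ e ≠ γ v₁) (EE i₀))
      have h4 : 1 ≤ Uset.card := Finset.card_pos.2 ⟨v₁, hv₁⟩
      omega
    · rw [Finset.not_nonempty_iff_eq_empty] at hUne
      have hU0 : Uset.card = 0 := by rw [hUne]; exact Finset.card_empty
      have hEne : (EE i₀).Nonempty := Finset.card_pos.1 (by omega)
      obtain ⟨e₁, he₁⟩ := hEne
      refine go (β i₀ e₁) (hβc i₀ e₁ he₁) (hβt i₀ e₁ he₁) ?_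
      have h1 : (EE i₀).filter (fun e => β i₀ e ≠ β i₀ e₁) ⊆ (EE i₀).erase e₁ := by
        intro x hx
        obtain ⟨hx1, hx2⟩ := Finset.mem_filter.1 hx
        exact Finset.mem_erase.2 ⟨fun hh => hx2 (hh ▸ rfl), hx1⟩
      have h2 := Finset.card_le_card h1
      rw [Finset.card_erase_of_mem he₁] at h2
      have h3 := Finset.card_le_card (Finset.filter_subset (fun j => γ j ≠ β i₀ e₁) Uset)
      have h4 : 1 ≤ (EE i₀).card := Finset.card_pos.2 ⟨e₁, he₁⟩
      omega
  -- main case split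
  by_cases hA0 : (EE 0).card + Uset.card ≤ k
  · by_cases hA1 : (EE 1).card + Uset.card ≤ k
    · -- case A : both copies have few constraints
      have hAc : ∀ i : Fin 2, (EE i).card + Uset.card ≤ k := by
        intro i
        rcases fin2_cases i with rfl | rfl
        exacts [hA0, hA1]
      choose Df hDfp hDfb hDfE hDfγ hDfγw hDfc using fun i => mkD i (hAc i)
      set M : V → ℕ := fun v => if v ∈ Uset then γ v
        else if h : ∃ j, j ∈ Uset ∧ v = w j then γ h.choose else c with hMd
      have hMdef : ∀ v, M v = if v ∈ Uset then γ v
          else if h : ∃ j, j ∈ Uset ∧ v = w j then γ h.choose else c := fun _ => rfl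
      refine assembly φ t hφ.1 Df M hDfp hDfb ?_ ?_ ?_ ?_
      · intro v
        rw [hMdef]
        split
        · exact hγt v (by assumption)
        · split
          · rename_i h
            exact hγt h.choose h.choose_spec.1
          · omega
      · intro i v x hadj
        rw [hMdef]
        split
        · exact hDfγ i v (by assumption) x hadj
        · rename_i hvU
          split
          · rename_i h
            generalize hgen : h.choose = j₀
            have hsp := h.choose_spec
            rw [hgen] at hsp
            obtain ⟨hj₀, hveq⟩ := hsp
            rw [hveq]
            exact hDfγw i j₀ hj₀ x (hveq ▸ hadj)
          · rename_i h
            push_neg at h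
            exact hDfc i v hvU (fun j hj heq => h j hj heq) x hadj
      · intro i e a he ha
        have heE : e ∈ EE i := (hEmem i e).2 ⟨he, by rw [ha]; exact Option.some_ne_none _⟩
        rw [hDfE i e heE, hβval, ha, Option.getD_some]
      · intro v a ha
        have hvU : v ∈ Uset := (hUmem v).2 (by rw [ha]; exact Option.some_ne_none _)
        rw [hMdef, if_pos hvU, hγval, ha, Option.getD_some]
    · -- overflow in copy 1
      exact caseBgen 1 0 (fun i => (fin2_cases i).symm) (by omega) (by omega)
  · -- overflow in copy 0
    exact caseBgen 0 1 fin2_cases (by omega) (by omega)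
end

section
/- Let n ≥ 2. If φ is a partial proper edge coloring of two edges of C_{2n} □ K_2, then φ can be extended to a proper 3-edge coloring of C_{2n} □ K_2. -/
open SimpleGraph

variable {V : Type*}

namespace Stmt16

open Fin.NatCast Fin.CommRing

variable {m : ℕ} [NeZero m]

abbrev Gm (m : ℕ) : SimpleGraph (Fin m × Fin 2) :=
  (cycleGraph m).boxProd (⊤ : SimpleGraph (Fin 2))

def rungE (i : Fin m) : Sym2 (Fin m × Fin 2) := s((i, (0 : Fin 2)), (i, (1 : Fin 2)))

def cycE (i : Fin m) (l : Fin 2) : Sym2 (Fin m × Fin 2) := s((i, l), (i + 1, l))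

lemma cast_ne_zero {k : ℕ} (h1 : 1 ≤ k) (h2 : k < m) : (k : Fin m) ≠ 0 := by
  intro h
  have : (k : Fin m).val = 0 := by rw [h]; rfl
  rw [Fin.val_natCast, Nat.mod_eq_of_lt h2] at this
  omega

lemma add_cast_ne (i : Fin m) {k : ℕ} (h1 : 1 ≤ k) (h2 : k < m) : i + (k : Fin m) ≠ i := by
  intro h
  have : (k : Fin m) = 0 := by
    have h' : (k : Fin m) + i = i := by rw [add_comm]; exact h
    exact add_eq_right.mp h' 
  exact cast_ne_zero h1 h2 this

lemma add_one_ne (hm : 2 ≤ m) (i : Fin m) : i + 1 ≠ i := by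
  have := add_cast_ne i (k := 1) le_rfl (by omega)
  simpa using this

lemma add_two_ne (hm : 3 ≤ m) (i : Fin m) : i + 1 + 1 ≠ i := by
  have := add_cast_ne i (k := 2) (by omega) (by omega)
  rw [show ((2:ℕ) : Fin m) = 1 + 1 by push_cast; ring, ← add_assoc] at this
  exact this

lemma add_three_ne (hm : 4 ≤ m) (i : Fin m) : i + 1 + 1 + 1 ≠ i := by
  have := add_cast_ne i (k := 3) (by omega) (by omega)
  rw [show ((3:ℕ) : Fin m) = 1 + 1 + 1 by push_cast; ring, ← add_assoc, ← add_assoc] at this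
  exact this

lemma pv_add (hm2 : 2 ∣ m) (i j : Fin m) : (i + j).val % 2 = (i.val + j.val) % 2 := by
  rw [Fin.val_add, Nat.mod_mod_of_dvd _ hm2]

lemma val_one_f (hm : 2 ≤ m) : (1 : Fin m).val = 1 := by
  rw [Fin.val_one', Nat.mod_eq_of_lt (by omega)]

lemma pv_add_one (hm : 2 ≤ m) (hm2 : 2 ∣ m) (i : Fin m) :
    (i + 1).val % 2 = (i.val + 1) % 2 := by
  rw [pv_add hm2, val_one_f hm]

/-- The coloring built from rung colors `r` and cycle-edge colors `g`. -/
def mkC (r : Fin m → ℕ) (g : Fin m → Fin 2 → ℕ) : Sym2 (Fin m × Fin 2) → ℕ :=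
  Sym2.lift ⟨fun u v =>
    if h3 : ¬ 3 ≤ m then 0 else
    if u.1 = v.1 then r u.1
    else if v.1 = u.1 + 1 ∧ u.2 = v.2 then g u.1 u.2
    else if u.1 = v.1 + 1 ∧ u.2 = v.2 then g v.1 v.2
    else 0, by
    intro u v
    simp only
    by_cases h3 : 3 ≤ m
    · rw [dif_neg (not_not_intro h3), dif_neg (not_not_intro h3)]
      have h2 : ¬ (v.1 = u.1 + 1 ∧ u.1 = v.1 + 1) := by
        rintro ⟨ha, hb⟩
        rw [hb] at ha
        exact add_two_ne h3 v.1 ha.symm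
      by_cases h1 : u.1 = v.1
      · rw [if_pos h1, if_pos h1.symm, h1]
      · rw [if_neg h1, if_neg (Ne.symm h1)]
        by_cases h4 : v.1 = u.1 + 1 ∧ u.2 = v.2
        · rw [if_pos h4, if_neg (fun h5 => h2 ⟨h4.1, h5.1⟩), if_pos ⟨h4.1, h4.2.symm⟩]
        · by_cases h6 : u.1 = v.1 + 1 ∧ u.2 = v.2
          · rw [if_neg h4, if_pos h6, if_pos ⟨h6.1, h6.2.symm⟩]
          · rw [if_neg h4, if_neg h6, if_neg (fun h => h6 ⟨h.1, h.2.symm⟩),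
              if_neg (fun h => h4 ⟨h.1, h.2.symm⟩)]
    · simp [h3]⟩

lemma mkC_rung (hm : 3 ≤ m) (r : Fin m → ℕ) (g : Fin m → Fin 2 → ℕ) (i : Fin m) :
    mkC r g (rungE i) = r i := by
  simp [mkC, rungE, hm]

lemma mkC_cyc (hm : 3 ≤ m) (r : Fin m → ℕ) (g : Fin m → Fin 2 → ℕ) (i : Fin m) (l : Fin 2) :
    mkC r g (cycE i l) = g i l := by
  have h1 : i ≠ i + 1 := fun h => add_one_ne (by omega) i h.symm
  simp [mkC, cycE, hm, h1]


lemma sub_val_one {i j : Fin m} (hm : 2 ≤ m) (h : (j - i).val = 1) : j = i + 1 := by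
  have : j - i = 1 := by
    apply Fin.ext
    rw [h, val_one_f hm]
  rw [← this]; ring

lemma rungE_mem_edgeSet (i : Fin m) : rungE i ∈ (Gm m).edgeSet := by
  rw [rungE, mem_edgeSet, boxProd_adj]
  right
  exact ⟨by simp, rfl⟩

lemma cycE_mem_edgeSet (hm : 2 ≤ m) (i : Fin m) (l : Fin 2) : cycE i l ∈ (Gm m).edgeSet := by
  rw [cycE, mem_edgeSet, boxProd_adj]
  left
  refine ⟨?_, rfl⟩
  rw [cycleGraph_adj']
  right
  rw [add_sub_cancel_left, val_one_f hm]


lemma edge_classify (hm : 2 ≤ m) {e : Sym2 (Fin m × Fin 2)} (he : e ∈ (Gm m).edgeSet) :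
    (∃ i, e = rungE i) ∨ (∃ i l, e = cycE i l) := by
  induction e using Sym2.ind with
  | _ u v =>
    obtain ⟨u1, u2⟩ := u
    obtain ⟨v1, v2⟩ := v
    rw [mem_edgeSet, boxProd_adj] at he
    rcases he with ⟨hadj, hl⟩ | ⟨hi, hl⟩

    · simp only at hadj hl
      subst hl
      right
      rw [cycleGraph_adj'] at hadj
      rcases hadj with h | h
      · exact ⟨v1, u2, by rw [cycE, ← sub_val_one hm h, Sym2.eq_swap]⟩
      · exact ⟨u1, u2, by rw [cycE, ← sub_val_one hm h]⟩
    · simp only at hi hl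
      subst hl
      left
      refine ⟨u1, ?_⟩
      have : u2 ≠ v2 := hi
      rw [rungE]
      fin_cases u2 <;> fin_cases v2 <;> simp_all [Sym2.eq_swap]

lemma rungE_inj {i j : Fin m} (h : rungE i = rungE j) : i = j := by
  rw [rungE, rungE, Sym2.eq_iff] at h
  rcases h with ⟨h1, _⟩ | ⟨h1, _⟩ <;> exact congrArg Prod.fst h1

lemma rungE_ne_cycE (hm : 2 ≤ m) (i j : Fin m) (l : Fin 2) : rungE i ≠ cycE j l := by
  intro h
  rw [rungE, cycE, Sym2.eq_iff] at h
  rcases h with ⟨h1, h2⟩ | ⟨h1, h2⟩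
  · have e1 : (0 : Fin 2) = l := congrArg Prod.snd h1
    have e2 : (1 : Fin 2) = l := congrArg Prod.snd h2
    rw [← e1] at e2; exact absurd e2 (by decide)
  · have e1 : (0 : Fin 2) = l := congrArg Prod.snd h1
    have e2 : (1 : Fin 2) = l := congrArg Prod.snd h2
    rw [← e1] at e2; exact absurd e2 (by decide)

lemma cycE_inj (hm : 3 ≤ m) {i j : Fin m} {l l' : Fin 2} (h : cycE i l = cycE j l') :
    i = j ∧ l = l' := by
  rw [cycE, cycE, Sym2.eq_iff] at h
  rcases h with ⟨h1, h2⟩ | ⟨h1, h2⟩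
  · exact ⟨congrArg Prod.fst h1, congrArg Prod.snd h1⟩
  · have e1 : i = j + 1 := congrArg Prod.fst h1
    have e2 : i + 1 = j := congrArg Prod.fst h2
    rw [← e2] at e1
    exact absurd e1.symm (add_two_ne hm i)

lemma mem_rungE {v : Fin m × Fin 2} {i : Fin m} (h : v ∈ rungE i) : v.1 = i := by
  rw [rungE, Sym2.mem_iff] at h
  rcases h with h | h <;> exact congrArg Prod.fst h

lemma mem_cycE {v : Fin m × Fin 2} {i : Fin m} {l : Fin 2} (h : v ∈ cycE i l) :
    (v.1 = i ∨ v.1 = i + 1) ∧ v.2 = l := by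
  rw [cycE, Sym2.mem_iff] at h
  rcases h with h | h
  · exact ⟨Or.inl (congrArg Prod.fst h), congrArg Prod.snd h⟩
  · exact ⟨Or.inr (congrArg Prod.fst h), congrArg Prod.snd h⟩

lemma mkC_proper (hm : 4 ≤ m) (r : Fin m → ℕ) (g : Fin m → Fin 2 → ℕ)
    (h1 : ∀ i l, g i l ≠ g (i + 1) l)
    (h2 : ∀ i l, r i ≠ g i l)
    (h3 : ∀ i l, r (i + 1) ≠ g i l) :
    IsProperEdgeColoring (Gm m) (mkC r g) := by
  have hm3 : 3 ≤ m := by omega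
  rintro e f ⟨he, hf, hef, v, hve, hvf⟩
  rcases edge_classify (by omega) he with ⟨i, rfl⟩ | ⟨i, l, rfl⟩ <;>
    rcases edge_classify (by omega) hf with ⟨j, rfl⟩ | ⟨j, l', rfl⟩
  · have hij : i = j := (mem_rungE hve).symm.trans (mem_rungE hvf)
    exact absurd (by rw [hij]) hef
  · rw [mkC_rung hm3, mkC_cyc hm3]
    rcases (mem_cycE hvf).1 with h | h
    · rw [(mem_rungE hve).symm.trans h]; exact h2 j l'
    · rw [(mem_rungE hve).symm.trans h]; exact h3 j l'
  · rw [mkC_rung hm3, mkC_cyc hm3]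
    rcases (mem_cycE hve).1 with h | h
    · rw [(mem_rungE hvf).symm.trans h]; exact (h2 i l).symm
    · rw [(mem_rungE hvf).symm.trans h]; exact (h3 i l).symm
  · rw [mkC_cyc hm3, mkC_cyc hm3]
    have hl : l = l' := ((mem_cycE hve).2).symm.trans (mem_cycE hvf).2
    subst hl
    rcases (mem_cycE hve).1 with h | h <;> rcases (mem_cycE hvf).1 with h' | h'
    · have hij : i = j := h.symm.trans h'
      exact absurd (by rw [hij]) hef
    · have hij : i = j + 1 := h.symm.trans h'
      subst hij
      exact (h1 j l).symm
    · have hij : j = i + 1 := h'.symm.trans h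
      subst hij
      exact h1 i l
    · have hij : i = j := add_right_cancel (h.symm.trans h')
      exact absurd (by rw [hij]) hef

lemma mkC_below (hm : 4 ≤ m) (r : Fin m → ℕ) (g : Fin m → Fin 2 → ℕ)
    (hr : ∀ i, r i < 3) (hg : ∀ i l, g i l < 3) :
    ColorsBelow (Gm m) (mkC r g) 3 := by
  intro e he
  rcases edge_classify (by omega) he with ⟨i, rfl⟩ | ⟨i, l, rfl⟩
  · rw [mkC_rung (by omega)]; exact hr i
  · rw [mkC_cyc (by omega)]; exact hg i l

lemma edgeAdj_rung_cyc (hm : 3 ≤ m) {i j : Fin m} (l : Fin 2) (h : i = j ∨ i = j + 1) :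
    EdgeAdj (Gm m) (rungE i) (cycE j l) := by
  refine ⟨rungE_mem_edgeSet i, cycE_mem_edgeSet (by omega) j l,
    rungE_ne_cycE (by omega) i j l, (i, l), ?_, ?_⟩
  · rw [rungE, Sym2.mem_iff]
    fin_cases l
    · left; rfl
    · right; rfl
  · rw [cycE, Sym2.mem_iff]
    rcases h with h | h
    · left; rw [h]
    · right; rw [h]

lemma edgeAdj_cyc_cyc (hm : 3 ≤ m) {j k : Fin m} (l : Fin 2) (h : k = j + 1) :
    EdgeAdj (Gm m) (cycE j l) (cycE k l) := by
  refine ⟨cycE_mem_edgeSet (by omega) j l, cycE_mem_edgeSet (by omega) k l, ?_, (k, l), ?_, ?_⟩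
  · intro hh
    exact add_one_ne (by omega) j (((cycE_inj hm hh).1).symm ▸ h.symm)
  · rw [cycE, Sym2.mem_iff]; right; rw [h]
  · rw [cycE, Sym2.mem_iff]; left; rfl

/-! ### Family A: constant rung color, alternating cycle colors -/

def rA (m : ℕ) (γ : ℕ) : Fin m → ℕ := fun _ => γ

def gA (m : ℕ) (δ ε : ℕ) (p : Fin 2 → ℕ) : Fin m → Fin 2 → ℕ :=
  fun i l => if (i.val + p l) % 2 = 0 then δ else ε

lemma famA_h1 (hm : 4 ≤ m) (hm2 : 2 ∣ m) {δ ε : ℕ} (p : Fin 2 → ℕ) (hδε : δ ≠ ε) :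
    ∀ (i : Fin m) (l : Fin 2), gA m δ ε p i l ≠ gA m δ ε p (i + 1) l := by
  intro i l
  have hp := pv_add_one (by omega) hm2 i
  simp only [gA]
  split_ifs with c1 c2 c2 <;> first
    | exact hδε | exact hδε.symm | (exfalso; omega)

lemma famA_h2 (hm : 4 ≤ m) {γ δ ε : ℕ} (p : Fin 2 → ℕ) (hγδ : γ ≠ δ) (hγε : γ ≠ ε) :
    ∀ (i : Fin m) (l : Fin 2), rA m γ i ≠ gA m δ ε p i l := by
  intro i l
  simp only [rA, gA]
  split_ifs <;> assumption

lemma famA_h3 (hm : 4 ≤ m) {γ δ ε : ℕ} (p : Fin 2 → ℕ) (hγδ : γ ≠ δ) (hγε : γ ≠ ε) :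
    ∀ (i : Fin m) (l : Fin 2), rA m γ (i + 1) ≠ gA m δ ε p i l := by
  intro i l
  simp only [rA, gA]
  split_ifs <;> assumption

lemma famA_bd {γ δ ε : ℕ} (p : Fin 2 → ℕ) (hγ : γ < 3) (hδ : δ < 3) (hε : ε < 3) :
    (∀ i : Fin m, rA m γ i < 3) ∧ (∀ (i : Fin m) (l : Fin 2), gA m δ ε p i l < 3) := by
  refine ⟨fun i => hγ, fun i l => ?_⟩
  simp only [gA]
  split_ifs <;> assumption

/-! ### Family B: one block of two rungs recolored -/

def rB (s : Fin m) (γ δ : ℕ) : Fin m → ℕ :=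
  fun i => if i = s ∨ i = s + 1 then δ else γ

def gB (s : Fin m) (γ δ ε : ℕ) : Fin m → Fin 2 → ℕ :=
  fun i _ => if i = s then γ else if (i.val + s.val) % 2 = 1 then ε else δ

lemma famB_h1 (hm : 4 ≤ m) (hm2 : 2 ∣ m) {s : Fin m} {γ δ ε : ℕ}
    (hγε : γ ≠ ε) (hδε : δ ≠ ε) :
    ∀ (i : Fin m) (l : Fin 2), gB s γ δ ε i l ≠ gB s γ δ ε (i + 1) l := by
  intro i l
  have hp := pv_add_one (by omega) hm2 i
  have hps := pv_add_one (by omega) hm2 s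
  have hone := add_one_ne (m := m) (by omega)
  simp only [gB]
  by_cases c1 : i = s
  · subst c1
    rw [if_pos rfl, if_neg (hone i),
      if_pos (show ((i + 1 : Fin m).val + i.val) % 2 = 1 by omega)]
    exact hγε
  · rw [if_neg c1]
    by_cases c2 : i + 1 = s
    · rw [if_pos c2, if_pos (show ((i : Fin m).val + s.val) % 2 = 1 by rw [← c2]; omega)]
      exact hγε.symm
    · rw [if_neg c2]
      split_ifs with a1 a2 a2 <;> first
        | exact hδε.symm | exact hδε | (exfalso; omega)

lemma famB_h2 (hm : 4 ≤ m) (hm2 : 2 ∣ m) {s : Fin m} {γ δ ε : ℕ}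
    (hγδ : γ ≠ δ) (hγε : γ ≠ ε) (hδε : δ ≠ ε) :
    ∀ (i : Fin m) (l : Fin 2), rB s γ δ i ≠ gB s γ δ ε i l := by
  intro i l
  have hps := pv_add_one (by omega) hm2 s
  have hone := add_one_ne (m := m) (by omega)
  simp only [rB, gB]
  by_cases c1 : i = s
  · subst c1
    rw [if_pos (show i = i ∨ i = i + 1 from Or.inl rfl), if_pos rfl]
    exact hγδ.symm
  · by_cases c2 : i = s + 1
    · subst c2
      rw [if_pos (show s + 1 = s ∨ s + 1 = s + 1 from Or.inr rfl), if_neg (hone s),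
        if_pos (show ((s + 1 : Fin m).val + s.val) % 2 = 1 by omega)]
      exact hδε
    · rw [if_neg (show ¬(i = s ∨ i = s + 1) by tauto), if_neg c1]
      split_ifs
      · exact hγε
      · exact hγδ

lemma famB_h3 (hm : 4 ≤ m) (hm2 : 2 ∣ m) {s : Fin m} {γ δ ε : ℕ}
    (hγδ : γ ≠ δ) (hγε : γ ≠ ε) (hδε : δ ≠ ε) :
    ∀ (i : Fin m) (l : Fin 2), rB s γ δ (i + 1) ≠ gB s γ δ ε i l := by
  intro i l
  have hp := pv_add_one (by omega) hm2 i
  have hps := pv_add_one (by omega) hm2 s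
  have hone := add_one_ne (m := m) (by omega)
  have htwo := add_two_ne (m := m) (by omega)
  simp only [rB, gB]
  by_cases c1 : i = s
  · subst c1
    rw [if_pos (show i + 1 = i ∨ i + 1 = i + 1 from Or.inr rfl), if_pos rfl]
    exact hγδ.symm
  · rw [if_neg c1]
    by_cases c2 : i + 1 = s
    · rw [if_pos (Or.inl c2),
        if_pos (show ((i : Fin m).val + s.val) % 2 = 1 by rw [← c2]; omega)]
      exact hδε
    · by_cases c3 : i = s + 1
      · subst c3
        rw [if_neg (show ¬(s + 1 + 1 = s ∨ s + 1 + 1 = s + 1) by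
            push_neg
            exact ⟨c2, fun h => hone (s + 1) h⟩),
          if_pos (show ((s + 1 : Fin m).val + s.val) % 2 = 1 by omega)]
        exact hγε
      · rw [if_neg (show ¬(i + 1 = s ∨ i + 1 = s + 1) by
            push_neg
            exact ⟨c2, fun h => c1 (add_right_cancel h)⟩)]
        split_ifs
        · exact hγε
        · exact hγδ

lemma famB_bd {s : Fin m} {γ δ ε : ℕ} (hγ : γ < 3) (hδ : δ < 3) (hε : ε < 3) :
    (∀ i : Fin m, rB s γ δ i < 3) ∧ (∀ (i : Fin m) (l : Fin 2), gB s γ δ ε i l < 3) := by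
  constructor <;> intro i <;> [skip; intro l] <;> simp only [rB, gB] <;>
    split_ifs <;> assumption

/-! ### Family C: two separated blocks of rungs recolored -/

def rC (s t : Fin m) (γ δ1 δ2 : ℕ) : Fin m → ℕ :=
  fun i => if i = s ∨ i = s + 1 then δ1 else if i = t ∨ i = t + 1 then δ2 else γ

def gC (s t : Fin m) (γ δ1 δ2 : ℕ) : Fin m → Fin 2 → ℕ :=
  fun i _ => if i = s ∨ i = t then γ else if (i.val + s.val) % 2 = 1 then δ2 else δ1

lemma famC_h1 (hm : 4 ≤ m) (hm2 : 2 ∣ m) {s t : Fin m} {γ δ1 δ2 : ℕ}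
    (hγ1 : γ ≠ δ1) (hγ2 : γ ≠ δ2) (h12 : δ1 ≠ δ2)
    (hpar : (s.val + t.val) % 2 = 1) (hts1 : t ≠ s + 1) (ht1s : t + 1 ≠ s) :
    ∀ (i : Fin m) (l : Fin 2), gC s t γ δ1 δ2 i l ≠ gC s t γ δ1 δ2 (i + 1) l := by
  intro i l
  have hone := add_one_ne (m := m) (show 2 ≤ m by omega)
  have hpi := pv_add_one (by omega) hm2 i
  have hps := pv_add_one (by omega) hm2 s
  have hpt := pv_add_one (by omega) hm2 t
  simp only [gC]
  by_cases c1 : i = s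
  · subst c1
    rw [if_pos (Or.inl rfl),
      if_neg (show ¬(i + 1 = i ∨ i + 1 = t) from by
        rintro (h | h); exacts [hone i h, hts1 h.symm]),
      if_pos (show ((i + 1 : Fin m).val + i.val) % 2 = 1 by omega)]
    exact hγ2
  · by_cases c2 : i = t
    · subst c2
      rw [if_pos (Or.inr rfl),
        if_neg (show ¬(i + 1 = s ∨ i + 1 = i) from by
          rintro (h | h); exacts [ht1s h, hone i h]),
        if_neg (show ¬((i + 1 : Fin m).val + s.val) % 2 = 1 by omega)]
      exact hγ1
    · by_cases c3 : i + 1 = s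
      · rw [if_neg (show ¬(i = s ∨ i = t) from by
            rintro (h | h)
            · rw [h] at c3; exact hone s c3
            · rw [h] at c3; exact ht1s c3),
          if_pos (show ((i : Fin m).val + s.val) % 2 = 1 from by
            have hv := congrArg Fin.val c3; omega),
          if_pos (Or.inl c3)]
        exact hγ2.symm
      · by_cases c4 : i + 1 = t
        · rw [if_neg (show ¬(i = s ∨ i = t) from by
              rintro (h | h)
              · rw [h] at c4; exact hts1 c4.symm
              · rw [h] at c4; exact hone t c4),
            if_neg (show ¬((i : Fin m).val + s.val) % 2 = 1 from by
              have hv := congrArg Fin.val c4; omega),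
            if_pos (Or.inr c4)]
          exact hγ1.symm
        · rw [if_neg (show ¬(i = s ∨ i = t) from by tauto),
            if_neg (show ¬(i + 1 = s ∨ i + 1 = t) from by tauto)]
          split_ifs with a1 a2 a2 <;> first
            | exact h12 | exact h12.symm | (exfalso; omega)

lemma famC_h2 (hm : 4 ≤ m) (hm2 : 2 ∣ m) {s t : Fin m} {γ δ1 δ2 : ℕ}
    (hγ1 : γ ≠ δ1) (hγ2 : γ ≠ δ2) (h12 : δ1 ≠ δ2)
    (hpar : (s.val + t.val) % 2 = 1) (hts1 : t ≠ s + 1) (ht1s : t + 1 ≠ s) :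
    ∀ (i : Fin m) (l : Fin 2), rC s t γ δ1 δ2 i ≠ gC s t γ δ1 δ2 i l := by
  intro i l
  have hone := add_one_ne (m := m) (show 2 ≤ m by omega)
  have hts : t ≠ s := fun h => by have := congrArg Fin.val h; omega
  have hps := pv_add_one (by omega) hm2 s
  have hpt := pv_add_one (by omega) hm2 t
  simp only [rC, gC]
  by_cases c1 : i = s
  · subst c1
    rw [if_pos (Or.inl rfl), if_pos (Or.inl rfl)]
    exact hγ1.symm
  · by_cases c2 : i = s + 1
    · subst c2
      rw [if_pos (Or.inr rfl),
        if_neg (show ¬(s + 1 = s ∨ s + 1 = t) from by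
          rintro (h | h); exacts [hone s h, hts1 h.symm]),
        if_pos (show ((s + 1 : Fin m).val + s.val) % 2 = 1 by omega)]
      exact h12
    · by_cases c3 : i = t
      · subst c3
        rw [if_neg (show ¬(i = s ∨ i = s + 1) from by tauto),
          if_pos (Or.inl rfl), if_pos (Or.inr rfl)]
        exact hγ2.symm
      · by_cases c4 : i = t + 1
        · subst c4
          rw [if_neg (show ¬(t + 1 = s ∨ t + 1 = s + 1) from by
              rintro (h | h); exacts [ht1s h, hts (add_right_cancel h)]),
            if_pos (Or.inr rfl),
            if_neg (show ¬(t + 1 = s ∨ t + 1 = t) from by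
              rintro (h | h); exacts [ht1s h, hone t h]),
            if_neg (show ¬((t + 1 : Fin m).val + s.val) % 2 = 1 by omega)]
          exact h12.symm
        · rw [if_neg (show ¬(i = s ∨ i = s + 1) from by tauto),
            if_neg (show ¬(i = t ∨ i = t + 1) from by tauto),
            if_neg (show ¬(i = s ∨ i = t) from by tauto)]
          split_ifs
          · exact hγ2
          · exact hγ1

lemma famC_h3 (hm : 4 ≤ m) (hm2 : 2 ∣ m) {s t : Fin m} {γ δ1 δ2 : ℕ}
    (hγ1 : γ ≠ δ1) (hγ2 : γ ≠ δ2) (h12 : δ1 ≠ δ2)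
    (hpar : (s.val + t.val) % 2 = 1) (hts1 : t ≠ s + 1) (ht1s : t + 1 ≠ s) :
    ∀ (i : Fin m) (l : Fin 2), rC s t γ δ1 δ2 (i + 1) ≠ gC s t γ δ1 δ2 i l := by
  intro i l
  have hone := add_one_ne (m := m) (show 2 ≤ m by omega)
  have htwo := add_two_ne (m := m) (show 3 ≤ m by omega)
  have hts : t ≠ s := fun h => by have := congrArg Fin.val h; omega
  have hpi := pv_add_one (by omega) hm2 i
  have hps := pv_add_one (by omega) hm2 s
  have hps1 := pv_add_one (by omega) hm2 (s + 1)
  have hpt := pv_add_one (by omega) hm2 t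
  have hpt1 := pv_add_one (by omega) hm2 (t + 1)
  simp only [rC, gC]
  by_cases c0 : i + 1 = s
  · rw [if_pos (Or.inl c0),
      if_neg (show ¬(i = s ∨ i = t) from by
        rintro (h | h)
        · rw [h] at c0; exact hone s c0
        · rw [h] at c0; exact ht1s c0),
      if_pos (show ((i : Fin m).val + s.val) % 2 = 1 from by
        have hv := congrArg Fin.val c0; omega)]
    exact h12
  · by_cases c1 : i = s
    · subst c1
      rw [if_pos (Or.inr rfl), if_pos (Or.inl rfl)]
      exact hγ1.symm
    · by_cases c2 : i = s + 1
      · subst c2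
        rw [if_neg (show ¬(s + 1 + 1 = s ∨ s + 1 + 1 = s + 1) from by
            rintro (h | h); exacts [htwo s h, hone (s + 1) h]),
          if_neg (show ¬(s + 1 + 1 = t ∨ s + 1 + 1 = t + 1) from by
            rintro (h | h)
            · have hv := congrArg Fin.val h; omega
            · exact hts1 (add_right_cancel h).symm),
          if_neg (show ¬(s + 1 = s ∨ s + 1 = t) from by
            rintro (h | h); exacts [hone s h, hts1 h.symm]),
          if_pos (show ((s + 1 : Fin m).val + s.val) % 2 = 1 by omega)]
        exact hγ2
      · by_cases c3 : i + 1 = t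
        · rw [if_neg (show ¬(i + 1 = s ∨ i + 1 = s + 1) from by
              rintro (h | h); exacts [c0 h, c1 (add_right_cancel h)]),
            if_pos (Or.inl c3),
            if_neg (show ¬(i = s ∨ i = t) from by
              rintro (h | h)
              · rw [h] at c3; exact hts1 c3.symm
              · rw [h] at c3; exact hone t c3),
            if_neg (show ¬((i : Fin m).val + s.val) % 2 = 1 from by
              have hv := congrArg Fin.val c3; omega)]
          exact h12.symm
        · by_cases c4 : i = t
          · subst c4
            rw [if_neg (show ¬(i + 1 = s ∨ i + 1 = s + 1) from by
                rintro (h | h); exacts [ht1s h, hts (add_right_cancel h)]),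
              if_pos (Or.inr rfl), if_pos (Or.inr rfl)]
            exact hγ2.symm
          · by_cases c5 : i = t + 1
            · subst c5
              rw [if_neg (show ¬(t + 1 + 1 = s ∨ t + 1 + 1 = s + 1) from by
                  rintro (h | h)
                  · have hv := congrArg Fin.val h; omega
                  · exact ht1s (add_right_cancel h)),
                if_neg (show ¬(t + 1 + 1 = t ∨ t + 1 + 1 = t + 1) from by
                  rintro (h | h); exacts [htwo t h, hone (t + 1) h]),
                if_neg (show ¬(t + 1 = s ∨ t + 1 = t) from by
                  rintro (h | h); exacts [ht1s h, hone t h]),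
                if_neg (show ¬((t + 1 : Fin m).val + s.val) % 2 = 1 by omega)]
              exact hγ1
            · rw [if_neg (show ¬(i + 1 = s ∨ i + 1 = s + 1) from by
                  rintro (h | h); exacts [c0 h, c1 (add_right_cancel h)]),
                if_neg (show ¬(i + 1 = t ∨ i + 1 = t + 1) from by
                  rintro (h | h); exacts [c3 h, c4 (add_right_cancel h)]),
                if_neg (show ¬(i = s ∨ i = t) from by tauto)]
              split_ifs
              · exact hγ2
              · exact hγ1

lemma famC_bd {s t : Fin m} {γ δ1 δ2 : ℕ} (hγ : γ < 3) (h1 : δ1 < 3) (h2 : δ2 < 3) :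
    (∀ i : Fin m, rC s t γ δ1 δ2 i < 3) ∧
      (∀ (i : Fin m) (l : Fin 2), gC s t γ δ1 δ2 i l < 3) := by
  constructor <;> intro i <;> [skip; intro l] <;> simp only [rC, gC] <;>
    split_ifs <;> assumption

/-! ### Family D: two adjacent rungs with two different new colors -/

def rD (s : Fin m) (γ δ1 δ2 : ℕ) : Fin m → ℕ :=
  fun i => if i = s ∨ i = s + 1 + 1 + 1 then δ1 else if i = s + 1 ∨ i = s + 1 + 1 then δ2 else γ

def gD (s : Fin m) (γ δ1 δ2 : ℕ) : Fin m → Fin 2 → ℕ :=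
  fun i _ => if i = s ∨ i = s + 1 + 1 then γ
    else if i = s + 1 then δ1
    else if (i.val + s.val) % 2 = 1 then δ2 else δ1

section FamD

variable {s : Fin m} {γ δ1 δ2 : ℕ}

lemma famD_h1 (hm : 4 ≤ m) (hm2 : 2 ∣ m)
    (hγ1 : γ ≠ δ1) (hγ2 : γ ≠ δ2) (h12 : δ1 ≠ δ2) :
    ∀ (i : Fin m) (l : Fin 2), gD s γ δ1 δ2 i l ≠ gD s γ δ1 δ2 (i + 1) l := by
  intro i l
  have hone := add_one_ne (m := m) (show 2 ≤ m by omega)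
  have htwo := add_two_ne (m := m) (show 3 ≤ m by omega)
  have hthree := add_three_ne (m := m) hm
  have hpi := pv_add_one (by omega) hm2 i
  have hps := pv_add_one (by omega) hm2 s
  have hps1 := pv_add_one (by omega) hm2 (s + 1)
  have hps2 := pv_add_one (by omega) hm2 (s + 1 + 1)
  simp only [gD]
  by_cases c1 : i = s
  · subst c1
    rw [if_pos (Or.inl rfl),
      if_neg (show ¬(i + 1 = i ∨ i + 1 = i + 1 + 1) from by
        rintro (h | h); exacts [hone i h, hone (i + 1) h.symm]),
      if_pos rfl]
    exact hγ1
  · by_cases c2 : i = s + 1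
    · subst c2
      rw [if_neg (show ¬(s + 1 = s ∨ s + 1 = s + 1 + 1) from by
          rintro (h | h); exacts [hone s h, hone (s + 1) h.symm]),
        if_pos rfl, if_pos (Or.inr rfl)]
      exact hγ1.symm
    · by_cases c3 : i = s + 1 + 1
      · subst c3
        rw [if_pos (Or.inr rfl),
          if_neg (show ¬(s + 1 + 1 + 1 = s ∨ s + 1 + 1 + 1 = s + 1 + 1) from by
            rintro (h | h); exacts [hthree s h, hone (s + 1 + 1) h]),
          if_neg (show ¬(s + 1 + 1 + 1 = s + 1) from fun h => htwo (s + 1) h),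
          if_pos (show ((s + 1 + 1 + 1 : Fin m).val + s.val) % 2 = 1 by omega)]
        exact hγ2
      · by_cases c4 : i + 1 = s
        · rw [if_neg (show ¬(i = s ∨ i = s + 1 + 1) from by tauto),
            if_neg (show ¬(i = s + 1) from c2),
            if_pos (show ((i : Fin m).val + s.val) % 2 = 1 from by
              have hv := congrArg Fin.val c4; omega),
            if_pos (Or.inl c4)]
          exact hγ2.symm
        · rw [if_neg (show ¬(i = s ∨ i = s + 1 + 1) from by tauto),
            if_neg (show ¬(i = s + 1) from c2),
            if_neg (show ¬(i + 1 = s ∨ i + 1 = s + 1 + 1) from by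
              rintro (h | h); exacts [c4 h, c2 (add_right_cancel h)]),
            if_neg (show ¬(i + 1 = s + 1) from fun h => c1 (add_right_cancel h))]
          split_ifs with a1 a2 a2 <;> first
            | exact h12 | exact h12.symm | (exfalso; omega)

lemma famD_h2 (hm : 4 ≤ m) (hm2 : 2 ∣ m)
    (hγ1 : γ ≠ δ1) (hγ2 : γ ≠ δ2) (h12 : δ1 ≠ δ2) :
    ∀ (i : Fin m) (l : Fin 2), rD s γ δ1 δ2 i ≠ gD s γ δ1 δ2 i l := by
  intro i l
  have hone := add_one_ne (m := m) (show 2 ≤ m by omega)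
  have htwo := add_two_ne (m := m) (show 3 ≤ m by omega)
  have hthree := add_three_ne (m := m) hm
  have hps := pv_add_one (by omega) hm2 s
  have hps1 := pv_add_one (by omega) hm2 (s + 1)
  have hps2 := pv_add_one (by omega) hm2 (s + 1 + 1)
  simp only [rD, gD]
  by_cases c1 : i = s
  · subst c1
    rw [if_pos (Or.inl rfl), if_pos (Or.inl rfl)]
    exact hγ1.symm
  · by_cases c2 : i = s + 1
    · subst c2
      rw [if_neg (show ¬(s + 1 = s ∨ s + 1 = s + 1 + 1 + 1) from by
          rintro (h | h); exacts [hone s h, htwo (s + 1) h.symm]),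
        if_pos (Or.inl rfl),
        if_neg (show ¬(s + 1 = s ∨ s + 1 = s + 1 + 1) from by
          rintro (h | h); exacts [hone s h, hone (s + 1) h.symm]),
        if_pos rfl]
      exact h12.symm
    · by_cases c3 : i = s + 1 + 1
      · subst c3
        rw [if_neg (show ¬(s + 1 + 1 = s ∨ s + 1 + 1 = s + 1 + 1 + 1) from by
            rintro (h | h); exacts [htwo s h, hone (s + 1 + 1) h.symm]),
          if_pos (Or.inr rfl), if_pos (Or.inr rfl)]
        exact hγ2.symm
      · by_cases c4 : i = s + 1 + 1 + 1
        · subst c4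
          rw [if_pos (Or.inr rfl),
            if_neg (show ¬(s + 1 + 1 + 1 = s ∨ s + 1 + 1 + 1 = s + 1 + 1) from by
              rintro (h | h); exacts [hthree s h, hone (s + 1 + 1) h]),
            if_neg (show ¬(s + 1 + 1 + 1 = s + 1) from fun h => htwo (s + 1) h),
            if_pos (show ((s + 1 + 1 + 1 : Fin m).val + s.val) % 2 = 1 by omega)]
          exact h12
        · rw [if_neg (show ¬(i = s ∨ i = s + 1 + 1 + 1) from by tauto),
            if_neg (show ¬(i = s + 1 ∨ i = s + 1 + 1) from by tauto),
            if_neg (show ¬(i = s ∨ i = s + 1 + 1) from by tauto),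
            if_neg (show ¬(i = s + 1) from c2)]
          split_ifs
          · exact hγ2
          · exact hγ1

lemma famD_h3 (hm : 4 ≤ m) (hm2 : 2 ∣ m)
    (hγ1 : γ ≠ δ1) (hγ2 : γ ≠ δ2) (h12 : δ1 ≠ δ2) :
    ∀ (i : Fin m) (l : Fin 2), rD s γ δ1 δ2 (i + 1) ≠ gD s γ δ1 δ2 i l := by
  intro i l
  have hone := add_one_ne (m := m) (show 2 ≤ m by omega)
  have htwo := add_two_ne (m := m) (show 3 ≤ m by omega)
  have hthree := add_three_ne (m := m) hm
  have hpi := pv_add_one (by omega) hm2 i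
  have hps := pv_add_one (by omega) hm2 s
  have hps1 := pv_add_one (by omega) hm2 (s + 1)
  have hps2 := pv_add_one (by omega) hm2 (s + 1 + 1)
  simp only [rD, gD]
  by_cases c0 : i + 1 = s
  · rw [if_pos (Or.inl c0),
      if_neg (show ¬(i = s ∨ i = s + 1 + 1) from by
        rintro (h | h)
        · rw [h] at c0; exact hone s c0
        · rw [h] at c0; exact hthree s c0),
      if_neg (show ¬(i = s + 1) from by
        intro h; rw [h] at c0; exact htwo s c0),
      if_pos (show ((i : Fin m).val + s.val) % 2 = 1 from by
        have hv := congrArg Fin.val c0; omega)]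
    exact h12
  · by_cases c1 : i = s
    · subst c1
      rw [if_neg (show ¬(i + 1 = i ∨ i + 1 = i + 1 + 1 + 1) from by
          rintro (h | h); exacts [hone i h, htwo (i + 1) h.symm]),
        if_pos (Or.inl rfl), if_pos (Or.inl rfl)]
      exact hγ2.symm
    · by_cases c2 : i = s + 1
      · subst c2
        rw [if_neg (show ¬(s + 1 + 1 = s ∨ s + 1 + 1 = s + 1 + 1 + 1) from by
            rintro (h | h); exacts [htwo s h, hone (s + 1 + 1) h.symm]),
          if_pos (Or.inr rfl),
          if_neg (show ¬(s + 1 = s ∨ s + 1 = s + 1 + 1) from by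
            rintro (h | h); exacts [hone s h, hone (s + 1) h.symm]),
          if_pos rfl]
        exact h12.symm
      · by_cases c3 : i = s + 1 + 1
        · subst c3
          rw [if_pos (Or.inr rfl), if_pos (Or.inr rfl)]
          exact hγ1.symm
        · by_cases c4 : i = s + 1 + 1 + 1
          · subst c4
            have hcond2 : ¬(s + 1 + 1 + 1 + 1 = s + 1 ∨ s + 1 + 1 + 1 + 1 = s + 1 + 1) := by
              rintro (h | h)
              · exact hthree (s + 1) h
              · exact htwo (s + 1 + 1) h
            have hg : (if (s + 1 + 1 + 1 : Fin m) = s ∨ (s + 1 + 1 + 1 : Fin m) = s + 1 + 1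
                then γ else if (s + 1 + 1 + 1 : Fin m) = s + 1 then δ1
                else if ((s + 1 + 1 + 1 : Fin m).val + s.val) % 2 = 1 then δ2 else δ1) = δ2 := by
              rw [if_neg (show ¬((s + 1 + 1 + 1 : Fin m) = s ∨ (s + 1 + 1 + 1 : Fin m) = s + 1 + 1)
                  from by rintro (h | h); exacts [hthree s h, hone (s + 1 + 1) h]),
                if_neg (show ¬(s + 1 + 1 + 1 : Fin m) = s + 1 from fun h => htwo (s + 1) h),
                if_pos (show ((s + 1 + 1 + 1 : Fin m).val + s.val) % 2 = 1 by omega)]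
            rw [hg]
            by_cases d : (s + 1 + 1 + 1 + 1 : Fin m) = s ∨
                (s + 1 + 1 + 1 + 1 : Fin m) = s + 1 + 1 + 1
            · rw [if_pos d]
              exact h12
            · rw [if_neg d, if_neg hcond2]
              exact hγ2
          · rw [if_neg (show ¬(i + 1 = s ∨ i + 1 = s + 1 + 1 + 1) from by
                rintro (h | h); exacts [c0 h, c3 (add_right_cancel h)]),
              if_neg (show ¬(i + 1 = s + 1 ∨ i + 1 = s + 1 + 1) from by
                rintro (h | h); exacts [c1 (add_right_cancel h), c2 (add_right_cancel h)]),
              if_neg (show ¬(i = s ∨ i = s + 1 + 1) from by tauto),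
              if_neg (show ¬(i = s + 1) from c2)]
            split_ifs
            · exact hγ2
            · exact hγ1

lemma famD_bd (hγ : γ < 3) (h1 : δ1 < 3) (h2 : δ2 < 3) :
    (∀ i : Fin m, rD s γ δ1 δ2 i < 3) ∧
      (∀ (i : Fin m) (l : Fin 2), gD s γ δ1 δ2 i l < 3) := by
  constructor <;> intro i <;> [skip; intro l] <;> simp only [rD, gD] <;>
    split_ifs <;> assumption

end FamD

/-! ### Family E: only for `m = 4` -/

def rE (s : Fin m) (δ1 δ2 : ℕ) : Fin m → ℕ :=
  fun i => if i = s ∨ i = s + 1 then δ1 else δ2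

def gE (s : Fin m) (γ δ1 δ2 : ℕ) : Fin m → Fin 2 → ℕ :=
  fun i _ => if i = s then δ2 else if i = s + 1 then γ else if i = s + 1 + 1 then δ1 else γ

section FamE

variable {γ δ1 δ2 : ℕ}

lemma fin4_facts : ∀ s : Fin 4, (s + 1 ≠ s) ∧ (s + 1 + 1 ≠ s) ∧ (s + 1 + 1 + 1 ≠ s) ∧
    (s + 1 + 1 ≠ s + 1) ∧ (s + 1 + 1 + 1 ≠ s + 1) ∧ (s + 1 + 1 + 1 ≠ s + 1 + 1) ∧
    (s + 1 + 1 + 1 + 1 = s) := by decide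

lemma fin4_cases : ∀ s i : Fin 4, i = s ∨ i = s + 1 ∨ i = s + 1 + 1 ∨ i = s + 1 + 1 + 1 := by
  decide

lemma famE_h1 (hm : m = 4) {s : Fin m}
    (hγ1 : γ ≠ δ1) (hγ2 : γ ≠ δ2) (h12 : δ1 ≠ δ2) :
    ∀ (i : Fin m) (l : Fin 2), gE s γ δ1 δ2 i l ≠ gE s γ δ1 δ2 (i + 1) l := by
  subst hm
  intro i l
  obtain ⟨a1, a2, a3, a4, a5, a6, a7⟩ := fin4_facts s
  simp only [gE]
  rcases fin4_cases s i with rfl | rfl | rfl | rfl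
  · rw [if_pos rfl, if_neg a1, if_pos rfl]
    exact hγ2.symm
  · rw [if_neg a1, if_pos rfl, if_neg a2, if_neg a4, if_pos rfl]
    exact hγ1
  · rw [if_neg a2, if_neg a4, if_pos rfl, if_neg a3, if_neg a5, if_neg a6]
    exact hγ1.symm
  · rw [if_neg a3, if_neg a5, if_neg a6, a7, if_pos rfl]
    exact hγ2

lemma famE_h2 (hm : m = 4) {s : Fin m}
    (hγ1 : γ ≠ δ1) (hγ2 : γ ≠ δ2) (h12 : δ1 ≠ δ2) :
    ∀ (i : Fin m) (l : Fin 2), rE s δ1 δ2 i ≠ gE s γ δ1 δ2 i l := by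
  subst hm
  intro i l
  obtain ⟨a1, a2, a3, a4, a5, a6, a7⟩ := fin4_facts s
  simp only [rE, gE]
  rcases fin4_cases s i with rfl | rfl | rfl | rfl
  · rw [if_pos (Or.inl rfl), if_pos rfl]
    exact h12
  · rw [if_pos (Or.inr rfl), if_neg a1, if_pos rfl]
    exact hγ1.symm
  · rw [if_neg (show ¬(s + 1 + 1 = s ∨ s + 1 + 1 = s + 1) from by tauto),
      if_neg a2, if_neg a4, if_pos rfl]
    exact h12.symm
  · rw [if_neg (show ¬(s + 1 + 1 + 1 = s ∨ s + 1 + 1 + 1 = s + 1) from by tauto),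
      if_neg a3, if_neg a5, if_neg a6]
    exact hγ2.symm

lemma famE_h3 (hm : m = 4) {s : Fin m}
    (hγ1 : γ ≠ δ1) (hγ2 : γ ≠ δ2) (h12 : δ1 ≠ δ2) :
    ∀ (i : Fin m) (l : Fin 2), rE s δ1 δ2 (i + 1) ≠ gE s γ δ1 δ2 i l := by
  subst hm
  intro i l
  obtain ⟨a1, a2, a3, a4, a5, a6, a7⟩ := fin4_facts s
  simp only [rE, gE]
  rcases fin4_cases s i with rfl | rfl | rfl | rfl
  · rw [if_pos (Or.inr rfl), if_pos rfl]
    exact h12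
  · rw [if_neg (show ¬(s + 1 + 1 = s ∨ s + 1 + 1 = s + 1) from by tauto),
      if_neg a1, if_pos rfl]
    exact hγ2.symm
  · rw [if_neg (show ¬(s + 1 + 1 + 1 = s ∨ s + 1 + 1 + 1 = s + 1) from by tauto),
      if_neg a2, if_neg a4, if_pos rfl]
    exact h12.symm
  · rw [a7, if_pos (Or.inl rfl), if_neg a3, if_neg a5, if_neg a6]
    exact hγ1.symm

lemma famE_bd {s : Fin m} (hγ : γ < 3) (h1 : δ1 < 3) (h2 : δ2 < 3) :
    (∀ i : Fin m, rE s δ1 δ2 i < 3) ∧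
      (∀ (i : Fin m) (l : Fin 2), gE s γ δ1 δ2 i l < 3) := by
  constructor <;> intro i <;> [skip; intro l] <;> simp only [rE, gE] <;>
    split_ifs <;> assumption

end FamE

/-! ### helpers for dispatch -/

lemma edgeAdj_cyc_cyc' (hm : 3 ≤ m) {j k : Fin m} (l : Fin 2) (h : j = k + 1) :
    EdgeAdj (Gm m) (cycE j l) (cycE k l) := by
  obtain ⟨h1, h2, h3, v, hv1, hv2⟩ := edgeAdj_cyc_cyc hm l h
  exact ⟨h2, h1, h3.symm, v, hv2, hv1⟩

lemma edgeAdj_symm {G : SimpleGraph V} {e f : Sym2 V} (h : EdgeAdj G e f) : EdgeAdj G f e :=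
  ⟨h.2.1, h.1, h.2.2.1.symm, h.2.2.2.choose, h.2.2.2.choose_spec.2, h.2.2.2.choose_spec.1⟩

lemma add_four_m4 (hm : 4 ≤ m) {i : Fin m} (h : i + 1 + 1 + 1 + 1 = i) : m = 4 := by
  have h4 : ((4 : ℕ) : Fin m) = 0 := by
    have : i + ((4 : ℕ) : Fin m) = i + 0 := by
      rw [show ((4:ℕ) : Fin m) = 1 + 1 + 1 + 1 by push_cast; ring, add_zero]
      rw [← add_assoc, ← add_assoc, ← add_assoc]
      exact h
    exact add_left_cancel this
  have : (4 : ℕ) % m = 0 := by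
    have := congrArg Fin.val h4
    rwa [Fin.val_natCast] at this
  have hd : m ∣ 4 := Nat.dvd_of_mod_eq_zero this
  have := Nat.le_of_dvd (by omega) hd
  omega

/-! ### Dispatch: two rungs -/

lemma key_rr (hm : 4 ≤ m) (hm2 : 2 ∣ m) {i j : Fin m} (hij : i ≠ j) {a b : ℕ}
    (ha : a < 3) (hb : b < 3) :
    ∃ C, IsProperEdgeColoring (Gm m) C ∧ ColorsBelow (Gm m) C 3 ∧
      C (rungE i) = a ∧ C (rungE j) = b := by
  have hm3 : 3 ≤ m := by omega
  have hone := add_one_ne (m := m) (show 2 ≤ m by omega)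
  have htwo := add_two_ne (m := m) (show 3 ≤ m by omega)
  have hthree := add_three_ne (m := m) hm
  by_cases hab : a = b
  · subst hab
    refine ⟨mkC (rA m a) (gA m ((a+1)%3) ((a+2)%3) (fun _ => 0)), ?_, ?_, ?_, ?_⟩
    · exact mkC_proper hm _ _
        (famA_h1 (δ := (a+1)%3) (ε := (a+2)%3) hm hm2 _ (by omega))
        (famA_h2 (γ := a) (δ := (a+1)%3) (ε := (a+2)%3) hm _ (by omega) (by omega))
        (famA_h3 (γ := a) (δ := (a+1)%3) (ε := (a+2)%3) hm _ (by omega) (by omega))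
    · exact mkC_below hm _ _
        (famA_bd (γ := a) (δ := (a+1)%3) (ε := (a+2)%3) (fun _ => 0) ha (by omega) (by omega)).1
        (famA_bd (γ := a) (δ := (a+1)%3) (ε := (a+2)%3) (fun _ => 0) ha (by omega) (by omega)).2
    · rw [mkC_rung hm3]; rfl
    · rw [mkC_rung hm3]; rfl
  · set γ := 3 - a - b with hγdef
    have hγa : γ ≠ a := by omega
    have hγb : γ ≠ b := by omega
    have hγ3 : γ < 3 := by omega
    by_cases h1 : j = i + 1
    · subst h1
      refine ⟨mkC (rD i γ a b) (gD i γ a b), ?_, ?_, ?_, ?_⟩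
      · exact mkC_proper hm _ _ (famD_h1 hm hm2 hγa hγb hab)
          (famD_h2 hm hm2 hγa hγb hab) (famD_h3 hm hm2 hγa hγb hab)
      · exact mkC_below hm _ _ (famD_bd hγ3 ha hb).1 (famD_bd hγ3 ha hb).2
      · rw [mkC_rung hm3]
        simp only [rD, eq_self_iff_true, true_or, if_true]
      · rw [mkC_rung hm3]
        simp only [rD, eq_self_iff_true, true_or, if_true]
        rw [if_neg (show ¬(i + 1 = i ∨ i + 1 = i + 1 + 1 + 1) from by
            rintro (h | h); exacts [hone i h, htwo (i + 1) h.symm])]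
    · by_cases h2 : i = j + 1
      · subst h2
        refine ⟨mkC (rD j γ b a) (gD j γ b a), ?_, ?_, ?_, ?_⟩
        · exact mkC_proper hm _ _ (famD_h1 hm hm2 hγb hγa (Ne.symm hab))
            (famD_h2 hm hm2 hγb hγa (Ne.symm hab)) (famD_h3 hm hm2 hγb hγa (Ne.symm hab))
        · exact mkC_below hm _ _ (famD_bd hγ3 hb ha).1 (famD_bd hγ3 hb ha).2
        · rw [mkC_rung hm3]
          simp only [rD, eq_self_iff_true, true_or, if_true]
          rw [if_neg (show ¬(j + 1 = j ∨ j + 1 = j + 1 + 1 + 1) from by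
              rintro (h | h); exacts [hone j h, htwo (j + 1) h.symm])]
        · rw [mkC_rung hm3]
          simp only [rD, eq_self_iff_true, true_or, if_true]
      · by_cases hp : (i.val + j.val) % 2 = 1
        · -- family C, s = i, t = j
          have hts1 : j ≠ i + 1 := h1
          have ht1s : j + 1 ≠ i := fun h => h2 h.symm
          refine ⟨mkC (rC i j γ a b) (gC i j γ a b), ?_, ?_, ?_, ?_⟩
          · exact mkC_proper hm _ _ (famC_h1 hm hm2 hγa hγb hab hp hts1 ht1s)
              (famC_h2 hm hm2 hγa hγb hab hp hts1 ht1s)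
              (famC_h3 hm hm2 hγa hγb hab hp hts1 ht1s)
          · exact mkC_below hm _ _ (famC_bd hγ3 ha hb).1 (famC_bd hγ3 ha hb).2
          · rw [mkC_rung hm3]
            simp only [rC, eq_self_iff_true, true_or, if_true]
          · rw [mkC_rung hm3]
            simp only [rC, eq_self_iff_true, true_or, if_true]
            rw [if_neg (show ¬(j = i ∨ j = i + 1) from by
                rintro (h | h); exacts [hij h.symm, h1 h])]
        · by_cases h3 : j = i + 1 + 1
          · by_cases hm4 : m = 4
            · subst h3
              refine ⟨mkC (rE i a b) (gE i γ a b), ?_, ?_, ?_, ?_⟩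
              · exact mkC_proper hm _ _ (famE_h1 hm4 hγa hγb hab)
                  (famE_h2 hm4 hγa hγb hab) (famE_h3 hm4 hγa hγb hab)
              · exact mkC_below hm _ _ (famE_bd hγ3 ha hb).1 (famE_bd hγ3 ha hb).2
              · rw [mkC_rung hm3]
                simp only [rE, eq_self_iff_true, true_or, if_true]
              · rw [mkC_rung hm3]
                simp only [rE, eq_self_iff_true, true_or, if_true]
                rw [if_neg (show ¬(i + 1 + 1 = i ∨ i + 1 + 1 = i + 1) from by
                    rintro (h | h); exacts [htwo i h, hone (i + 1) h])]
            · -- m ≥ 6 : family C with s = i - 1, t = j = i + 2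
              subst h3
              set s := i - 1 with hsdef
              have hsi : s + 1 = i := by rw [hsdef]; ring
              have hps := pv_add_one (by omega) hm2 s
              have hpi := pv_add_one (by omega) hm2 i
              have hpi1 := pv_add_one (by omega) hm2 (i + 1)
              have hpar : (s.val + (i + 1 + 1 : Fin m).val) % 2 = 1 := by
                have : (s + 1 : Fin m).val = i.val := by rw [hsi]
                omega
              have hts1 : (i + 1 + 1 : Fin m) ≠ s + 1 := by
                rw [hsi]; exact fun h => htwo i h
              have ht1s : (i + 1 + 1 + 1 : Fin m) ≠ s := by
                intro h
                apply hm4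
                apply add_four_m4 hm (i := i)
                rw [h]
                exact hsi
              refine ⟨mkC (rC s (i+1+1) γ a b) (gC s (i+1+1) γ a b), ?_, ?_, ?_, ?_⟩
              · exact mkC_proper hm _ _ (famC_h1 hm hm2 hγa hγb hab hpar hts1 ht1s)
                  (famC_h2 hm hm2 hγa hγb hab hpar hts1 ht1s)
                  (famC_h3 hm hm2 hγa hγb hab hpar hts1 ht1s)
              · exact mkC_below hm _ _ (famC_bd hγ3 ha hb).1 (famC_bd hγ3 ha hb).2
              · rw [mkC_rung hm3]
                simp only [rC]
                rw [if_pos (show i = s ∨ i = s + 1 from Or.inr hsi.symm)]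
              · rw [mkC_rung hm3]
                simp only [rC, eq_self_iff_true, true_or, if_true]
                rw [if_neg (show ¬(i + 1 + 1 = s ∨ i + 1 + 1 = s + 1) from by
                    rintro (h | h)
                    · exact hthree s (by rw [hsi]; exact h)
                    · exact hts1 h)]
          · -- family C with s = i, t = j - 1
            set t := j - 1 with htdef
            have htj : t + 1 = j := by rw [htdef]; ring
            have hpt := pv_add_one (by omega) hm2 t
            have hpar : (i.val + t.val) % 2 = 1 := by
              have : (t + 1 : Fin m).val = j.val := by rw [htj]
              omega
            have hts1 : t ≠ i + 1 := by
              intro h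
              apply h3
              rw [← htj, h]
            have ht1s : t + 1 ≠ i := by
              rw [htj]; exact fun h => hij h.symm
            refine ⟨mkC (rC i t γ a b) (gC i t γ a b), ?_, ?_, ?_, ?_⟩
            · exact mkC_proper hm _ _ (famC_h1 hm hm2 hγa hγb hab hpar hts1 ht1s)
                (famC_h2 hm hm2 hγa hγb hab hpar hts1 ht1s)
                (famC_h3 hm hm2 hγa hγb hab hpar hts1 ht1s)
            · exact mkC_below hm _ _ (famC_bd hγ3 ha hb).1 (famC_bd hγ3 ha hb).2
            · rw [mkC_rung hm3]
              simp only [rC, eq_self_iff_true, true_or, if_true]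
            · rw [mkC_rung hm3]
              simp only [rC, eq_self_iff_true, true_or, if_true]
              rw [if_neg (show ¬(j = i ∨ j = i + 1) from by
                  rintro (h | h); exacts [hij h.symm, h1 h]),
                if_pos (Or.inr htj.symm)]

/-! ### Dispatch: rung and cycle edge -/

lemma key_rc (hm : 4 ≤ m) (hm2 : 2 ∣ m) (i j : Fin m) (l : Fin 2) {a b : ℕ}
    (ha : a < 3) (hb : b < 3)
    (hab : EdgeAdj (Gm m) (rungE i) (cycE j l) → a ≠ b) :
    ∃ C, IsProperEdgeColoring (Gm m) C ∧ ColorsBelow (Gm m) C 3 ∧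
      C (rungE i) = a ∧ C (cycE j l) = b := by
  have hm3 : 3 ≤ m := by omega
  by_cases hab' : a = b
  · subst hab'
    have hi1 : i ≠ j := fun h => hab (edgeAdj_rung_cyc hm3 l (Or.inl h)) rfl
    have hi2 : i ≠ j + 1 := fun h => hab (edgeAdj_rung_cyc hm3 l (Or.inr h)) rfl
    refine ⟨mkC (rB j a ((a+1)%3)) (gB j a ((a+1)%3) ((a+2)%3)), ?_, ?_, ?_, ?_⟩
    · exact mkC_proper hm _ _
        (famB_h1 (s := j) (γ := a) (δ := (a+1)%3) (ε := (a+2)%3) hm hm2 (by omega) (by omega))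
        (famB_h2 (s := j) (γ := a) (δ := (a+1)%3) (ε := (a+2)%3) hm hm2
          (by omega) (by omega) (by omega))
        (famB_h3 (s := j) (γ := a) (δ := (a+1)%3) (ε := (a+2)%3) hm hm2
          (by omega) (by omega) (by omega))
    · exact mkC_below hm _ _
        (famB_bd (s := j) (γ := a) (δ := (a+1)%3) (ε := (a+2)%3) ha (by omega) (by omega)).1
        (famB_bd (s := j) (γ := a) (δ := (a+1)%3) (ε := (a+2)%3) ha (by omega) (by omega)).2
    · rw [mkC_rung hm3]
      simp only [rB]
      rw [if_neg (show ¬(i = j ∨ i = j + 1) from by tauto)]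
    · rw [mkC_cyc hm3]
      simp only [gB, eq_self_iff_true, if_true]
  · refine ⟨mkC (rA m a) (gA m b (3 - a - b) (fun _ => j.val % 2)), ?_, ?_, ?_, ?_⟩
    · exact mkC_proper hm _ _
        (famA_h1 (δ := b) (ε := 3 - a - b) hm hm2 _ (by omega))
        (famA_h2 (γ := a) (δ := b) (ε := 3 - a - b) hm _ (by omega) (by omega))
        (famA_h3 (γ := a) (δ := b) (ε := 3 - a - b) hm _ (by omega) (by omega))
    · exact mkC_below hm _ _
        (famA_bd (γ := a) (δ := b) (ε := 3 - a - b) (fun _ => j.val % 2) ha hb (by omega)).1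
        (famA_bd (γ := a) (δ := b) (ε := 3 - a - b) (fun _ => j.val % 2) ha hb (by omega)).2
    · rw [mkC_rung hm3]; rfl
    · rw [mkC_cyc hm3]
      simp only [gA]
      rw [if_pos (show (j.val + j.val % 2) % 2 = 0 by omega)]

/-! ### Dispatch: two cycle edges -/

lemma key_cc (hm : 4 ≤ m) (hm2 : 2 ∣ m) (j k : Fin m) (l l' : Fin 2)
    (hne : cycE j l ≠ cycE k l') {a b : ℕ} (ha : a < 3) (hb : b < 3)
    (hab : EdgeAdj (Gm m) (cycE j l) (cycE k l') → a ≠ b) :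
    ∃ C, IsProperEdgeColoring (Gm m) C ∧ ColorsBelow (Gm m) C 3 ∧
      C (cycE j l) = a ∧ C (cycE k l') = b := by
  have hm3 : 3 ≤ m := by omega
  by_cases hll : l = l'
  · subst hll
    have hjk : j ≠ k := fun h => hne (by rw [h])
    by_cases hab' : a = b
    · subst hab'
      by_cases hp : (j.val + k.val) % 2 = 0
      · refine ⟨mkC (rA m ((a+1)%3)) (gA m a ((a+2)%3) (fun _ => j.val % 2)), ?_, ?_, ?_, ?_⟩
        · exact mkC_proper hm _ _
            (famA_h1 (δ := a) (ε := (a+2)%3) hm hm2 _ (by omega))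
            (famA_h2 (γ := (a+1)%3) (δ := a) (ε := (a+2)%3) hm _ (by omega) (by omega))
            (famA_h3 (γ := (a+1)%3) (δ := a) (ε := (a+2)%3) hm _ (by omega) (by omega))
        · exact mkC_below hm _ _
            (famA_bd (γ := (a+1)%3) (δ := a) (ε := (a+2)%3) (fun _ => j.val % 2)
              (by omega) ha (by omega)).1
            (famA_bd (γ := (a+1)%3) (δ := a) (ε := (a+2)%3) (fun _ => j.val % 2)
              (by omega) ha (by omega)).2
        · rw [mkC_cyc hm3]
          simp only [gA]
          rw [if_pos (show (j.val + j.val % 2) % 2 = 0 by omega)]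
        · rw [mkC_cyc hm3]
          simp only [gA]
          rw [if_pos (show (k.val + j.val % 2) % 2 = 0 by omega)]
      · have h1 : k ≠ j + 1 := fun h => hab (edgeAdj_cyc_cyc hm3 l h) rfl
        have h2 : j ≠ k + 1 := fun h => hab (edgeAdj_cyc_cyc' hm3 l h) rfl
        have hpar : (j.val + k.val) % 2 = 1 := by omega
        refine ⟨mkC (rC j k a ((a+1)%3) ((a+2)%3)) (gC j k a ((a+1)%3) ((a+2)%3)), ?_, ?_, ?_, ?_⟩
        · exact mkC_proper hm _ _
            (famC_h1 hm hm2 (by omega) (by omega) (by omega) hpar h1 (fun h => h2 h.symm))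
            (famC_h2 hm hm2 (by omega) (by omega) (by omega) hpar h1 (fun h => h2 h.symm))
            (famC_h3 hm hm2 (by omega) (by omega) (by omega) hpar h1 (fun h => h2 h.symm))
        · exact mkC_below hm _ _ (famC_bd ha (by omega) (by omega)).1
            (famC_bd ha (by omega) (by omega)).2
        · rw [mkC_cyc hm3]
          simp only [gC, eq_self_iff_true, true_or, if_true]
        · rw [mkC_cyc hm3]
          simp only [gC, eq_self_iff_true, or_true, if_true]
    · by_cases hp : (j.val + k.val) % 2 = 1
      · refine ⟨mkC (rA m (3 - a - b)) (gA m a b (fun _ => j.val % 2)), ?_, ?_, ?_, ?_⟩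
        · exact mkC_proper hm _ _
            (famA_h1 (δ := a) (ε := b) hm hm2 _ hab')
            (famA_h2 (γ := 3 - a - b) (δ := a) (ε := b) hm _ (by omega) (by omega))
            (famA_h3 (γ := 3 - a - b) (δ := a) (ε := b) hm _ (by omega) (by omega))
        · exact mkC_below hm _ _
            (famA_bd (γ := 3 - a - b) (δ := a) (ε := b) (fun _ => j.val % 2)
              (by omega) ha hb).1
            (famA_bd (γ := 3 - a - b) (δ := a) (ε := b) (fun _ => j.val % 2)
              (by omega) ha hb).2
        · rw [mkC_cyc hm3]
          simp only [gA]
          rw [if_pos (show (j.val + j.val % 2) % 2 = 0 by omega)]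
        · rw [mkC_cyc hm3]
          simp only [gA]
          rw [if_neg (show ¬(k.val + j.val % 2) % 2 = 0 by omega)]
      · refine ⟨mkC (rB j a b) (gB j a b (3 - a - b)), ?_, ?_, ?_, ?_⟩
        · exact mkC_proper hm _ _
            (famB_h1 (s := j) (γ := a) (δ := b) (ε := 3 - a - b) hm hm2 (by omega) (by omega))
            (famB_h2 (s := j) (γ := a) (δ := b) (ε := 3 - a - b) hm hm2
              (by omega) (by omega) (by omega))
            (famB_h3 (s := j) (γ := a) (δ := b) (ε := 3 - a - b) hm hm2
              (by omega) (by omega) (by omega))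
        · exact mkC_below hm _ _
            (famB_bd (s := j) (γ := a) (δ := b) (ε := 3 - a - b) ha hb (by omega)).1
            (famB_bd (s := j) (γ := a) (δ := b) (ε := 3 - a - b) ha hb (by omega)).2
        · rw [mkC_cyc hm3]
          simp only [gB, eq_self_iff_true, if_true]
        · rw [mkC_cyc hm3]
          simp only [gB]
          rw [if_neg (show ¬k = j from fun h => hjk h.symm),
            if_neg (show ¬(k.val + j.val) % 2 = 1 by omega)]
  · by_cases hab' : a = b
    · subst hab'
      refine ⟨mkC (rA m ((a+1)%3))
        (gA m a ((a+2)%3) (fun x => if x = l then j.val % 2 else k.val % 2)), ?_, ?_, ?_, ?_⟩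
      · exact mkC_proper hm _ _
          (famA_h1 (δ := a) (ε := (a+2)%3) hm hm2 _ (by omega))
          (famA_h2 (γ := (a+1)%3) (δ := a) (ε := (a+2)%3) hm _ (by omega) (by omega))
          (famA_h3 (γ := (a+1)%3) (δ := a) (ε := (a+2)%3) hm _ (by omega) (by omega))
      · exact mkC_below hm _ _
          (famA_bd (γ := (a+1)%3) (δ := a) (ε := (a+2)%3)
            (fun x => if x = l then j.val % 2 else k.val % 2) (by omega) ha (by omega)).1
          (famA_bd (γ := (a+1)%3) (δ := a) (ε := (a+2)%3)
            (fun x => if x = l then j.val % 2 else k.val % 2) (by omega) ha (by omega)).2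
      · rw [mkC_cyc hm3]
        simp only [gA, eq_self_iff_true, if_true]
        rw [if_pos (show (j.val + j.val % 2) % 2 = 0 by omega)]
      · rw [mkC_cyc hm3]
        simp only [gA]
        simp only [if_neg (Ne.symm hll)]
        rw [if_pos (show (k.val + k.val % 2) % 2 = 0 by omega)]
    · refine ⟨mkC (rA m (3 - a - b))
        (gA m a b (fun x => if x = l then j.val % 2 else (k.val + 1) % 2)), ?_, ?_, ?_, ?_⟩
      · exact mkC_proper hm _ _
          (famA_h1 (δ := a) (ε := b) hm hm2 _ hab')
          (famA_h2 (γ := 3 - a - b) (δ := a) (ε := b) hm _ (by omega) (by omega))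
          (famA_h3 (γ := 3 - a - b) (δ := a) (ε := b) hm _ (by omega) (by omega))
      · exact mkC_below hm _ _
          (famA_bd (γ := 3 - a - b) (δ := a) (ε := b)
            (fun x => if x = l then j.val % 2 else (k.val + 1) % 2) (by omega) ha hb).1
          (famA_bd (γ := 3 - a - b) (δ := a) (ε := b)
            (fun x => if x = l then j.val % 2 else (k.val + 1) % 2) (by omega) ha hb).2
      · rw [mkC_cyc hm3]
        simp only [gA, eq_self_iff_true, if_true]
        rw [if_pos (show (j.val + j.val % 2) % 2 = 0 by omega)]
      · rw [mkC_cyc hm3]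
        simp only [gA]
        simp only [if_neg (Ne.symm hll)]
        rw [if_neg (show ¬(k.val + (k.val + 1) % 2) % 2 = 0 by omega)]

/-! ### Combined dispatch -/

lemma key (hm : 4 ≤ m) (hm2 : 2 ∣ m) {E1 E2 : Sym2 (Fin m × Fin 2)}
    (h1 : E1 ∈ (Gm m).edgeSet) (h2 : E2 ∈ (Gm m).edgeSet) (hne : E1 ≠ E2)
    {a b : ℕ} (ha : a < 3) (hb : b < 3) (hab : EdgeAdj (Gm m) E1 E2 → a ≠ b) :
    ∃ C, IsProperEdgeColoring (Gm m) C ∧ ColorsBelow (Gm m) C 3 ∧ C E1 = a ∧ C E2 = b := by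
  rcases edge_classify (by omega) h1 with ⟨i, rfl⟩ | ⟨i, l, rfl⟩ <;>
    rcases edge_classify (by omega) h2 with ⟨j, rfl⟩ | ⟨j, l', rfl⟩
  · exact key_rr hm hm2 (fun h => hne (by rw [h])) ha hb
  · exact key_rc hm hm2 i j l' ha hb hab
  · obtain ⟨C, p1, p2, c2, c1⟩ :=
      key_rc hm hm2 j i l hb ha (fun h => (hab (edgeAdj_symm h)).symm)
    exact ⟨C, p1, p2, c1, c2⟩
  · exact key_cc hm hm2 i j l l' hne ha hb hab

end Stmt16

theorem stmt16 (n : ℕ) (hn : 2 ≤ n) (φ : Sym2 (Fin (2*n) × Fin 2) → Option ℕ)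
    (hφ : IsPartialProperEdgeColoring ((cycleGraph (2*n)).boxProd (⊤ : SimpleGraph (Fin 2))) φ)
    (hc : UsesColors φ 3) (hcard : (Precolored φ).ncard = 2) :
    Extendable ((cycleGraph (2*n)).boxProd (⊤ : SimpleGraph (Fin 2))) φ 3 := by
  haveI : NeZero (2*n) := ⟨by omega⟩
  have hm : 4 ≤ 2*n := by omega
  have hm2 : (2:ℕ) ∣ 2*n := Dvd.intro n rfl
  obtain ⟨E1, E2, hne, hset⟩ := Set.ncard_eq_two.mp hcard
  have hp1 : φ E1 ≠ none := by
    have h : E1 ∈ Precolored φ := by rw [hset]; exact Set.mem_insert _ _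
    exact h
  have hp2 : φ E2 ≠ none := by
    have h : E2 ∈ Precolored φ := by rw [hset]; exact Set.mem_insert_of_mem _ rfl
    exact h
  obtain ⟨a, ha⟩ : ∃ a, φ E1 = some a := Option.ne_none_iff_exists'.mp hp1
  obtain ⟨b, hb⟩ : ∃ b, φ E2 = some b := Option.ne_none_iff_exists'.mp hp2
  have ha3 := hc E1 a ha
  have hb3 := hc E2 b hb
  have he1 := hφ.1 E1 hp1
  have he2 := hφ.1 E2 hp2
  have hab : EdgeAdj (Stmt16.Gm (2*n)) E1 E2 → a ≠ b := by
    intro h heq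
    have h' := hφ.2 h hp1
    rw [ha, hb, heq] at h'
    exact h' rfl
  obtain ⟨C, hCp, hCb, hC1, hC2⟩ := Stmt16.key hm hm2 he1 he2 hne ha3 hb3 hab
  refine ⟨C, hCp, hCb, ?_⟩
  intro e c hec
  by_cases h1 : e = E1
  · subst h1
    rw [ha] at hec
    rw [hC1]
    exact Option.some_inj.mp hec
  by_cases h2 : e = E2
  · subst h2
    rw [hb] at hec
    rw [hC2]
    exact Option.some_inj.mp hec
  · exfalso
    have hmem : e ∈ Precolored φ := by
      intro hh
      rw [hec] at hh
      exact Option.some_ne_none c hh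
    rw [hset] at hmem
    rcases hmem with hh | hh
    · exact h1 hh
    · exact h2 hh
end
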